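/- arXiv:2209.13784 — 8 statements merged into one kernel-verified Lean document; each statement's English description precedes it below -/
import Mathlib

section
/- For every nonnegative integer n, cp_{1,1,2}(n) = EO*(2n). -/
/-- `(γ, ρ, σ)` is an `(a,b,m)`-copartition. -/
def IsCopartition (a b m : ℕ) (γ ρ σ : Multiset ℕ) : Prop :=
  (∀ x ∈ γ, a ≤ x ∧ x % m = a % m) ∧
  (∀ x ∈ σ, b ≤ x ∧ x % m = b % m) ∧
  ρ = Multiset.replicate (Multiset.card σ) (m * Multiset.card γ)

/-- The set of `(a,b,m)`-copartitions of size `n`. -/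
def cpSet (a b m n : ℕ) : Set (Multiset ℕ × Multiset ℕ × Multiset ℕ) :=
  {t | IsCopartition a b m t.1 t.2.1 t.2.2 ∧ t.1.sum + t.2.1.sum + t.2.2.sum = n}

/-- `cp_{a,b,m}(n)`: the number of `(a,b,m)`-copartitions of size `n`. -/
noncomputable def cp (a b m n : ℕ) : ℕ := (cpSet a b m n).ncard

/-- The largest even part of a partition (0 if there is no even part). -/
def largestEvenPart (lam : Multiset ℕ) : ℕ := (lam.filter (fun x => x % 2 = 0)).sup

/-- The set counted by `EO*(N)`: partitions `λ` of `N` such that every even part of `λ`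
is less than every odd part, every part size other than the largest even part occurs an
even number of times, and if `λ` has an even part then the largest even part occurs an
odd number of times. -/
def EOstarSet (N : ℕ) : Set (Multiset ℕ) :=
  {lam | (∀ x ∈ lam, 0 < x) ∧ lam.sum = N ∧
    (∀ x ∈ lam, ∀ y ∈ lam, Even x → Odd y → x < y) ∧
    (∀ x ∈ lam, x ≠ largestEvenPart lam → Even (lam.count x)) ∧
    ((∃ x ∈ lam, Even x) → Odd (lam.count (largestEvenPart lam)))}

/-- `EO*(N)`. -/
noncomputable def EOstar (N : ℕ) : ℕ := (EOstarSet N).ncard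

open Multiset

namespace CoPf

def fC (h : Multiset ℕ) (j : ℕ) : ℕ := h.countP (fun x => j < x)

def conj (h : Multiset ℕ) : Multiset ℕ := (Multiset.range h.sup).map (fC h)

def aF (h : Multiset ℕ) (x : ℕ) : ℕ :=
  ((Finset.range h.sup).filter (fun j => x ≤ fC h j)).card

lemma countP_imp (m : Multiset ℕ) (p q : ℕ → Prop) [DecidablePred p] [DecidablePred q]
    (h : ∀ x, p x → q x) : m.countP p ≤ m.countP q := by
  induction m using Multiset.induction with
  | empty => simp
  | cons a m ih =>
    simp only [countP_cons]
    split_ifs with hp hq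
    · omega
    · exact absurd (h a hp) hq
    · omega
    · omega

lemma countP_le_split (m : Multiset ℕ) (x : ℕ) :
    m.countP (fun y => x ≤ y) = m.count x + m.countP (fun y => x + 1 ≤ y) := by
  induction m using Multiset.induction with
  | empty => simp
  | cons a m ih =>
    simp only [countP_cons, count_cons, ih]
    split_ifs <;> omega

lemma fC_anti (h : Multiset ℕ) {j j' : ℕ} (hj : j ≤ j') : fC h j' ≤ fC h j :=
  countP_imp _ _ _ (fun x hx => lt_of_le_of_lt hj hx)

lemma fC_succ (h : Multiset ℕ) (j : ℕ) : fC h j = h.count (j+1) + fC h (j+1) := by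
  have h1 : fC h j = h.countP (fun y => j + 1 ≤ y) := by
    unfold fC; congr 1
  have h2 : fC h (j+1) = h.countP (fun y => j + 2 ≤ y) := by
    unfold fC; congr 1
  rw [h1, h2, countP_le_split]

lemma dc_range (S : Finset ℕ) (hd : ∀ j ∈ S, ∀ i ≤ j, i ∈ S) : S = Finset.range S.card := by
  have hsub : Finset.range S.card ⊆ S := by
    intro j hj
    simp only [Finset.mem_range] at hj
    by_contra hjS
    have hSr : S ⊆ Finset.range j := by
      intro i hi
      simp only [Finset.mem_range]
      by_contra hij
      exact hjS (hd i hi j (by omega))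
    have := Finset.card_le_card hSr
    simp at this
    omega
  exact (Finset.eq_of_subset_of_card_le hsub (by simp)).symm


lemma lt_sup_of_fC_pos (h : Multiset ℕ) (j : ℕ) (hf : 1 ≤ fC h j) : j < h.sup := by
  by_contra hj
  push_neg at hj
  have : fC h j = 0 := by
    unfold fC
    rw [Multiset.countP_eq_zero]
    intro x hx
    have := Multiset.le_sup hx
    omega
  omega

lemma countP_range (N : ℕ) (p : ℕ → Prop) [DecidablePred p] :
    (Multiset.range N).countP p = ((Finset.range N).filter p).card := by
  rw [Multiset.countP_eq_card_filter]
  rfl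

lemma A_eq_range (h : Multiset ℕ) (x : ℕ) :
    (Finset.range h.sup).filter (fun j => x ≤ fC h j) = Finset.range (aF h x) := by
  exact dc_range _ (by
    intro j hj i hij
    simp only [Finset.mem_filter, Finset.mem_range] at *
    exact ⟨by omega, le_trans hj.2 (fC_anti h hij)⟩)

/-- P1 -/
lemma le_fC_iff (h : Multiset ℕ) {x : ℕ} (hx : 1 ≤ x) (j : ℕ) :
    x ≤ fC h j ↔ j < aF h x := by
  constructor
  · intro hle
    have hjs : j < h.sup := lt_sup_of_fC_pos h j (le_trans hx hle)
    have : j ∈ (Finset.range h.sup).filter (fun j => x ≤ fC h j) := by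
      simp [Finset.mem_filter, hjs, hle]
    rw [A_eq_range] at this
    simpa using this
  · intro hlt
    have : j ∈ Finset.range (aF h x) := by simpa using hlt
    rw [← A_eq_range] at this
    simp only [Finset.mem_filter] at this
    exact this.2

/-- aP -/
lemma aF_eq_countP (h : Multiset ℕ) (x : ℕ) :
    aF h x = (conj h).countP (fun y => x ≤ y) := by
  unfold conj aF
  rw [Multiset.countP_map]
  rw [← Multiset.countP_eq_card_filter, countP_range]

lemma aF_succ (h : Multiset ℕ) (x : ℕ) :
    aF h x = (conj h).count x + aF h (x+1) := by
  rw [aF_eq_countP, aF_eq_countP, countP_le_split]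

lemma aF_anti (h : Multiset ℕ) (x : ℕ) : aF h (x+1) ≤ aF h x := by
  have := aF_succ h x; omega

/-- P4 -/
lemma aF_eq_zero (h : Multiset ℕ) {x : ℕ} (hx : Multiset.card h < x) : aF h x = 0 := by
  unfold aF
  rw [Finset.card_eq_zero, Finset.filter_eq_empty_iff]
  intro j _
  have : fC h j ≤ Multiset.card h := Multiset.countP_le_card _ _
  omega

/-- P3 : the x-th largest part is a part -/
lemma aF_mem (h : Multiset ℕ) (hpos : ∀ y ∈ h, 0 < y) {x : ℕ} (hx : 1 ≤ x)
    (hxc : x ≤ Multiset.card h) : aF h x ∈ h ∧ 0 < aF h x := by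
  have hcard : fC h 0 = Multiset.card h := by
    unfold fC
    rw [Multiset.countP_eq_card]
    exact hpos
  have h0 : 0 < aF h x := by
    rw [← le_fC_iff h hx 0, hcard]; exact hxc
  have h1 : x ≤ fC h (aF h x - 1) := (le_fC_iff h hx _).2 (by omega)
  have h2 : fC h (aF h x) < x := by
    by_contra hc
    push_neg at hc
    have := (le_fC_iff h hx (aF h x)).1 hc
    omega
  have h3 : fC h (aF h x - 1) = h.count (aF h x) + fC h (aF h x) := by
    have := fC_succ h (aF h x - 1)
    have he : aF h x - 1 + 1 = aF h x := by omega
    rw [he] at this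
    exact this
  have : 0 < h.count (aF h x) := by omega
  exact ⟨Multiset.count_pos.1 this, h0⟩

lemma conj_card (h : Multiset ℕ) : Multiset.card (conj h) = h.sup := by
  unfold conj; simp

lemma mem_conj (h : Multiset ℕ) {x : ℕ} (hx : x ∈ conj h) :
    1 ≤ x ∧ x ≤ Multiset.card h := by
  unfold conj at hx
  obtain ⟨j, hj, rfl⟩ := Multiset.mem_map.1 hx
  rw [Multiset.mem_range] at hj
  constructor
  · by_contra hc
    push_neg at hc
    interval_cases hf : fC h j
    have : fC h j = 0 := hf
    unfold fC at this
    rw [Multiset.countP_eq_zero] at this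
    have : ∀ y ∈ h, y ≤ j := fun y hy => by have := this y hy; omega
    have := Multiset.sup_le.2 this
    omega
  · exact Multiset.countP_le_card _ _

lemma conj_eq_zero (h : Multiset ℕ) (hz : h.sup = 0) : conj h = 0 := by
  unfold conj
  rw [hz]
  rfl

lemma sup_pos_of_ne (h : Multiset ℕ) (hpos : ∀ y ∈ h, 0 < y) (hne : h ≠ 0) : 0 < h.sup := by
  obtain ⟨y, hy⟩ := Multiset.exists_mem_of_ne_zero hne
  exact lt_of_lt_of_le (hpos y hy) (Multiset.le_sup hy)

lemma card_mem_conj (h : Multiset ℕ) (hpos : ∀ y ∈ h, 0 < y) (hne : h ≠ 0) :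
    Multiset.card h ∈ conj h := by
  have hcard : fC h 0 = Multiset.card h := by
    unfold fC
    rw [Multiset.countP_eq_card]
    exact hpos
  unfold conj
  rw [Multiset.mem_map]
  exact ⟨0, Multiset.mem_range.2 (sup_pos_of_ne h hpos hne), hcard⟩

lemma sup_conj (h : Multiset ℕ) (hpos : ∀ y ∈ h, 0 < y) :
    (conj h).sup = Multiset.card h := by
  rcases eq_or_ne h 0 with rfl | hne
  · rfl
  · apply le_antisymm
    · exact Multiset.sup_le.2 (fun b hb => (mem_conj h hb).2)
    · exact Multiset.le_sup (card_mem_conj h hpos hne)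

lemma sum_range_ite (N x : ℕ) :
    (∑ j ∈ Finset.range N, if j < x then 1 else 0) = min x N := by
  induction N with
  | zero => simp
  | succ N ih =>
    rw [Finset.sum_range_succ, ih]
    split_ifs <;> omega

lemma sum_fC (h : Multiset ℕ) (N : ℕ) (hN : ∀ x ∈ h, x ≤ N) :
    (∑ j ∈ Finset.range N, fC h j) = h.sum := by
  induction h using Multiset.induction with
  | empty => simp [fC]
  | cons a m ih =>
    have ha : a ≤ N := hN a (Multiset.mem_cons_self a m)
    have hm : ∀ x ∈ m, x ≤ N := fun x hx => hN x (Multiset.mem_cons_of_mem hx)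
    have hfc : ∀ j, fC (a ::ₘ m) j = fC m j + if j < a then 1 else 0 := by
      intro j
      unfold fC
      rw [Multiset.countP_cons]
    calc (∑ j ∈ Finset.range N, fC (a ::ₘ m) j)
        = (∑ j ∈ Finset.range N, (fC m j + if j < a then 1 else 0)) := by
          exact Finset.sum_congr rfl (fun j _ => hfc j)
      _ = (∑ j ∈ Finset.range N, fC m j) + (∑ j ∈ Finset.range N, if j < a then 1 else 0) := by
          rw [Finset.sum_add_distrib]
      _ = m.sum + min a N := by rw [ih hm, sum_range_ite]
      _ = (a ::ₘ m).sum := by rw [Multiset.sum_cons]; omega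

lemma conj_sum (h : Multiset ℕ) : (conj h).sum = h.sum := by
  unfold conj
  have : ((Multiset.range h.sup).map (fC h)).sum = ∑ j ∈ Finset.range h.sup, fC h j := by
    rfl
  rw [this, sum_fC h h.sup (fun x hx => Multiset.le_sup hx)]

/-- K : aF of the conjugate -/
lemma aF_conj (h : Multiset ℕ) (x : ℕ) : aF (conj h) (x+1) = fC h x := by
  unfold aF
  have h1 : ∀ j, fC (conj h) j = aF h (j+1) := by
    intro j
    unfold fC conj aF
    rw [Multiset.countP_map, ← Multiset.countP_eq_card_filter, countP_range]
    congr 1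
  have h2 : ∀ j, (x + 1 ≤ fC (conj h) j ↔ j < fC h x) := by
    intro j
    rw [h1]
    constructor
    · intro hle
      -- x+1 ≤ aF h (j+1) ↔ x < aF h (j+1) ↔ (P1 with x' := j+1, j' := x) j+1 ≤ fC h x
      have := (le_fC_iff h (Nat.le_add_left 1 j) x).2 (by omega)
      omega
    · intro hlt
      have : j + 1 ≤ fC h x := by omega
      have := (le_fC_iff h (Nat.le_add_left 1 j) x).1 this
      omega
  have h3 : (Finset.range (conj h).sup).filter (fun j => x + 1 ≤ fC (conj h) j)
      = (Finset.range (conj h).sup).filter (fun j => j < fC h x) := by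
    apply Finset.filter_congr
    intro i _
    exact h2 i
  rw [h3]
  have h4 : (Finset.range (conj h).sup).filter (fun j => j < fC h x)
      = Finset.range (min (fC h x) (conj h).sup) := by
    ext j
    simp only [Finset.mem_filter, Finset.mem_range, Finset.mem_range, lt_min_iff]
    omega
  rw [h4, Finset.card_range]
  rcases Nat.eq_zero_or_pos (fC h x) with hz | hp
  · omega
  · have hx_lt : x < h.sup := lt_sup_of_fC_pos h x hp
    have hmem : fC h x ∈ conj h := by
      unfold conj
      rw [Multiset.mem_map]
      exact ⟨x, Multiset.mem_range.2 hx_lt, rfl⟩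
    have := Multiset.le_sup hmem
    omega

lemma conj_conj (h : Multiset ℕ) (hpos : ∀ y ∈ h, 0 < y) : conj (conj h) = h := by
  ext x
  rcases Nat.eq_zero_or_pos x with rfl | hx
  · have h1 : (conj (conj h)).count 0 = 0 := by
      rw [Multiset.count_eq_zero]
      intro hc
      have := (mem_conj _ hc).1
      omega
    have h2 : h.count 0 = 0 := by
      rw [Multiset.count_eq_zero]
      intro hc
      have := hpos 0 hc
      omega
    rw [h1, h2]
  · obtain ⟨y, rfl⟩ : ∃ y, x = y + 1 := ⟨x - 1, by omega⟩
    have e1 := aF_succ (conj h) (y+1)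
    have e2 := aF_conj h y
    have e3 := aF_conj h (y+1)
    have e4 := fC_succ h y
    omega

/-- halving lemma -/
lemma exists_half (m : Multiset ℕ) (he : ∀ x, Even (m.count x)) : ∃ t, m = t + t := by
  induction m using Multiset.strongInductionOn with
  | _ m ih =>
    rcases eq_or_ne m 0 with rfl | hne
    · exact ⟨0, rfl⟩
    · obtain ⟨x, hx⟩ := Multiset.exists_mem_of_ne_zero hne
      have h2 : 2 ≤ m.count x := by
        have h1 : 1 ≤ m.count x := Multiset.count_pos.2 hx
        have := he x
        rw [Nat.even_iff] at this
        omega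
      have hle : Multiset.replicate 2 x ≤ m := Multiset.le_count_iff_replicate_le.1 h2
      set r : Multiset ℕ := Multiset.replicate 2 x with hr
      have hsub : m - r + r = m := tsub_add_cancel_of_le hle
      have hlt : m - r < m := by
        apply lt_of_le_of_ne (Multiset.sub_le_self m r)
        intro hc
        have := congrArg Multiset.card hsub
        rw [hc] at this
        simp [hr] at this
        omega
      have hcount : ∀ y, Even ((m - r).count y) := by
        intro y
        have hy := he y
        have hrx := he x
        rw [Multiset.count_sub, hr, Multiset.count_replicate]
        rw [Nat.even_iff] at *
        split_ifs with hh
        · subst hh; omega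
        · omega
      obtain ⟨t, ht⟩ := ih (m - r) hlt hcount
      refine ⟨x ::ₘ t, ?_⟩
      ext z
      have hz := congrArg (Multiset.count z) hsub
      rw [ht] at hz
      simp only [Multiset.count_add, Multiset.count_cons, hr, Multiset.count_replicate] at *
      split_ifs at * <;> omega

lemma exists_double (E : Multiset ℕ) (he : ∀ x ∈ E, x % 2 = 0) :
    ∃ D : Multiset ℕ, D.map (fun y => 2 * y) = E := by
  induction E using Multiset.induction with
  | empty => exact ⟨0, rfl⟩
  | cons a m ih =>
    obtain ⟨D, hD⟩ := ih (fun x hx => he x (Multiset.mem_cons_of_mem hx))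
    have ha := he a (Multiset.mem_cons_self a m)
    refine ⟨(a / 2) ::ₘ D, ?_⟩
    rw [Multiset.map_cons, hD]
    congr 1
    omega

lemma sup_map_two (m : Multiset ℕ) : (m.map (fun y => 2 * y)).sup = 2 * m.sup := by
  induction m using Multiset.induction with
  | empty => simp
  | cons a s ih =>
    rw [Multiset.map_cons, Multiset.sup_cons, Multiset.sup_cons, ih]
    have : ∀ p q : ℕ, (2*p) ⊔ (2*q) = 2 * (p ⊔ q) := by
      intro p q
      rcases le_total p q with hl | hl
      · rw [sup_of_le_right hl, sup_of_le_right (by omega)]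
      · rw [sup_of_le_left hl, sup_of_le_left (by omega)]
    exact this a s.sup

lemma sup_mem (m : Multiset ℕ) (hne : m ≠ 0) : m.sup ∈ m := by
  induction m using Multiset.induction with
  | empty => exact absurd rfl hne
  | cons a s ih =>
    rw [Multiset.sup_cons]
    rcases eq_or_ne s 0 with rfl | hs
    · simp
    · rcases le_total a s.sup with hl | hl
      · rw [sup_of_le_right hl]
        exact Multiset.mem_cons_of_mem (ih hs)
      · rw [sup_of_le_left hl]
        exact Multiset.mem_cons_self a s

/-- forward parity: conjugate of an odd partition -/
lemma conj_count_max (h : Multiset ℕ) (hodd : ∀ y ∈ h, y % 2 = 1) (hne : h ≠ 0) :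
    (conj h).count (Multiset.card h) % 2 = 1 := by
  have hpos : ∀ y ∈ h, 0 < y := fun y hy => by have := hodd y hy; omega
  have hc : 1 ≤ Multiset.card h := by
    rcases Multiset.exists_mem_of_ne_zero hne with ⟨y, hy⟩
    have := Multiset.card_pos.2 hne
    omega
  have h1 := aF_succ h (Multiset.card h)
  have h2 : aF h (Multiset.card h + 1) = 0 := aF_eq_zero h (by omega)
  have h3 := aF_mem h hpos hc (le_refl _)
  have h4 := hodd _ h3.1
  omega

lemma conj_count_other (h : Multiset ℕ) (hodd : ∀ y ∈ h, y % 2 = 1) {x : ℕ}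
    (hx : x ≠ Multiset.card h) : (conj h).count x % 2 = 0 := by
  have hpos : ∀ y ∈ h, 0 < y := fun y hy => by have := hodd y hy; omega
  rcases Nat.eq_zero_or_pos x with rfl | hx1
  · rw [Multiset.count_eq_zero.2]
    intro hc
    have := (mem_conj h hc).1
    omega
  rcases le_or_gt x (Multiset.card h) with hxc | hxc
  · have hxc' : x < Multiset.card h := by omega
    have h1 := aF_succ h x
    have h2 := aF_mem h hpos hx1 (by omega)
    have h3 := aF_mem h hpos (show 1 ≤ x + 1 by omega) (by omega)
    have h4 := hodd _ h2.1
    have h5 := hodd _ h3.1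
    omega
  · rw [Multiset.count_eq_zero.2]
    intro hc
    have := (mem_conj h hc).2
    omega

/-- backward parity: conjugate of a partition with the EO-type multiplicity structure
is odd -/
lemma conj_mem_odd (D : Multiset ℕ) (hpos : ∀ y ∈ D, 0 < y)
    (hmax : D.count D.sup % 2 = 1) (hoth : ∀ x, x ≠ D.sup → D.count x % 2 = 0) :
    ∀ y ∈ conj D, y % 2 = 1 := by
  intro y hy
  obtain ⟨j, hj, rfl⟩ := Multiset.mem_map.1 hy
  rw [Multiset.mem_range] at hj
  have hsplit := Multiset.filter_add_not (fun z => z = D.sup) D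
  have h1 : fC D j = (D.filter (fun z => z = D.sup)).countP (fun z => j < z)
      + (D.filter (fun z => ¬ z = D.sup)).countP (fun z => j < z) := by
    conv_lhs => rw [fC, ← hsplit]
    rw [Multiset.countP_add]
  have h2 : (D.filter (fun z => z = D.sup)).countP (fun z => j < z) = D.count D.sup := by
    have e1 : D.filter (fun z => z = D.sup) = Multiset.replicate (D.count D.sup) D.sup :=
      Multiset.filter_eq' D D.sup
    rw [e1, Multiset.countP_eq_card.2, Multiset.card_replicate]
    intro a ha
    rw [Multiset.eq_of_mem_replicate ha]
    exact hj
  have h3 : ∀ z, (D.filter (fun z => ¬ z = D.sup)).count z % 2 = 0 := by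
    intro z
    rw [Multiset.count_filter]
    split_ifs with hz
    · simp
    · exact hoth z hz
  obtain ⟨t, ht⟩ := exists_half _ (fun z => Nat.even_iff.2 (h3 z))
  have h4 : (D.filter (fun z => ¬ z = D.sup)).countP (fun z => j < z) = 2 * t.countP (fun z => j < z) := by
    rw [ht, Multiset.countP_add]
    omega
  omega

lemma sum_map_double (m : Multiset ℕ) : (m.map (fun y => 2 * y)).sum = 2 * m.sum := by
  induction m using Multiset.induction with
  | empty => simp
  | cons a s ih => simp [ih]; ring

lemma sum_map_addk (m : Multiset ℕ) (c : ℕ) :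
    (m.map (fun y => y + c)).sum = m.sum + Multiset.card m * c := by
  induction m using Multiset.induction with
  | empty => simp
  | cons a s ih => simp [ih]; ring

lemma count_map_double (m : Multiset ℕ) (x : ℕ) :
    (m.map (fun y => 2 * y)).count (2 * x) = m.count x :=
  Multiset.count_map_eq_count' _ _ (fun a b hab => by omega) x

lemma count_map_double_odd (m : Multiset ℕ) {y : ℕ} (hy : y % 2 = 1) :
    (m.map (fun y => 2 * y)).count y = 0 := by
  rw [Multiset.count_eq_zero]
  intro hc
  obtain ⟨a, _, ha⟩ := Multiset.mem_map.1 hc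
  omega

lemma count_map_addk (m : Multiset ℕ) (c x : ℕ) :
    (m.map (fun y => y + c)).count (x + c) = m.count x :=
  Multiset.count_map_eq_count' _ _ (fun a b hab => by omega) x


def phi (g s : Multiset ℕ) : Multiset ℕ :=
  (conj g).map (fun y => 2 * y) +
    ((s.map (fun y => y + 2 * Multiset.card g)) + (s.map (fun y => y + 2 * Multiset.card g)))

lemma phi_filter_even (g s : Multiset ℕ) (hs : ∀ x ∈ s, x % 2 = 1) :
    (phi g s).filter (fun x => x % 2 = 0) = (conj g).map (fun y => 2 * y) := by
  unfold phi
  rw [Multiset.filter_add, Multiset.filter_add]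
  have h1 : ((conj g).map (fun y => 2 * y)).filter (fun x => x % 2 = 0)
      = (conj g).map (fun y => 2 * y) := by
    rw [Multiset.filter_eq_self]
    intro x hx
    obtain ⟨y, _, rfl⟩ := Multiset.mem_map.1 hx
    omega
  have h2 : ((s.map (fun y => y + 2 * Multiset.card g)).filter (fun x => x % 2 = 0)) = 0 := by
    rw [Multiset.filter_eq_nil]
    intro x hx
    obtain ⟨y, hy, rfl⟩ := Multiset.mem_map.1 hx
    have := hs y hy
    omega
  rw [h1, h2]
  simp

lemma phi_lep (g s : Multiset ℕ) (hs : ∀ x ∈ s, x % 2 = 1) :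
    largestEvenPart (phi g s) = 2 * (conj g).sup := by
  rw [largestEvenPart, phi_filter_even g s hs, sup_map_two]

lemma count_phi (g s : Multiset ℕ) (x : ℕ) :
    (phi g s).count x = ((conj g).map (fun y => 2 * y)).count x
      + 2 * (s.map (fun y => y + 2 * Multiset.card g)).count x := by
  unfold phi
  rw [Multiset.count_add, Multiset.count_add]
  ring

lemma count_odd_part (s : Multiset ℕ) (k : ℕ) (hs : ∀ x ∈ s, x % 2 = 1) {x : ℕ}
    (hx : x % 2 = 0) : (s.map (fun y => y + 2 * k)).count x = 0 := by
  rw [Multiset.count_eq_zero]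
  intro hc
  obtain ⟨y, hy, hxy⟩ := Multiset.mem_map.1 hc
  have := hs y hy
  omega

lemma phi_mem (n : ℕ) (g r s : Multiset ℕ) (h : (g, r, s) ∈ cpSet 1 1 2 n) :
    phi g s ∈ EOstarSet (2 * n) := by
  obtain ⟨⟨hg, hs, hr⟩, hsum⟩ := h
  simp only at hg hs hr hsum
  have hG : ∀ x ∈ g, x % 2 = 1 := fun x hx => by have := (hg x hx).2; omega
  have hS : ∀ x ∈ s, x % 2 = 1 := fun x hx => by have := (hs x hx).2; omega
  have hGpos : ∀ x ∈ g, 0 < x := fun x hx => (hg x hx).1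
  constructor
  · -- positivity
    intro x hx
    rcases Multiset.mem_add.1 hx with hx1 | hx2
    · obtain ⟨y, hy, rfl⟩ := Multiset.mem_map.1 hx1
      have := (mem_conj g hy).1
      omega
    · rcases Multiset.mem_add.1 hx2 with hx3 | hx3 <;>
      · obtain ⟨y, hy, rfl⟩ := Multiset.mem_map.1 hx3
        have := hS y hy
        omega
  refine ⟨?_, ?_, ?_, ?_⟩
  · -- sum
    unfold phi
    rw [Multiset.sum_add, Multiset.sum_add, sum_map_double, conj_sum, sum_map_addk]
    rw [hr, Multiset.sum_replicate] at hsum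
    simp only [smul_eq_mul] at hsum
    omega
  · -- even < odd
    intro x hx y hy hex hoy
    rw [Nat.even_iff] at hex
    rw [Nat.odd_iff] at hoy
    have hxE : x ∈ (conj g).map (fun y => 2 * y) := by
      rcases Multiset.mem_add.1 hx with h1 | h2
      · exact h1
      · exfalso
        rcases Multiset.mem_add.1 h2 with h3 | h3 <;>
        · obtain ⟨z, hz, rfl⟩ := Multiset.mem_map.1 h3
          have := hS z hz
          omega
    have hyO : y ∈ s.map (fun w => w + 2 * Multiset.card g) := by
      rcases Multiset.mem_add.1 hy with h1 | h2
      · exfalso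
        obtain ⟨z, hz, rfl⟩ := Multiset.mem_map.1 h1
        omega
      · rcases Multiset.mem_add.1 h2 with h3 | h3 <;> exact h3
    obtain ⟨z, hz, rfl⟩ := Multiset.mem_map.1 hxE
    obtain ⟨w, hw, rfl⟩ := Multiset.mem_map.1 hyO
    have h1 := (mem_conj g hz).2
    have h2 := hS w hw
    omega
  · -- counts even except lep
    intro x hx hne
    rw [phi_lep g s hS] at hne
    rw [Nat.even_iff, count_phi]
    rcases Nat.even_or_odd x with hex | hox
    · rw [Nat.even_iff] at hex
      rw [count_odd_part s (Multiset.card g) hS hex]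
      obtain ⟨y, rfl⟩ : ∃ y, x = 2 * y := ⟨x / 2, by omega⟩
      rw [count_map_double]
      rcases eq_or_ne g 0 with rfl | hgne
      · rw [show conj (0 : Multiset ℕ) = 0 from rfl]
        simp
      · have hsupc : (conj g).sup = Multiset.card g := sup_conj g hGpos
        have hyk : y ≠ Multiset.card g := by
          intro hc
          apply hne
          omega
        have := conj_count_other g hG hyk
        omega
    · rw [Nat.odd_iff] at hox
      rw [count_map_double_odd _ hox]
      omega
  · -- largest even part count odd
    rintro ⟨x, hx, hex⟩
    rw [Nat.even_iff] at hex
    have hxE : x ∈ (conj g).map (fun y => 2 * y) := by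
      rcases Multiset.mem_add.1 hx with h1 | h2
      · exact h1
      · exfalso
        rcases Multiset.mem_add.1 h2 with h3 | h3 <;>
        · obtain ⟨z, hz, rfl⟩ := Multiset.mem_map.1 h3
          have := hS z hz
          omega
    have hgne : g ≠ 0 := by
      rintro rfl
      rw [show conj (0 : Multiset ℕ) = 0 from rfl] at hxE
      simp at hxE
    have hsupc : (conj g).sup = Multiset.card g := sup_conj g hGpos
    rw [phi_lep g s hS, hsupc, Nat.odd_iff, count_phi]
    rw [count_odd_part s (Multiset.card g) hS (by omega)]
    rw [count_map_double]
    have := conj_count_max g hG hgne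
    omega

lemma phi_inj (n : ℕ) : Set.InjOn (fun t : Multiset ℕ × Multiset ℕ × Multiset ℕ =>
    phi t.1 t.2.2) (cpSet 1 1 2 n) := by
  rintro ⟨g, r, s⟩ hgs ⟨g', r', s'⟩ hgs' heq
  obtain ⟨⟨hg, hs, hr⟩, -⟩ := hgs
  obtain ⟨⟨hg', hs', hr'⟩, -⟩ := hgs'
  simp only at hg hs hr hg' hs' hr' heq
  have hS : ∀ x ∈ s, x % 2 = 1 := fun x hx => by have := (hs x hx).2; omega
  have hS' : ∀ x ∈ s', x % 2 = 1 := fun x hx => by have := (hs' x hx).2; omega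
  have hGpos : ∀ x ∈ g, 0 < x := fun x hx => (hg x hx).1
  have hGpos' : ∀ x ∈ g', 0 < x := fun x hx => (hg' x hx).1
  have hE : (conj g).map (fun y => 2 * y) = (conj g').map (fun y => 2 * y) := by
    have := congrArg (fun m => Multiset.filter (fun x => x % 2 = 0) m) heq
    rwa [phi_filter_even g s hS, phi_filter_even g' s' hS'] at this
  have hcg : conj g = conj g' := Multiset.map_injective (fun a b hab => by omega) hE
  have hgg : g = g' := by
    rw [← conj_conj g hGpos, ← conj_conj g' hGpos', hcg]
  subst hgg
  have hOO : s.map (fun y => y + 2 * Multiset.card g)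
      = s'.map (fun y => y + 2 * Multiset.card g) := by
    ext x
    have h2 : (phi g s).count x = (phi g s').count x := by rw [heq]
    rw [count_phi, count_phi, hcg] at h2
    omega
  have hss : s = s' := Multiset.map_injective (fun a b hab => by omega) hOO
  subst hss
  rw [Prod.mk.injEq, Prod.mk.injEq]
  exact ⟨rfl, by rw [hr, hr'], rfl⟩

lemma phi_surj (n : ℕ) (lam : Multiset ℕ) (h : lam ∈ EOstarSet (2 * n)) :
    ∃ g s : Multiset ℕ,
      (g, Multiset.replicate (Multiset.card s) (2 * Multiset.card g), s) ∈ cpSet 1 1 2 n ∧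
      phi g s = lam := by
  obtain ⟨hpos, hsum, hlt, heven, hmax⟩ := h
  set E : Multiset ℕ := lam.filter (fun x => x % 2 = 0) with hE
  set O : Multiset ℕ := lam.filter (fun x => ¬ x % 2 = 0) with hO
  have hsplit : E + O = lam := Multiset.filter_add_not _ lam
  have hEprop : ∀ z ∈ E, z ∈ lam ∧ z % 2 = 0 := by
    intro z hz
    rw [hE] at hz
    exact ⟨Multiset.mem_of_mem_filter hz, (Multiset.mem_filter.1 hz).2⟩
  have hOprop : ∀ z ∈ O, z ∈ lam ∧ z % 2 = 1 := by
    intro z hz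
    rw [hO] at hz
    have := (Multiset.mem_filter.1 hz).2
    exact ⟨Multiset.mem_of_mem_filter hz, by omega⟩
  obtain ⟨D, hD⟩ := exists_double E (fun x hx => (Multiset.mem_filter.1 hx).2)
  have hDpos : ∀ y ∈ D, 0 < y := by
    intro y hy
    have h1 : 2 * y ∈ E := hD ▸ Multiset.mem_map_of_mem _ hy
    have := hpos _ (hEprop _ h1).1
    omega
  have hlep : largestEvenPart lam = 2 * D.sup := by
    rw [largestEvenPart, ← hE, ← hD, sup_map_two]
  have hcountD : ∀ x, D.count x = lam.count (2 * x) := by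
    intro x
    have h1 : D.count x = E.count (2 * x) := by
      rw [← hD, count_map_double]
    rw [h1, hE, Multiset.count_filter, if_pos (by omega)]
  have hcardg : Multiset.card (conj D) = D.sup := conj_card D
  have hGodd : ∀ y ∈ conj D, y % 2 = 1 := by
    rcases eq_or_ne D 0 with rfl | hDne
    · intro y hy
      exact absurd hy (by rw [show conj (0:Multiset ℕ) = 0 from rfl]; simp)
    · apply conj_mem_odd D hDpos
      · have hEne : E ≠ 0 := by
          intro hc
          rw [hc] at hD
          exact hDne (Multiset.map_eq_zero.1 hD)
        have hex : ∃ x ∈ lam, Even x := by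
          obtain ⟨x, hx⟩ := Multiset.exists_mem_of_ne_zero hEne
          exact ⟨x, (hEprop x hx).1, Nat.even_iff.2 (hEprop x hx).2⟩
        have h3 := hmax hex
        rw [Nat.odd_iff, hlep] at h3
        rw [hcountD]
        exact h3
      · intro x hx
        rw [hcountD]
        by_cases hmem : (2 * x) ∈ lam
        · have := heven (2 * x) hmem (by rw [hlep]; omega)
          rwa [Nat.even_iff] at this
        · rw [Multiset.count_eq_zero.2 hmem]
  have hGpos : ∀ y ∈ conj D, 0 < y := fun y hy => by have := hGodd y hy; omega
  -- halve the odd parts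
  have hOcount : ∀ y, Even (O.count y) := by
    intro y
    rw [hO, Multiset.count_filter]
    by_cases hy : y % 2 = 0
    · rw [if_neg (by simpa using hy)]
      exact Even.zero
    · rw [if_pos hy]
      by_cases hmem : y ∈ lam
      · apply heven y hmem
        rw [hlep]
        omega
      · rw [Multiset.count_eq_zero.2 hmem]
        exact Even.zero
  obtain ⟨t, ht⟩ := exists_half O hOcount
  have htO : ∀ y ∈ t, y ∈ O := by
    intro y hy
    rw [ht]
    exact Multiset.mem_add.2 (Or.inl hy)
  have hOodd : ∀ y ∈ O, y % 2 = 1 := fun y hy => (hOprop y hy).2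
  have hOgt : ∀ y ∈ O, 2 * D.sup < y := by
    intro y hy
    have hymem : y ∈ lam := (hOprop y hy).1
    have hyodd := hOodd y hy
    rcases eq_or_ne E 0 with hEz | hEne
    · have hDz : D = 0 := by
        rw [hEz] at hD
        exact Multiset.map_eq_zero.1 hD
      rw [hDz]
      have := hpos y hymem
      simpa using this
    · have hsupE : E.sup ∈ E := sup_mem E hEne
      have hsupmem : E.sup ∈ lam := (hEprop _ hsupE).1
      have hsupeven : E.sup % 2 = 0 := (hEprop _ hsupE).2
      have h5 : E.sup = 2 * D.sup := by
        rw [← hD, sup_map_two]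
      have := hlt E.sup hsupmem y hymem (Nat.even_iff.2 hsupeven) (Nat.odd_iff.2 hyodd)
      omega
  refine ⟨conj D, t.map (fun y => y - 2 * D.sup), ⟨⟨?_, ?_, ?_⟩, ?_⟩, ?_⟩
  · intro x hx
    have := hGodd x hx
    exact ⟨by omega, by omega⟩
  · intro x hx
    obtain ⟨y, hy, rfl⟩ := Multiset.mem_map.1 hx
    have h1 := hOodd y (htO y hy)
    have h2 := hOgt y (htO y hy)
    exact ⟨by omega, by omega⟩
  · rfl
  · -- sum condition
    simp only
    have hts : (t.map (fun y => y - 2 * D.sup)).map (fun y => y + 2 * D.sup) = t := by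
      rw [Multiset.map_map]
      calc t.map ((fun y => y + 2 * D.sup) ∘ (fun y => y - 2 * D.sup))
          = t.map id := Multiset.map_congr rfl (fun y hy => by
            have := hOgt y (htO y hy)
            simp only [Function.comp_apply, id_eq]
            omega)
        _ = t := Multiset.map_id t
    have hsum2 : Multiset.sum t = (t.map (fun y => y - 2 * D.sup)).sum
        + Multiset.card t * (2 * D.sup) := by
      conv_lhs => rw [← hts]
      rw [sum_map_addk, Multiset.card_map]
    have hlamsum : E.sum + O.sum = 2 * n := by
      rw [← hsum, ← hsplit, Multiset.sum_add]
    have hEsum : E.sum = 2 * D.sum := by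
      rw [← hD, sum_map_double]
    have hOsum : O.sum = t.sum + t.sum := by
      rw [ht, Multiset.sum_add]
    have hgsum : (conj D).sum = D.sum := conj_sum D
    rw [Multiset.sum_replicate]
    simp only [smul_eq_mul, Multiset.card_map, hcardg]
    omega
  · -- phi = lam
    unfold phi
    have hconj2 : conj (conj D) = D := conj_conj D hDpos
    rw [hconj2, hD, hcardg]
    have hts : (t.map (fun y => y - 2 * D.sup)).map (fun y => y + 2 * D.sup) = t := by
      rw [Multiset.map_map]
      calc t.map ((fun y => y + 2 * D.sup) ∘ (fun y => y - 2 * D.sup))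
          = t.map id := Multiset.map_congr rfl (fun y hy => by
            have := hOgt y (htO y hy)
            simp only [Function.comp_apply, id_eq]
            omega)
        _ = t := Multiset.map_id t
    rw [hts, ← ht, hsplit]

end CoPf

theorem stmt1 (n : ℕ) : cp 1 1 2 n = EOstar (2 * n) := by
  classical
  have himg : (fun t : Multiset ℕ × Multiset ℕ × Multiset ℕ => CoPf.phi t.1 t.2.2) ''
      cpSet 1 1 2 n = EOstarSet (2 * n) := by
    apply Set.Subset.antisymm
    · rintro x ⟨⟨g, r, s⟩, ht, rfl⟩
      exact CoPf.phi_mem n g r s ht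
    · intro lam hlam
      obtain ⟨g, s, hmem, hphi⟩ := CoPf.phi_surj n lam hlam
      exact ⟨(g, Multiset.replicate (Multiset.card s) (2 * Multiset.card g), s), hmem, hphi⟩
  rw [cp, EOstar, ← himg, Set.ncard_image_of_injOn (CoPf.phi_inj n)]
end

section
/- For all positive integers a, b, m and every nonnegative integer n, the following congruence holds in the polynomial ring ℤ[x,y][q] modulo q^{n+1} (i.e., the coefficients of q^k agree for all k ≤ n): (Σ_{k=0}^{n} Σ_{w,s ≥ 0} cp_{a,b,m}(w,s,k) x^s y^w q^k) · Π_{j=0}^{n} (1 − x q^{b+jm})(1 − y q^{a+jm}) ≡ Π_{j=0}^{n} (1 − x y q^{a+b+jm}) (mod q^{n+1}). (For each fixed k the inner sum over w and s is finite, since cp_{a,b,m}(w,s,k) = 0 whenever aw + bs + msw > k.) -/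
/-- `cp_{a,b,m}(w,s,n)`: the number of `(a,b,m)`-copartitions of size `n` with exactly
`w` ground parts and exactly `s` sky parts. -/
noncomputable def cpWS (a b m w s n : ℕ) : ℕ :=
  {t ∈ cpSet a b m n | Multiset.card t.1 = w ∧ Multiset.card t.2.2 = s}.ncard

/-- Abbreviation for the coefficient ring `ℤ[x,y]`, with `x = X 0`, `y = X 1`. -/
abbrev R2 : Type := MvPolynomial (Fin 2) ℤ

/-- The truncated copartition generating function
`Σ_{k=0}^{n} Σ_{w,s ≥ 0} cp_{a,b,m}(w,s,k) x^s y^w q^k` as an element of `ℤ[x,y][q]`.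
The inner sums over `w, s` are truncated at `k`, which loses nothing since
`cp_{a,b,m}(w,s,k) = 0` whenever `aw + bs + msw > k` (as `a, b ≥ 1`). -/
noncomputable def cpGenFun (a b m n : ℕ) : Polynomial R2 :=
  ∑ i ∈ Finset.range (n + 1), ∑ w ∈ Finset.range (i + 1), ∑ s ∈ Finset.range (i + 1),
    (cpWS a b m w s i : ℕ) •
      (Polynomial.C (MvPolynomial.X 0 ^ s * MvPolynomial.X 1 ^ w) * Polynomial.X ^ i)

/-- `Π_{j=0}^{n} (1 − x q^{b+jm})(1 − y q^{a+jm})` in `ℤ[x,y][q]`. -/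
noncomputable def denomProd (a b m n : ℕ) : Polynomial R2 :=
  ∏ j ∈ Finset.range (n + 1),
    ((1 - Polynomial.C (MvPolynomial.X 0) * Polynomial.X ^ (b + j * m)) *
     (1 - Polynomial.C (MvPolynomial.X 1) * Polynomial.X ^ (a + j * m)))

/-- `Π_{j=0}^{n} (1 − x y q^{a+b+jm})` in `ℤ[x,y][q]`. -/
noncomputable def numerProd (a b m n : ℕ) : Polynomial R2 :=
  ∏ j ∈ Finset.range (n + 1),
    (1 - Polynomial.C (MvPolynomial.X 0 * MvPolynomial.X 1) * Polynomial.X ^ (a + b + j * m))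

namespace CPAux

open Finset

/-- Reduced encoding of copartitions: just the pair `(γ, σ)`. -/
def Pset (a b m w s n : ℕ) : Set (Multiset ℕ × Multiset ℕ) :=
  {p | (∀ x ∈ p.1, a ≤ x ∧ x % m = a % m) ∧ (∀ x ∈ p.2, b ≤ x ∧ x % m = b % m) ∧
    Multiset.card p.1 = w ∧ Multiset.card p.2 = s ∧ p.1.sum + p.2.sum + m * w * s = n}

noncomputable def pcount (a b m w s n : ℕ) : ℕ := (Pset a b m w s n).ncard

lemma cpWS_eq_pcount (a b m w s n : ℕ) : cpWS a b m w s n = pcount a b m w s n := by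
  classical
  have hinj : Function.Injective (fun p : Multiset ℕ × Multiset ℕ =>
      ((p.1, (Multiset.replicate s (m * w), p.2)) : Multiset ℕ × Multiset ℕ × Multiset ℕ)) := by
    intro p q h
    simp only [Prod.mk.injEq] at h
    exact Prod.ext h.1 h.2.2
  have himg : {t ∈ cpSet a b m n | Multiset.card t.1 = w ∧ Multiset.card t.2.2 = s}
      = (fun p : Multiset ℕ × Multiset ℕ =>
      ((p.1, (Multiset.replicate s (m * w), p.2)) : Multiset ℕ × Multiset ℕ × Multiset ℕ)) ''
        Pset a b m w s n := by
    ext ⟨γ, ρ, σ⟩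
    simp only [Set.mem_setOf_eq, cpSet, IsCopartition, Set.mem_image, Prod.mk.injEq, Prod.exists,
      Pset]
    constructor
    · rintro ⟨⟨⟨h1, h2, h3⟩, hsum⟩, hw, hs⟩
      refine ⟨γ, σ, ⟨h1, h2, hw, hs, ?_⟩, rfl, ?_, rfl⟩
      · have hρ : ρ.sum = s * (m * w) := by
          rw [h3, hw, hs, Multiset.sum_replicate, smul_eq_mul]
        have : m * w * s = s * (m * w) := by ring
        omega
      · rw [h3, hw, hs]
    · rintro ⟨γ', σ', ⟨h1, h2, hw, hs, hsum⟩, rfl, hρ, rfl⟩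
      refine ⟨⟨⟨h1, h2, ?_⟩, ?_⟩, hw, hs⟩
      · rw [hw, hs, ← hρ]
      · have : ρ.sum = s * (m * w) := by
          rw [← hρ, Multiset.sum_replicate, smul_eq_mul]
        have h' : m * w * s = s * (m * w) := by ring
        omega
  rw [cpWS, himg, Set.ncard_image_of_injective _ hinj, pcount]

lemma sum_map_add_const (μ : Multiset ℕ) (m : ℕ) :
    (μ.map (· + m)).sum = μ.sum + Multiset.card μ * m := by
  have : (Multiset.map (fun x => id x + (fun _ => m) x) μ).sum
      = (Multiset.map id μ).sum + (Multiset.map (fun _ => m) μ).sum := Multiset.sum_map_add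
  simpa [Multiset.map_id, Multiset.map_const', Multiset.sum_replicate, smul_eq_mul] using this

lemma mul_card_le_sum {μ : Multiset ℕ} {a : ℕ} (h : ∀ x ∈ μ, a ≤ x) :
    a * Multiset.card μ ≤ μ.sum := by
  have := Multiset.card_nsmul_le_sum h
  simpa [smul_eq_mul, mul_comm] using this

lemma parts_le_bound {μ : Multiset ℕ} {n : ℕ} (h1 : ∀ x ∈ μ, 1 ≤ x) (h2 : μ.sum ≤ n) :
    μ ≤ n • (Finset.range (n + 1)).val := by
  classical
  rw [Multiset.le_iff_count]
  intro v
  by_cases hv : v ∈ μ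
  · have hv1 : 1 ≤ v := h1 v hv
    have hvn : v ≤ n := le_trans (Multiset.single_le_sum (fun x _ => Nat.zero_le x) v hv) h2
    have hcard : Multiset.count v μ ≤ Multiset.card μ := Multiset.count_le_card _ _
    have hcs : Multiset.card μ ≤ μ.sum := by
      have := mul_card_le_sum h1
      omega
    have hmem : v ∈ (Finset.range (n + 1)).val := by
      rw [Finset.mem_val, Finset.mem_range]; omega
    have hone : Multiset.count v (Finset.range (n + 1)).val = 1 := by
      rw [Multiset.count_eq_of_nodup (Finset.range (n + 1)).nodup, if_pos hmem]
    rw [Multiset.count_nsmul, hone]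
    omega
  · simp [Multiset.count_eq_zero_of_notMem hv]

lemma Pset_finite {a b m w s n : ℕ} (ha : 1 ≤ a) (hb : 1 ≤ b) :
    (Pset a b m w s n).Finite := by
  classical
  have hfin : {μ : Multiset ℕ | μ ≤ n • (Finset.range (n + 1)).val}.Finite := by
    refine (Multiset.finite_toSet ((n • (Finset.range (n + 1)).val).powerset)).subset ?_
    intro μ hμ
    simpa [Multiset.mem_powerset] using hμ
  refine ((hfin.prod hfin).subset ?_)
  rintro ⟨γ, σ⟩ ⟨h1, h2, hw, hs, hsum⟩
  constructor
  · exact parts_le_bound (fun x hx => le_trans ha (h1 x hx).1) (by omega)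
  · exact parts_le_bound (fun x hx => le_trans hb (h2 x hx).1) (by omega)

lemma pcount_eq_zero {a b m w s n : ℕ} (h : n < a * w + b * s) : pcount a b m w s n = 0 := by
  have hempty : Pset a b m w s n = ∅ := by
    ext ⟨γ, σ⟩
    simp only [Pset, Set.mem_setOf_eq, Set.mem_empty_iff_false, iff_false, not_and]
    intro h1 h2 hw hs
    have g1 : a * w ≤ γ.sum := hw ▸ mul_card_le_sum (fun x hx => (h1 x hx).1)
    have g2 : b * s ≤ σ.sum := hs ▸ mul_card_le_sum (fun x hx => (h2 x hx).1)
    omega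
  rw [pcount, hempty, Set.ncard_empty]

lemma pcount_zero_zero (a b m n : ℕ) : pcount a b m 0 0 n = if n = 0 then 1 else 0 := by
  split
  · next h =>
    subst h
    have : Pset a b m 0 0 0 = {((0 : Multiset ℕ), (0 : Multiset ℕ))} := by
      ext ⟨γ, σ⟩
      simp only [Pset, Set.mem_setOf_eq, Set.mem_singleton_iff, Prod.mk.injEq]
      constructor
      · rintro ⟨-, -, hw, hs, -⟩
        exact ⟨Multiset.card_eq_zero.mp hw, Multiset.card_eq_zero.mp hs⟩
      · rintro ⟨rfl, rfl⟩
        simp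
    rw [pcount, this, Set.ncard_singleton]
  · next h =>
    have hempty : Pset a b m 0 0 n = ∅ := by
      ext ⟨γ, σ⟩
      simp only [Pset, Set.mem_setOf_eq, Set.mem_empty_iff_false, iff_false, not_and]
      intro h1 h2 hw hs
      have : γ = 0 := Multiset.card_eq_zero.mp hw
      have hσ : σ = 0 := Multiset.card_eq_zero.mp hs
      subst this; subst hσ
      simp only [Multiset.sum_zero]
      omega
    rw [pcount, hempty, Set.ncard_empty]


section Shifts

lemma pcount_shift_ground (a b m w s n : ℕ) :
    pcount (a + m) b m w s (n + m * w) = pcount a b m w s n := by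
  classical
  have hinj : Function.Injective (fun p : Multiset ℕ × Multiset ℕ => (p.1.map (· + m), p.2)) := by
    intro p q h
    simp only [Prod.mk.injEq] at h
    exact Prod.ext (Multiset.map_injective (fun x y hxy => by omega) h.1) h.2
  have himg : Pset (a + m) b m w s (n + m * w)
      = (fun p : Multiset ℕ × Multiset ℕ => (p.1.map (· + m), p.2)) '' Pset a b m w s n := by
    ext ⟨γ, σ⟩
    simp only [Pset, Set.mem_setOf_eq, Set.mem_image, Prod.mk.injEq, Prod.exists]
    constructor
    · rintro ⟨h1, h2, hw, hs, hsum⟩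
      have hback : (γ.map (· - m)).map (· + m) = γ := by
        rw [Multiset.map_map]
        have : ∀ x ∈ γ, ((· + m) ∘ (· - m)) x = id x := by
          intro x hx
          have := (h1 x hx).1
          simp only [Function.comp_apply, id_eq]
          omega
        rw [Multiset.map_congr rfl this, Multiset.map_id]
      refine ⟨γ.map (· - m), σ, ⟨?_, h2, ?_, hs, ?_⟩, hback, rfl⟩
      · intro x hx
        obtain ⟨x', hx', rfl⟩ := Multiset.mem_map.mp hx
        obtain ⟨hge, hmod⟩ := h1 x' hx'
        constructor
        · omega
        · have h1' : (x' - m) % m = x' % m := by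
            conv_rhs => rw [show x' = (x' - m) + m by omega]
            rw [Nat.add_mod_right]
          have h2' : (a + m) % m = a % m := Nat.add_mod_right a m
          omega
      · simp [hw]
      · have hγ : γ.sum = (γ.map (· - m)).sum + Multiset.card (γ.map (· - m)) * m := by
          conv_lhs => rw [← hback]
          rw [sum_map_add_const]
        have hcard : Multiset.card (γ.map (· - m)) = w := by simp [hw]
        rw [hcard] at hγ
        have hcm : w * m = m * w := Nat.mul_comm w m
        omega
    · rintro ⟨δ, σ', ⟨h1, h2, hw, hs, hsum⟩, rfl, rfl⟩
      have hsum' : (δ.map (· + m)).sum = δ.sum + w * m := by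
        rw [sum_map_add_const, hw]
      have hcm : w * m = m * w := Nat.mul_comm w m
      refine ⟨?_, h2, by simp [hw], hs, by omega⟩
      intro x hx
      obtain ⟨x', hx', rfl⟩ := Multiset.mem_map.mp hx
      obtain ⟨hge, hmod⟩ := h1 x' hx'
      refine ⟨by omega, ?_⟩
      rw [Nat.add_mod_right, Nat.add_mod_right]
      exact hmod
  rw [pcount, himg, Set.ncard_image_of_injective _ hinj, pcount]

lemma pcount_shift_sky (a b m w s n : ℕ) :
    pcount a (b + m) m w s (n + m * s) = pcount a b m w s n := by
  classical
  have hinj : Function.Injective (fun p : Multiset ℕ × Multiset ℕ => (p.1, p.2.map (· + m))) := by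
    intro p q h
    simp only [Prod.mk.injEq] at h
    exact Prod.ext h.1 (Multiset.map_injective (fun x y hxy => by omega) h.2)
  have himg : Pset a (b + m) m w s (n + m * s)
      = (fun p : Multiset ℕ × Multiset ℕ => (p.1, p.2.map (· + m))) '' Pset a b m w s n := by
    ext ⟨γ, σ⟩
    simp only [Pset, Set.mem_setOf_eq, Set.mem_image, Prod.mk.injEq, Prod.exists]
    constructor
    · rintro ⟨h1, h2, hw, hs, hsum⟩
      have hback : (σ.map (· - m)).map (· + m) = σ := by
        rw [Multiset.map_map]
        have : ∀ x ∈ σ, ((· + m) ∘ (· - m)) x = id x := by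
          intro x hx
          have := (h2 x hx).1
          simp only [Function.comp_apply, id_eq]
          omega
        rw [Multiset.map_congr rfl this, Multiset.map_id]
      refine ⟨γ, σ.map (· - m), ⟨h1, ?_, hw, ?_, ?_⟩, rfl, hback⟩
      · intro x hx
        obtain ⟨x', hx', rfl⟩ := Multiset.mem_map.mp hx
        obtain ⟨hge, hmod⟩ := h2 x' hx'
        constructor
        · omega
        · have h1' : (x' - m) % m = x' % m := by
            conv_rhs => rw [show x' = (x' - m) + m by omega]
            rw [Nat.add_mod_right]
          have h2' : (b + m) % m = b % m := Nat.add_mod_right b m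
          omega
      · simp [hs]
      · have hσ : σ.sum = (σ.map (· - m)).sum + Multiset.card (σ.map (· - m)) * m := by
          conv_lhs => rw [← hback]
          rw [sum_map_add_const]
        have hcard : Multiset.card (σ.map (· - m)) = s := by simp [hs]
        rw [hcard] at hσ
        have hcm : s * m = m * s := Nat.mul_comm s m
        omega
    · rintro ⟨γ', δ, ⟨h1, h2, hw, hs, hsum⟩, rfl, rfl⟩
      have hsum' : (δ.map (· + m)).sum = δ.sum + s * m := by
        rw [sum_map_add_const, hs]
      have hcm : s * m = m * s := Nat.mul_comm s m
      refine ⟨h1, ?_, hw, by simp [hs], by omega⟩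
      intro x hx
      obtain ⟨x', hx', rfl⟩ := Multiset.mem_map.mp hx
      obtain ⟨hge, hmod⟩ := h2 x' hx'
      refine ⟨by omega, ?_⟩
      rw [Nat.add_mod_right, Nat.add_mod_right]
      exact hmod
  rw [pcount, himg, Set.ncard_image_of_injective _ hinj, pcount]

lemma pcount_shift_ground' (a b m w s n : ℕ) :
    pcount (a + m) b m w s n = if m * w ≤ n then pcount a b m w s (n - m * w) else 0 := by
  split
  · next h =>
    conv_lhs => rw [show n = (n - m * w) + m * w by omega]
    rw [pcount_shift_ground]
  · next h =>
    apply pcount_eq_zero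
    have : m * w ≤ (a + m) * w := by
      apply Nat.mul_le_mul_right
      omega
    calc n < m * w := by omega
    _ ≤ (a + m) * w := this
    _ ≤ (a + m) * w + b * s := by omega

lemma pcount_shift_sky' (a b m w s n : ℕ) :
    pcount a (b + m) m w s n = if m * s ≤ n then pcount a b m w s (n - m * s) else 0 := by
  split
  · next h =>
    conv_lhs => rw [show n = (n - m * s) + m * s by omega]
    rw [pcount_shift_sky]
  · next h =>
    apply pcount_eq_zero
    have : m * s ≤ (b + m) * s := by
      apply Nat.mul_le_mul_right
      omega
    omega

end Shifts

section Splits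

lemma Pset_ground_zero (a a' b m s n : ℕ) : Pset a b m 0 s n = Pset a' b m 0 s n := by
  ext ⟨γ, σ⟩
  simp only [Pset, Set.mem_setOf_eq]
  constructor <;>
    rintro ⟨h1, h2, hw, hs, hsum⟩ <;>
    refine ⟨?_, h2, hw, hs, hsum⟩ <;>
    · intro x hx
      rw [Multiset.card_eq_zero.mp hw] at hx
      simp at hx

lemma Pset_sky_zero (a b b' m w n : ℕ) : Pset a b m w 0 n = Pset a b' m w 0 n := by
  ext ⟨γ, σ⟩
  simp only [Pset, Set.mem_setOf_eq]
  constructor <;>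
    rintro ⟨h1, h2, hw, hs, hsum⟩ <;>
    refine ⟨h1, ?_, hw, hs, hsum⟩ <;>
    · intro x hx
      rw [Multiset.card_eq_zero.mp hs] at hx
      simp at hx

lemma step_up {a m x : ℕ} (hm : 1 ≤ m) (hge : a ≤ x) (hmod : x % m = a % m) (hne : x ≠ a) :
    a + m ≤ x := by
  have hlt : a < x := lt_of_le_of_ne hge (Ne.symm hne)
  have hdvd : m ∣ x - a := (Nat.modEq_iff_dvd' hge).mp hmod.symm
  have := Nat.le_of_dvd (by omega) hdvd
  omega

lemma pcount_ground_split {a b m : ℕ} (ha : 1 ≤ a) (hb : 1 ≤ b) (hm : 1 ≤ m) (w s n : ℕ) :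
    pcount a b m (w + 1) s n = pcount (a + m) b m (w + 1) s n
      + (if a + m * s ≤ n then pcount a b m w s (n - a - m * s) else 0) := by
  classical
  set B : Set (Multiset ℕ × Multiset ℕ) := {p ∈ Pset a b m (w + 1) s n | a ∈ p.1} with hB
  have hunion : Pset a b m (w + 1) s n = Pset (a + m) b m (w + 1) s n ∪ B := by
    ext ⟨γ, σ⟩
    constructor
    · intro hmem
      by_cases hag : a ∈ γ
      · exact Or.inr ⟨hmem, hag⟩
      · left
        obtain ⟨h1, h2, hw, hs, hsum⟩ := hmem
        refine ⟨?_, h2, hw, hs, hsum⟩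
        intro x hx
        obtain ⟨hge, hmod⟩ := h1 x hx
        have hne : x ≠ a := fun e => hag (e ▸ hx)
        refine ⟨step_up hm hge hmod hne, ?_⟩
        rw [Nat.add_mod_right]
        exact hmod
    · rintro (⟨h1, h2, hw, hs, hsum⟩ | ⟨hmem, -⟩)
      · refine ⟨?_, h2, hw, hs, hsum⟩
        intro x hx
        obtain ⟨hge, hmod⟩ := h1 x hx
        refine ⟨by omega, ?_⟩
        rw [← Nat.add_mod_right a m]
        exact hmod
      · exact hmem
  have hdisj : Disjoint (Pset (a + m) b m (w + 1) s n) B := by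
    rw [Set.disjoint_left]
    rintro ⟨γ, σ⟩ ⟨h1, -, -, -, -⟩ ⟨-, hag⟩
    have := (h1 a hag).1
    omega
  have hBcard : B.ncard = (if a + m * s ≤ n then pcount a b m w s (n - a - m * s) else 0) := by
    split
    · next hle =>
      have hinj : Function.Injective
          (fun p : Multiset ℕ × Multiset ℕ => ((a ::ₘ p.1, p.2) : Multiset ℕ × Multiset ℕ)) := by
        intro p q h
        simp only [Prod.mk.injEq] at h
        refine Prod.ext ?_ h.2
        have := congrArg (fun μ : Multiset ℕ => μ.erase a) h.1
        simpa [Multiset.erase_cons_head] using this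
      have himg : B = (fun p : Multiset ℕ × Multiset ℕ => ((a ::ₘ p.1, p.2) : _)) ''
          Pset a b m w s (n - a - m * s) := by
        ext ⟨γ, σ⟩
        simp only [hB, Pset, Set.mem_setOf_eq, Set.mem_image, Prod.mk.injEq, Prod.exists,
          Set.sep_setOf]
        constructor
        · rintro ⟨⟨h1, h2, hw, hs, hsum⟩, hag⟩
          refine ⟨γ.erase a, σ, ⟨?_, h2, ?_, hs, ?_⟩, Multiset.cons_erase hag, rfl⟩
          · intro x hx
            exact h1 x (Multiset.mem_of_mem_erase hx)
          · rw [Multiset.card_erase_of_mem hag, hw]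
            rfl
          · have hsg : γ.sum = a + (γ.erase a).sum := by
              conv_lhs => rw [← Multiset.cons_erase hag]
              rw [Multiset.sum_cons]
            have hmul : m * (w + 1) * s = m * w * s + m * s := by ring
            omega
        · rintro ⟨δ, σ', ⟨h1, h2, hw, hs, hsum⟩, rfl, rfl⟩
          have hmul : m * (w + 1) * s = m * w * s + m * s := by ring
          refine ⟨⟨?_, h2, by simp [hw], hs, ?_⟩, Multiset.mem_cons_self a δ⟩
          · intro x hx
            rcases Multiset.mem_cons.mp hx with rfl | hx'
            · exact ⟨le_refl _, rfl⟩
            · exact h1 x hx'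
          · rw [Multiset.sum_cons]
            omega
      rw [himg, Set.ncard_image_of_injective _ hinj, pcount]
    · next hle =>
      have : B = ∅ := by
        ext ⟨γ, σ⟩
        simp only [hB, Set.mem_empty_iff_false, iff_false, Set.sep_setOf, Set.mem_setOf_eq,
          not_and, Pset]
        rintro ⟨h1, h2, hw, hs, hsum⟩
        intro hag
        have hga : a ≤ γ.sum := Multiset.single_le_sum (fun x _ => Nat.zero_le x) a hag
        have hmul : m * (w + 1) * s = m * w * s + m * s := by ring
        omega
      rw [this, Set.ncard_empty]
  rw [pcount, hunion, Set.ncard_union_eq hdisj (Pset_finite (by omega) hb)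
    ((Pset_finite ha hb).subset (by rw [hB]; exact fun p hp => hp.1)), hBcard]
  rfl

lemma pcount_sky_split {a b m : ℕ} (ha : 1 ≤ a) (hb : 1 ≤ b) (hm : 1 ≤ m) (w s n : ℕ) :
    pcount a b m w (s + 1) n = pcount a (b + m) m w (s + 1) n
      + (if b + m * w ≤ n then pcount a b m w s (n - b - m * w) else 0) := by
  classical
  set B : Set (Multiset ℕ × Multiset ℕ) := {p ∈ Pset a b m w (s + 1) n | b ∈ p.2} with hB
  have hunion : Pset a b m w (s + 1) n = Pset a (b + m) m w (s + 1) n ∪ B := by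
    ext ⟨γ, σ⟩
    constructor
    · intro hmem
      by_cases hag : b ∈ σ
      · exact Or.inr ⟨hmem, hag⟩
      · left
        obtain ⟨h1, h2, hw, hs, hsum⟩ := hmem
        refine ⟨h1, ?_, hw, hs, hsum⟩
        intro x hx
        obtain ⟨hge, hmod⟩ := h2 x hx
        have hne : x ≠ b := fun e => hag (e ▸ hx)
        refine ⟨step_up hm hge hmod hne, ?_⟩
        rw [Nat.add_mod_right]
        exact hmod
    · rintro (⟨h1, h2, hw, hs, hsum⟩ | ⟨hmem, -⟩)
      · refine ⟨h1, ?_, hw, hs, hsum⟩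
        intro x hx
        obtain ⟨hge, hmod⟩ := h2 x hx
        refine ⟨by omega, ?_⟩
        rw [← Nat.add_mod_right b m]
        exact hmod
      · exact hmem
  have hdisj : Disjoint (Pset a (b + m) m w (s + 1) n) B := by
    rw [Set.disjoint_left]
    rintro ⟨γ, σ⟩ ⟨-, h2, -, -, -⟩ ⟨-, hag⟩
    have := (h2 b hag).1
    omega
  have hBcard : B.ncard = (if b + m * w ≤ n then pcount a b m w s (n - b - m * w) else 0) := by
    split
    · next hle =>
      have hinj : Function.Injective
          (fun p : Multiset ℕ × Multiset ℕ => ((p.1, b ::ₘ p.2) : Multiset ℕ × Multiset ℕ)) := by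
        intro p q h
        simp only [Prod.mk.injEq] at h
        refine Prod.ext h.1 ?_
        have := congrArg (fun μ : Multiset ℕ => μ.erase b) h.2
        simpa [Multiset.erase_cons_head] using this
      have himg : B = (fun p : Multiset ℕ × Multiset ℕ => ((p.1, b ::ₘ p.2) : _)) ''
          Pset a b m w s (n - b - m * w) := by
        ext ⟨γ, σ⟩
        simp only [hB, Pset, Set.mem_setOf_eq, Set.mem_image, Prod.mk.injEq, Prod.exists,
          Set.sep_setOf]
        constructor
        · rintro ⟨⟨h1, h2, hw, hs, hsum⟩, hag⟩
          refine ⟨γ, σ.erase b, ⟨h1, ?_, hw, ?_, ?_⟩, rfl, Multiset.cons_erase hag⟩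
          · intro x hx
            exact h2 x (Multiset.mem_of_mem_erase hx)
          · rw [Multiset.card_erase_of_mem hag, hs]
            rfl
          · have hsg : σ.sum = b + (σ.erase b).sum := by
              conv_lhs => rw [← Multiset.cons_erase hag]
              rw [Multiset.sum_cons]
            have hmul : m * w * (s + 1) = m * w * s + m * w := by ring
            omega
        · rintro ⟨γ', δ, ⟨h1, h2, hw, hs, hsum⟩, rfl, rfl⟩
          have hmul : m * w * (s + 1) = m * w * s + m * w := by ring
          refine ⟨⟨h1, ?_, hw, by simp [hs], ?_⟩, Multiset.mem_cons_self b δ⟩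
          · intro x hx
            rcases Multiset.mem_cons.mp hx with rfl | hx'
            · exact ⟨le_refl _, rfl⟩
            · exact h2 x hx'
          · rw [Multiset.sum_cons]
            omega
      rw [himg, Set.ncard_image_of_injective _ hinj, pcount]
    · next hle =>
      have : B = ∅ := by
        ext ⟨γ, σ⟩
        simp only [hB, Set.mem_empty_iff_false, iff_false, Set.sep_setOf, Set.mem_setOf_eq,
          not_and, Pset]
        rintro ⟨h1, h2, hw, hs, hsum⟩
        intro hag
        have hga : b ≤ σ.sum := Multiset.single_le_sum (fun x _ => Nat.zero_le x) b hag
        have hmul : m * w * (s + 1) = m * w * s + m * w := by ring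
        omega
      rw [this, Set.ncard_empty]
  rw [pcount, hunion, Set.ncard_union_eq hdisj (Pset_finite ha (by omega))
    ((Pset_finite ha hb).subset (by rw [hB]; exact fun p hp => hp.1)), hBcard]
  rfl

end Splits

section FE

lemma FEa_num {a b m : ℕ} (ha : 1 ≤ a) (hb : 1 ≤ b) (hm : 1 ≤ m) (w s k : ℕ) :
    pcount a b m w s k
      + (if 1 ≤ w ∧ 1 ≤ s ∧ a + b ≤ k then pcount (a + m) b m (w - 1) (s - 1) (k - a - b) else 0)
    = pcount (a + m) b m w s k
      + (if 1 ≤ w ∧ a ≤ k then pcount a b m (w - 1) s (k - a) else 0) := by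
  cases w with
  | zero =>
    rw [if_neg (by omega), if_neg (by omega)]
    show pcount a b m 0 s k + 0 = pcount (a + m) b m 0 s k + 0
    unfold pcount
    rw [Pset_ground_zero a (a + m) b m s k]
  | succ w' =>
    rw [pcount_ground_split ha hb hm w' s k]
    simp only [Nat.add_sub_cancel]
    have key : (if a + m * s ≤ k then pcount a b m w' s (k - a - m * s) else 0)
        + (if 1 ≤ w' + 1 ∧ 1 ≤ s ∧ a + b ≤ k then pcount (a + m) b m w' (s - 1) (k - a - b) else 0)
        = (if 1 ≤ w' + 1 ∧ a ≤ k then pcount a b m w' s (k - a) else 0) := by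
      cases s with
      | zero =>
        simp only [Nat.mul_zero, Nat.add_zero, Nat.sub_zero]
        split_ifs <;> first | rfl | omega | (congr 1 <;> omega)
      | succ s' =>
        simp only [Nat.add_sub_cancel]
        rw [pcount_sky_split ha hb hm w' s' (k - a)]
        rw [pcount_shift_sky' a b m w' (s' + 1) (k - a)]
        rw [pcount_shift_ground' a b m w' s' (k - a - b)]
        have e1 : m * (s' + 1) = m * s' + m := by ring
        split_ifs <;> first | rfl | omega | (congr 1 <;> omega)
    omega

lemma FEb_num {a b m : ℕ} (ha : 1 ≤ a) (hb : 1 ≤ b) (hm : 1 ≤ m) (w s k : ℕ) :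
    pcount a b m w s k
      + (if 1 ≤ w ∧ 1 ≤ s ∧ a + b ≤ k then pcount a (b + m) m (w - 1) (s - 1) (k - a - b) else 0)
    = pcount a (b + m) m w s k
      + (if 1 ≤ s ∧ b ≤ k then pcount a b m w (s - 1) (k - b) else 0) := by
  cases s with
  | zero =>
    rw [if_neg (by omega), if_neg (by omega)]
    show pcount a b m w 0 k + 0 = pcount a (b + m) m w 0 k + 0
    unfold pcount
    rw [Pset_sky_zero a b (b + m) m w k]
  | succ s' =>
    rw [pcount_sky_split ha hb hm w s' k]
    simp only [Nat.add_sub_cancel]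
    have key : (if b + m * w ≤ k then pcount a b m w s' (k - b - m * w) else 0)
        + (if 1 ≤ w ∧ 1 ≤ s' + 1 ∧ a + b ≤ k then pcount a (b + m) m (w - 1) s' (k - a - b) else 0)
        = (if 1 ≤ s' + 1 ∧ b ≤ k then pcount a b m w s' (k - b) else 0) := by
      cases w with
      | zero =>
        simp only [Nat.mul_zero, Nat.add_zero, Nat.sub_zero]
        split_ifs <;> first | rfl | omega | (congr 1 <;> omega)
      | succ w'' =>
        simp only [Nat.add_sub_cancel]
        rw [pcount_ground_split ha hb hm w'' s' (k - b)]
        rw [pcount_shift_ground' a b m (w'' + 1) s' (k - b)]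
        rw [pcount_shift_sky' a b m w'' s' (k - a - b)]
        rw [show k - b - a - m * s' = k - a - b - m * s' by omega]
        have e1 : m * (w'' + 1) = m * w'' + m := by ring
        split_ifs <;> first | rfl | omega | (congr 1 <;> omega)
    omega

end FE

section PS

abbrev R2' : Type := MvPolynomial (Fin 2) ℤ

noncomputable def xx : R2' := MvPolynomial.X 0
noncomputable def yy : R2' := MvPolynomial.X 1

noncomputable def cN (a b m k N : ℕ) : R2' :=
  ∑ w ∈ Finset.range N, (∑ s ∈ Finset.range N, (pcount a b m w s k : R2') * xx ^ s) * yy ^ w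

lemma pcount_big_w {a b m w s k : ℕ} (ha : 1 ≤ a) (h : k < w) : pcount a b m w s k = 0 :=
  pcount_eq_zero (by
    have : 1 * w ≤ a * w := Nat.mul_le_mul_right w ha
    omega)

lemma pcount_big_s {a b m w s k : ℕ} (hb : 1 ≤ b) (h : k < s) : pcount a b m w s k = 0 :=
  pcount_eq_zero (by
    have : 1 * s ≤ b * s := Nat.mul_le_mul_right s hb
    omega)

lemma cN_pad {a b m k N : ℕ} (ha : 1 ≤ a) (hb : 1 ≤ b) (h : k + 1 ≤ N) :
    cN a b m k N = cN a b m k (k + 1) := by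
  unfold cN
  have houter : ∀ w ∈ Finset.range N, w ∉ Finset.range (k + 1) →
      (∑ s ∈ Finset.range N, (pcount a b m w s k : R2') * xx ^ s) * yy ^ w = 0 := by
    intro w _ hw
    have hk : k < w := by
      simp only [Finset.mem_range, not_lt] at hw
      omega
    rw [Finset.sum_eq_zero, zero_mul]
    intro s _
    rw [pcount_big_w ha hk]
    simp
  rw [← Finset.sum_subset (Finset.range_subset_range.mpr h) houter]
  refine Finset.sum_congr rfl (fun w _ => ?_)
  congr 1
  refine (Finset.sum_subset (Finset.range_subset_range.mpr h) ?_).symm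
  intro s _ hs
  have hk : k < s := by
    simp only [Finset.mem_range, not_lt] at hs
    omega
  rw [pcount_big_s hb hk]
  simp

noncomputable def FF (a b m : ℕ) : PowerSeries R2' := PowerSeries.mk fun k => cN a b m k (k + 1)

lemma coeff_FF {a b m : ℕ} (ha : 1 ≤ a) (hb : 1 ≤ b) {k N : ℕ} (h : k + 1 ≤ N) :
    PowerSeries.coeff k (FF a b m) = cN a b m k N := by
  rw [FF, PowerSeries.coeff_mk, cN_pad ha hb h]

lemma coeff_mul_one_sub (g : PowerSeries R2') (c : R2') (e k : ℕ) :
    (PowerSeries.coeff k) (g * (1 - PowerSeries.C c * PowerSeries.X ^ e))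
      = (PowerSeries.coeff k) g
        - c * (if e ≤ k then (PowerSeries.coeff (k - e)) g else 0) := by
  rw [mul_sub, mul_one, map_sub]
  congr 1
  rw [show g * (PowerSeries.C c * PowerSeries.X ^ e)
      = PowerSeries.C c * (g * PowerSeries.X ^ e) by ring,
    PowerSeries.coeff_C_mul, PowerSeries.coeff_mul_X_pow']

lemma shift1 (K d : ℕ) (g : ℕ → R2') (z : R2') (hg : ∀ i, K ≤ i + d → g i = 0) :
    ∑ i ∈ Finset.range K, g i * z ^ (i + d)
      = ∑ i ∈ Finset.range K, (if d ≤ i then g (i - d) else 0) * z ^ i := by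
  have h1 : ∑ i ∈ Finset.range K, (if d ≤ i then g (i - d) else 0) * z ^ i
      = ∑ i ∈ Finset.range (d + K), (if d ≤ i then g (i - d) else 0) * z ^ i := by
    apply Finset.sum_subset (Finset.range_subset_range.mpr (by omega))
    intro i hi hni
    simp only [Finset.mem_range, not_lt] at hni
    split
    · rw [hg (i - d) (by omega), zero_mul]
    · rw [zero_mul]
  rw [h1, Finset.sum_range_add]
  have h2 : ∑ i ∈ Finset.range d, (if d ≤ i then g (i - d) else 0) * z ^ i = 0 := by
    apply Finset.sum_eq_zero
    intro i hi
    simp only [Finset.mem_range] at hi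
    rw [if_neg (by omega), zero_mul]
  rw [h2, zero_add]
  refine Finset.sum_congr rfl (fun i _ => ?_)
  rw [if_pos (by omega), show d + i - d = i by omega, show d + i = i + d by omega]

lemma ite_sum (c : Prop) [Decidable c] (T : Finset ℕ) (f : ℕ → R2') :
    (if c then ∑ i ∈ T, f i else 0) = ∑ i ∈ T, (if c then f i else 0) := by
  split <;> simp

lemma yy_mul_cN {a b m K k : ℕ} (ha : 1 ≤ a) (hK : K ≤ k) :
    yy * cN a b m K (k + 2)
      = ∑ w ∈ Finset.range (k + 2),
          (∑ s ∈ Finset.range (k + 2),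
            (if 1 ≤ w then (pcount a b m (w - 1) s K : R2') else 0) * xx ^ s) * yy ^ w := by
  unfold cN
  rw [Finset.mul_sum]
  have step : ∀ w ∈ Finset.range (k + 2),
      yy * ((∑ s ∈ Finset.range (k + 2), (pcount a b m w s K : R2') * xx ^ s) * yy ^ w)
      = (∑ s ∈ Finset.range (k + 2), (pcount a b m w s K : R2') * xx ^ s) * yy ^ (w + 1) := by
    intro w _
    ring
  rw [Finset.sum_congr rfl step,
    shift1 (k + 2) 1 (fun w => ∑ s ∈ Finset.range (k + 2), (pcount a b m w s K : R2') * xx ^ s)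
      yy (fun i hi => Finset.sum_eq_zero (fun s _ => by
        rw [pcount_big_w ha (by omega)]
        simp))]
  refine Finset.sum_congr rfl (fun w _ => ?_)
  by_cases hw : 1 ≤ w <;> simp [hw]

lemma xx_mul_cN {a b m K k : ℕ} (hb : 1 ≤ b) (hK : K ≤ k) :
    xx * cN a b m K (k + 2)
      = ∑ w ∈ Finset.range (k + 2),
          (∑ s ∈ Finset.range (k + 2),
            (if 1 ≤ s then (pcount a b m w (s - 1) K : R2') else 0) * xx ^ s) * yy ^ w := by
  unfold cN
  rw [Finset.mul_sum]
  refine Finset.sum_congr rfl (fun w _ => ?_)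
  rw [show xx * ((∑ s ∈ Finset.range (k + 2), (pcount a b m w s K : R2') * xx ^ s) * yy ^ w)
      = (xx * ∑ s ∈ Finset.range (k + 2), (pcount a b m w s K : R2') * xx ^ s) * yy ^ w by ring]
  congr 1
  rw [Finset.mul_sum]
  have step : ∀ s ∈ Finset.range (k + 2),
      xx * ((pcount a b m w s K : R2') * xx ^ s) = (pcount a b m w s K : R2') * xx ^ (s + 1) := by
    intro s _
    ring
  rw [Finset.sum_congr rfl step,
    shift1 (k + 2) 1 (fun s => (pcount a b m w s K : R2')) xx
      (fun i hi => by
        show (pcount a b m w i K : R2') = 0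
        rw [pcount_big_s hb (by omega)]
        simp)]

lemma xxyy_mul_cN {a b m K k : ℕ} (ha : 1 ≤ a) (hb : 1 ≤ b) (hK : K ≤ k) :
    xx * yy * cN a b m K (k + 2)
      = ∑ w ∈ Finset.range (k + 2),
          (∑ s ∈ Finset.range (k + 2),
            (if 1 ≤ w ∧ 1 ≤ s then (pcount a b m (w - 1) (s - 1) K : R2') else 0) * xx ^ s)
            * yy ^ w := by
  rw [show xx * yy * cN a b m K (k + 2) = yy * (xx * cN a b m K (k + 2)) by ring,
    xx_mul_cN hb hK, Finset.mul_sum]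
  have step : ∀ w ∈ Finset.range (k + 2),
      yy * ((∑ s ∈ Finset.range (k + 2),
          (if 1 ≤ s then (pcount a b m w (s - 1) K : R2') else 0) * xx ^ s) * yy ^ w)
      = (∑ s ∈ Finset.range (k + 2),
          (if 1 ≤ s then (pcount a b m w (s - 1) K : R2') else 0) * xx ^ s) * yy ^ (w + 1) := by
    intro w _
    ring
  rw [Finset.sum_congr rfl step,
    shift1 (k + 2) 1 (fun w => ∑ s ∈ Finset.range (k + 2),
      (if 1 ≤ s then (pcount a b m w (s - 1) K : R2') else 0) * xx ^ s) yy
      (fun i hi => Finset.sum_eq_zero (fun s _ => by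
        split
        · rw [pcount_big_w ha (by omega)]
          simp
        · rw [zero_mul]))]
  refine Finset.sum_congr rfl (fun w _ => ?_)
  by_cases hw : 1 ≤ w <;> simp [hw]

lemma FEa {a b m : ℕ} (ha : 1 ≤ a) (hb : 1 ≤ b) (hm : 1 ≤ m) :
    FF a b m * (1 - PowerSeries.C yy * PowerSeries.X ^ a)
      = FF (a + m) b m * (1 - PowerSeries.C (xx * yy) * PowerSeries.X ^ (a + b)) := by
  apply PowerSeries.ext
  intro k
  rw [coeff_mul_one_sub, coeff_mul_one_sub]
  rw [coeff_FF (a := a) (b := b) (m := m) (k := k) (N := k + 2) ha hb (by omega),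
    coeff_FF (a := a + m) (b := b) (m := m) (k := k) (N := k + 2) (by omega) hb (by omega),
    coeff_FF (a := a) (b := b) (m := m) (k := k - a) (N := k + 2) ha hb (by omega),
    coeff_FF (a := a + m) (b := b) (m := m) (k := k - (a + b)) (N := k + 2) (by omega) hb
      (by omega)]
  have L1 : yy * (if a ≤ k then cN a b m (k - a) (k + 2) else 0)
      = ∑ w ∈ Finset.range (k + 2), (∑ s ∈ Finset.range (k + 2),
          (if 1 ≤ w ∧ a ≤ k then (pcount a b m (w - 1) s (k - a) : R2') else 0) * xx ^ s)
          * yy ^ w := by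
    split
    · next h =>
      rw [yy_mul_cN ha (show k - a ≤ k by omega)]
      refine Finset.sum_congr rfl (fun w _ => ?_)
      congr 1
      refine Finset.sum_congr rfl (fun s _ => ?_)
      congr 1
      simp [h]
    · next h =>
      rw [mul_zero]
      symm
      apply Finset.sum_eq_zero
      intro w _
      rw [Finset.sum_eq_zero, zero_mul]
      intro s _
      rw [if_neg (by tauto), zero_mul]
  have L2 : xx * yy * (if a + b ≤ k then cN (a + m) b m (k - (a + b)) (k + 2) else 0)
      = ∑ w ∈ Finset.range (k + 2), (∑ s ∈ Finset.range (k + 2),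
          (if 1 ≤ w ∧ 1 ≤ s ∧ a + b ≤ k
            then (pcount (a + m) b m (w - 1) (s - 1) (k - a - b) : R2') else 0) * xx ^ s)
          * yy ^ w := by
    split
    · next h =>
      rw [show k - (a + b) = k - a - b by omega,
        xxyy_mul_cN (a := a + m) (by omega) hb (show k - a - b ≤ k by omega)]
      refine Finset.sum_congr rfl (fun w _ => ?_)
      congr 1
      refine Finset.sum_congr rfl (fun s _ => ?_)
      congr 1
      simp [h]
    · next h =>
      rw [mul_zero]
      symm
      apply Finset.sum_eq_zero
      intro w _
      rw [Finset.sum_eq_zero, zero_mul]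
      intro s _
      rw [if_neg (by tauto), zero_mul]
  have main : cN a b m k (k + 2)
        + xx * yy * (if a + b ≤ k then cN (a + m) b m (k - (a + b)) (k + 2) else 0)
      = cN (a + m) b m k (k + 2)
        + yy * (if a ≤ k then cN a b m (k - a) (k + 2) else 0) := by
    rw [L1, L2]
    unfold cN
    rw [← Finset.sum_add_distrib, ← Finset.sum_add_distrib]
    refine Finset.sum_congr rfl (fun w _ => ?_)
    have hs : (∑ s ∈ Finset.range (k + 2), (pcount a b m w s k : R2') * xx ^ s)
        + (∑ s ∈ Finset.range (k + 2), (if 1 ≤ w ∧ 1 ≤ s ∧ a + b ≤ k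
            then (pcount (a + m) b m (w - 1) (s - 1) (k - a - b) : R2') else 0) * xx ^ s)
        = (∑ s ∈ Finset.range (k + 2), (pcount (a + m) b m w s k : R2') * xx ^ s)
        + (∑ s ∈ Finset.range (k + 2), (if 1 ≤ w ∧ a ≤ k
            then (pcount a b m (w - 1) s (k - a) : R2') else 0) * xx ^ s) := by
      rw [← Finset.sum_add_distrib, ← Finset.sum_add_distrib]
      refine Finset.sum_congr rfl (fun s _ => ?_)
      have h := FEa_num ha hb hm w s k
      have h' := congrArg (fun t : ℕ => (t : R2')) h
      push_cast at h'
      linear_combination h' * xx ^ s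
    linear_combination hs * yy ^ w
  linear_combination main

lemma FEb {a b m : ℕ} (ha : 1 ≤ a) (hb : 1 ≤ b) (hm : 1 ≤ m) :
    FF a b m * (1 - PowerSeries.C xx * PowerSeries.X ^ b)
      = FF a (b + m) m * (1 - PowerSeries.C (xx * yy) * PowerSeries.X ^ (a + b)) := by
  apply PowerSeries.ext
  intro k
  rw [coeff_mul_one_sub, coeff_mul_one_sub]
  rw [coeff_FF (a := a) (b := b) (m := m) (k := k) (N := k + 2) ha hb (by omega),
    coeff_FF (a := a) (b := b + m) (m := m) (k := k) (N := k + 2) ha (by omega) (by omega),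
    coeff_FF (a := a) (b := b) (m := m) (k := k - b) (N := k + 2) ha hb (by omega),
    coeff_FF (a := a) (b := b + m) (m := m) (k := k - (a + b)) (N := k + 2) ha (by omega)
      (by omega)]
  have L1 : xx * (if b ≤ k then cN a b m (k - b) (k + 2) else 0)
      = ∑ w ∈ Finset.range (k + 2), (∑ s ∈ Finset.range (k + 2),
          (if 1 ≤ s ∧ b ≤ k then (pcount a b m w (s - 1) (k - b) : R2') else 0) * xx ^ s)
          * yy ^ w := by
    split
    · next h =>
      rw [xx_mul_cN hb (show k - b ≤ k by omega)]
      refine Finset.sum_congr rfl (fun w _ => ?_)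
      congr 1
      refine Finset.sum_congr rfl (fun s _ => ?_)
      congr 1
      simp [h]
    · next h =>
      rw [mul_zero]
      symm
      apply Finset.sum_eq_zero
      intro w _
      rw [Finset.sum_eq_zero, zero_mul]
      intro s _
      rw [if_neg (by tauto), zero_mul]
  have L2 : xx * yy * (if a + b ≤ k then cN a (b + m) m (k - (a + b)) (k + 2) else 0)
      = ∑ w ∈ Finset.range (k + 2), (∑ s ∈ Finset.range (k + 2),
          (if 1 ≤ w ∧ 1 ≤ s ∧ a + b ≤ k
            then (pcount a (b + m) m (w - 1) (s - 1) (k - a - b) : R2') else 0) * xx ^ s)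
          * yy ^ w := by
    split
    · next h =>
      rw [show k - (a + b) = k - a - b by omega,
        xxyy_mul_cN (b := b + m) ha (by omega) (show k - a - b ≤ k by omega)]
      refine Finset.sum_congr rfl (fun w _ => ?_)
      congr 1
      refine Finset.sum_congr rfl (fun s _ => ?_)
      congr 1
      simp [h]
    · next h =>
      rw [mul_zero]
      symm
      apply Finset.sum_eq_zero
      intro w _
      rw [Finset.sum_eq_zero, zero_mul]
      intro s _
      rw [if_neg (by tauto), zero_mul]
  have main : cN a b m k (k + 2)
        + xx * yy * (if a + b ≤ k then cN a (b + m) m (k - (a + b)) (k + 2) else 0)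
      = cN a (b + m) m k (k + 2)
        + xx * (if b ≤ k then cN a b m (k - b) (k + 2) else 0) := by
    rw [L1, L2]
    unfold cN
    rw [← Finset.sum_add_distrib, ← Finset.sum_add_distrib]
    refine Finset.sum_congr rfl (fun w _ => ?_)
    have hs : (∑ s ∈ Finset.range (k + 2), (pcount a b m w s k : R2') * xx ^ s)
        + (∑ s ∈ Finset.range (k + 2), (if 1 ≤ w ∧ 1 ≤ s ∧ a + b ≤ k
            then (pcount a (b + m) m (w - 1) (s - 1) (k - a - b) : R2') else 0) * xx ^ s)
        = (∑ s ∈ Finset.range (k + 2), (pcount a (b + m) m w s k : R2') * xx ^ s)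
        + (∑ s ∈ Finset.range (k + 2), (if 1 ≤ s ∧ b ≤ k
            then (pcount a b m w (s - 1) (k - b) : R2') else 0) * xx ^ s) := by
      rw [← Finset.sum_add_distrib, ← Finset.sum_add_distrib]
      refine Finset.sum_congr rfl (fun s _ => ?_)
      have h := FEb_num ha hb hm w s k
      have h' := congrArg (fun t : ℕ => (t : R2')) h
      push_cast at h'
      linear_combination h' * xx ^ s
    linear_combination hs * yy ^ w
  linear_combination main

lemma chain {a b m : ℕ} (ha : 1 ≤ a) (hb : 1 ≤ b) (hm : 1 ≤ m) (t : ℕ) :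
    FF a b m * ∏ j ∈ Finset.range t,
        ((1 - PowerSeries.C xx * PowerSeries.X ^ (b + j * m)) *
         (1 - PowerSeries.C yy * PowerSeries.X ^ (a + j * m)))
      = (∏ j ∈ Finset.range (2 * t),
          (1 - PowerSeries.C (xx * yy) * PowerSeries.X ^ (a + b + j * m)))
        * FF (a + t * m) (b + t * m) m := by
  induction t with
  | zero => simp
  | succ t ih =>
    rw [Finset.prod_range_succ, ← mul_assoc, ih]
    rw [show 2 * (t + 1) = 2 * t + 1 + 1 by ring, Finset.prod_range_succ, Finset.prod_range_succ]
    rw [show a + (t + 1) * m = a + t * m + m by ring, show b + (t + 1) * m = b + t * m + m by ring]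
    have e1 : FF (a + t * m) (b + t * m) m
          * (1 - PowerSeries.C yy * PowerSeries.X ^ (a + t * m))
        = FF (a + t * m + m) (b + t * m) m
          * (1 - PowerSeries.C (xx * yy) * PowerSeries.X ^ (a + b + 2 * t * m)) := by
      have h := FEa (a := a + t * m) (b := b + t * m) (m := m) (by omega) (by omega) hm
      rw [show a + t * m + (b + t * m) = a + b + 2 * t * m by ring] at h
      exact h
    have e2 : FF (a + t * m + m) (b + t * m) m
          * (1 - PowerSeries.C xx * PowerSeries.X ^ (b + t * m))
        = FF (a + t * m + m) (b + t * m + m) m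
          * (1 - PowerSeries.C (xx * yy) * PowerSeries.X ^ (a + b + (2 * t + 1) * m)) := by
      have h := FEb (a := a + t * m + m) (b := b + t * m) (m := m) (by omega) (by omega) hm
      rw [show a + t * m + m + (b + t * m) = a + b + (2 * t + 1) * m by ring] at h
      exact h
    linear_combination
      ((∏ j ∈ Finset.range (2 * t),
          (1 - PowerSeries.C (xx * yy) * PowerSeries.X ^ (a + b + j * m)))
        * (1 - PowerSeries.C xx * PowerSeries.X ^ (b + t * m))) * e1
      + ((∏ j ∈ Finset.range (2 * t),
          (1 - PowerSeries.C (xx * yy) * PowerSeries.X ^ (a + b + j * m)))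
        * (1 - PowerSeries.C (xx * yy) * PowerSeries.X ^ (a + b + 2 * t * m))) * e2

lemma coeff_prod_high {k : ℕ} (S : Finset ℕ) (e : ℕ → ℕ) (cc : ℕ → R2')
    {j : ℕ} (hj : j ≤ k) (he : ∀ i ∈ S, k < e i) :
    PowerSeries.coeff j
        (∏ i ∈ S, (1 - PowerSeries.C (cc i) * PowerSeries.X ^ (e i)))
      = if j = 0 then 1 else 0 := by
  classical
  revert he
  refine Finset.induction_on S ?_ ?_
  · intro _
    rw [Finset.prod_empty, PowerSeries.coeff_one]
  · intro i S hiS ih he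
    rw [Finset.prod_insert hiS, mul_comm, coeff_mul_one_sub,
      if_neg (by have := he i (Finset.mem_insert_self i S); omega), mul_zero, sub_zero]
    exact ih (fun i' hi' => he i' (Finset.mem_insert_of_mem hi'))

lemma coeff_mul_of_tail {k : ℕ} (f g : PowerSeries R2')
    (hg : ∀ j ≤ k, PowerSeries.coeff j g = if j = 0 then 1 else 0) :
    PowerSeries.coeff k (f * g) = PowerSeries.coeff k f := by
  rw [PowerSeries.coeff_mul, Finset.sum_eq_single ((k, 0) : ℕ × ℕ)]
  · rw [hg 0 (by omega), if_pos rfl, mul_one]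
  · rintro ⟨i, j⟩ hmem hne
    rw [Finset.HasAntidiagonal.mem_antidiagonal] at hmem
    have hj : j ≠ 0 := by
      rintro rfl
      exact hne (by simp; omega)
    rw [hg j (by omega), if_neg hj, mul_zero]
  · intro hmem
    exact absurd (Finset.HasAntidiagonal.mem_antidiagonal.mpr (by omega)) hmem

lemma coeff_FF_high {a b m : ℕ} (hb : 1 ≤ b) {k j : ℕ} (hka : k < a) (hkb : k < b) (hj : j ≤ k) :
    PowerSeries.coeff j (FF a b m) = if j = 0 then 1 else 0 := by
  rw [FF, PowerSeries.coeff_mk]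
  unfold cN
  rcases Nat.eq_zero_or_pos j with rfl | hj0
  · rw [if_pos rfl]
    simp [pcount_zero_zero]
  · rw [if_neg (by omega)]
    apply Finset.sum_eq_zero
    intro w hw
    rcases Nat.eq_zero_or_pos w with rfl | hw1
    · rw [Finset.sum_eq_zero, zero_mul]
      intro sIdx hs
      rcases Nat.eq_zero_or_pos sIdx with rfl | hs1
      · rw [pcount_zero_zero, if_neg (by omega)]
        simp
      · rw [pcount_eq_zero (show j < a * 0 + b * sIdx by
          have := Nat.mul_le_mul (le_refl b) hs1
          omega)]
        simp
    · rw [Finset.sum_eq_zero, zero_mul]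
      intro sIdx _
      rw [pcount_eq_zero (show j < a * w + b * sIdx by
        have := Nat.mul_le_mul (le_refl a) hw1
        omega)]
      simp

lemma cpGenFun_coeff {a b m n i : ℕ} (h : i ≤ n) :
    (cpGenFun a b m n).coeff i = cN a b m i (i + 1) := by
  unfold cpGenFun
  rw [Polynomial.finset_sum_coeff, Finset.sum_eq_single i ?h1 ?h2]
  case h1 =>
    intro i' _ hne
    rw [Polynomial.finset_sum_coeff]
    apply Finset.sum_eq_zero
    intro w _
    rw [Polynomial.finset_sum_coeff]
    apply Finset.sum_eq_zero
    intro sIdx _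
    rw [Polynomial.coeff_smul, Polynomial.coeff_C_mul, Polynomial.coeff_X_pow,
      if_neg (Ne.symm hne), mul_zero, smul_zero]
  case h2 =>
    intro hnot
    exact absurd (Finset.mem_range.mpr (by omega)) hnot
  rw [Polynomial.finset_sum_coeff]
  unfold cN
  refine Finset.sum_congr rfl (fun w _ => ?_)
  rw [Polynomial.finset_sum_coeff, Finset.sum_mul]
  refine Finset.sum_congr rfl (fun sIdx _ => ?_)
  rw [Polynomial.coeff_smul, Polynomial.coeff_C_mul, Polynomial.coeff_X_pow, if_pos rfl,
    mul_one, cpWS_eq_pcount, nsmul_eq_mul]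
  simp only [xx, yy]
  ring

end PS

end CPAux

open CPAux in
theorem stmt2 (a b m : ℕ) (ha : 0 < a) (hb : 0 < b) (hm : 0 < m) (n : ℕ) :
    ∀ k ≤ n, (cpGenFun a b m n * denomProd a b m n).coeff k = (numerProd a b m n).coeff k := by
  intro k hk
  classical
  have hcoeD : ∀ j : ℕ, (denomProd a b m n).coeff j
      = PowerSeries.coeff j (∏ j ∈ Finset.range (n + 1),
          ((1 - PowerSeries.C xx * PowerSeries.X ^ (b + j * m)) *
           (1 - PowerSeries.C yy * PowerSeries.X ^ (a + j * m)))) := by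
    intro j
    rw [← Polynomial.coeff_coe]
    congr 1
    unfold denomProd
    rw [← Polynomial.coeToPowerSeries.ringHom_apply, map_prod]
    refine Finset.prod_congr rfl (fun i _ => ?_)
    simp only [map_mul, map_sub, map_one, map_pow, Polynomial.coeToPowerSeries.ringHom_apply,
      Polynomial.coe_C, Polynomial.coe_X, xx, yy]
  have h1 : (cpGenFun a b m n * denomProd a b m n).coeff k
      = PowerSeries.coeff k (FF a b m * ∏ j ∈ Finset.range (n + 1),
          ((1 - PowerSeries.C xx * PowerSeries.X ^ (b + j * m)) *
           (1 - PowerSeries.C yy * PowerSeries.X ^ (a + j * m)))) := by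
    rw [Polynomial.coeff_mul, PowerSeries.coeff_mul]
    refine Finset.sum_congr rfl ?_
    rintro ⟨i, j⟩ hmem
    rw [Finset.HasAntidiagonal.mem_antidiagonal] at hmem
    congr 1
    · rw [cpGenFun_coeff (show i ≤ n by omega), FF, PowerSeries.coeff_mk]
    · exact hcoeD j
  rw [h1, chain ha hb hm (n + 1)]
  have hbig : ∀ j ≤ k, PowerSeries.coeff j (FF (a + (n + 1) * m) (b + (n + 1) * m) m)
      = if j = 0 then 1 else 0 := by
    intro j hj
    have hmn : (n + 1) * 1 ≤ (n + 1) * m := Nat.mul_le_mul (le_refl (n + 1)) hm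
    exact coeff_FF_high (by omega) (by omega) (by omega) hj
  rw [coeff_mul_of_tail _ _ hbig]
  rw [show 2 * (n + 1) = (n + 1) + (n + 1) by ring, Finset.prod_range_add]
  rw [coeff_mul_of_tail _ _ (fun j hj =>
    coeff_prod_high (Finset.range (n + 1)) (fun i => a + b + (n + 1 + i) * m) (fun _ => xx * yy)
      hj (fun i _ => by
        have hmn : (n + 1 + i) * 1 ≤ (n + 1 + i) * m := Nat.mul_le_mul (le_refl _) hm
        show k < a + b + (n + 1 + i) * m
        omega))]
  rw [← Polynomial.coeff_coe]
  congr 1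
  unfold numerProd
  rw [← Polynomial.coeToPowerSeries.ringHom_apply, map_prod]
  refine Finset.prod_congr rfl (fun i _ => ?_)
  simp only [map_mul, map_sub, map_one, map_pow, Polynomial.coeToPowerSeries.ringHom_apply,
    Polynomial.coe_C, Polynomial.coe_X, xx, yy]
end

section
/- For all positive integers a, b, m and every nonnegative integer n, the following congruence holds in ℤ[q] modulo q^{n+1} (i.e., the coefficients of q^k agree for all k ≤ n): (Σ_{k=0}^{n} (cp^e_{a,b,m}(k) − cp^o_{a,b,m}(k)) q^k) · Π_{j=0}^{n} (1 + q^{a+jm})(1 − q^{b+jm}) ≡ Π_{j=0}^{n} (1 + q^{a+b+jm}) (mod q^{n+1}). -/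
/-- `cp^o_{a,b,m}(n)`. -/
noncomputable def cpOdd (a b m n : ℕ) : ℕ :=
  {t ∈ cpSet a b m n | Odd (Multiset.card t.1)}.ncard

/-- `cp^e_{a,b,m}(n)`. -/
noncomputable def cpEven (a b m n : ℕ) : ℕ :=
  {t ∈ cpSet a b m n | Even (Multiset.card t.1)}.ncard

/-- `Σ_{k=0}^{n} (cp^e_{a,b,m}(k) − cp^o_{a,b,m}(k)) q^k` in `ℤ[q]`. -/
noncomputable def cpDiffPoly (a b m n : ℕ) : Polynomial ℤ :=
  ∑ k ∈ Finset.range (n + 1),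
    Polynomial.C ((cpEven a b m k : ℤ) - (cpOdd a b m k : ℤ)) * Polynomial.X ^ k

/-- `Π_{j=0}^{n} (1 + q^{a+jm})(1 − q^{b+jm})` in `ℤ[q]`. -/
noncomputable def denomProdZ (a b m n : ℕ) : Polynomial ℤ :=
  ∏ j ∈ Finset.range (n + 1),
    ((1 + Polynomial.X ^ (a + j * m)) * (1 - Polynomial.X ^ (b + j * m)))

/-- `Π_{j=0}^{n} (1 + q^{a+b+jm})` in `ℤ[q]`. -/
noncomputable def numerProdZ (a b m n : ℕ) : Polynomial ℤ :=
  ∏ j ∈ Finset.range (n + 1), (1 + Polynomial.X ^ (a + b + j * m))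

open Polynomial Finset

noncomputable section

abbrev SQ (n : ℕ) : Type := Polynomial ℤ ⧸ Ideal.span {(X : Polynomial ℤ) ^ (n+1)}

def qmk (n : ℕ) : Polynomial ℤ →+* SQ n := Ideal.Quotient.mk _

def xq (n : ℕ) : SQ n := qmk n X

lemma xq_pow_eq_zero (n : ℕ) {e : ℕ} (he : n + 1 ≤ e) : xq n ^ e = 0 := by
  have h : (X : Polynomial ℤ) ^ e ∈ Ideal.span {(X : Polynomial ℤ) ^ (n+1)} :=
    Ideal.mem_span_singleton.2 (pow_dvd_pow _ he)
  rw [xq, qmk, ← map_pow]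
  exact (Ideal.Quotient.eq_zero_iff_mem).2 h

def U (n p : ℕ) : SQ n := ∑ k ∈ range (n+1), (-(xq n ^ p)) ^ k

lemma U_mul (n : ℕ) {p : ℕ} (hp : 0 < p) : (1 + xq n ^ p) * U n p = 1 := by
  have h1 := geom_sum_mul (-(xq n ^ p)) (n+1)
  have hz : (-(xq n ^ p)) ^ (n+1) = 0 := by
    rw [neg_pow (xq n ^ p) (n+1), ← pow_mul, xq_pow_eq_zero n (Nat.le_mul_of_pos_left _ hp), mul_zero]
  rw [hz] at h1
  rw [U]; linear_combination -h1

lemma U_one (n : ℕ) {p : ℕ} (hp : n + 1 ≤ p) : U n p = 1 := by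
  rw [U, Finset.sum_eq_single 0]
  · simp
  · intro k _ hk
    rw [neg_pow (xq n ^ p) k, ← pow_mul,
      xq_pow_eq_zero n (le_trans hp (Nat.le_mul_of_pos_right _ (Nat.pos_of_ne_zero hk))), mul_zero]
  · simp

/-! ### multiplicity-function sums -/

def sg (n : ℕ) (g : Fin (n+1) → Fin (n+1)) : ℕ := ∑ j, (g j : ℕ)
def wt0 (n : ℕ) (g : Fin (n+1) → Fin (n+1)) : ℕ := ∑ j : Fin (n+1), (j : ℕ) * (g j : ℕ)

def hpart (n m s : ℕ) : SQ n :=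
  ∑ g ∈ univ.filter (fun g : Fin (n+1) → Fin (n+1) => sg n g = s), xq n ^ (m * wt0 n g)

lemma sg_eq_zero_iff (n : ℕ) (g : Fin (n+1) → Fin (n+1)) : sg n g = 0 ↔ g = fun _ => 0 := by
  constructor
  · intro h; funext j
    have := Finset.sum_eq_zero_iff.1 h j (mem_univ j)
    exact Fin.ext (by simpa using this)
  · intro h; subst h; simp [sg]

lemma hpart_zero (n m : ℕ) : hpart n m 0 = 1 := by
  rw [hpart]
  rw [show (univ.filter (fun g : Fin (n+1) → Fin (n+1) => sg n g = 0)) = {fun _ => 0} by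
    ext g; simp [sg_eq_zero_iff]]
  simp [wt0]

lemma le_sg (n : ℕ) (g : Fin (n+1) → Fin (n+1)) (j : Fin (n+1)) : (g j : ℕ) ≤ sg n g :=
  Finset.single_le_sum (f := fun j => (g j : ℕ)) (fun _ _ => Nat.zero_le _) (mem_univ j)

lemma hpart_rec (n m s : ℕ) (hm : 0 < m) (hs : s + 1 ≤ n) :
    hpart n m (s+1) = hpart n m s + xq n ^ (m*(s+1)) * hpart n m (s+1) := by
  classical
  have split := Finset.sum_filter_add_sum_filter_not
    (univ.filter (fun g : Fin (n+1) → Fin (n+1) => sg n g = s+1))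
    (fun g => (g 0 : ℕ) ≠ 0) (fun g => xq n ^ (m * wt0 n g))
  have sum_update_sg : ∀ (g : Fin (n+1) → Fin (n+1)) (v : Fin (n+1)),
      sg n (Function.update g 0 v) = (v:ℕ) + ∑ j ∈ univ.erase 0, (g j : ℕ) := by
    intro g v
    rw [sg, ← Finset.add_sum_erase _ _ (mem_univ 0)]
    simp only [Function.update_self]
    congr 1
    exact Finset.sum_congr rfl (fun j hj => by rw [Function.update_of_ne (Finset.ne_of_mem_erase hj)])
  have sg_split : ∀ (g : Fin (n+1) → Fin (n+1)),
      sg n g = (g 0 : ℕ) + ∑ j ∈ univ.erase 0, (g j : ℕ) := by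
    intro g; rw [sg, ← Finset.add_sum_erase _ _ (mem_univ 0)]
  have wt0_update : ∀ (g : Fin (n+1) → Fin (n+1)) (v : Fin (n+1)),
      wt0 n (Function.update g 0 v) = wt0 n g := by
    intro g v
    rw [wt0, wt0,
      ← Finset.add_sum_erase _ (fun j : Fin (n+1) => (j:ℕ) * ((Function.update g 0 v) j : ℕ)) (mem_univ 0),
      ← Finset.add_sum_erase _ (fun j : Fin (n+1) => (j:ℕ) * (g j : ℕ)) (mem_univ 0)]
    simp only [Fin.val_zero, zero_mul, zero_add]
    exact Finset.sum_congr rfl (fun j hj => by rw [Function.update_of_ne (Finset.ne_of_mem_erase hj)])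
  have key1 : ∑ g ∈ (univ.filter (fun g : Fin (n+1) → Fin (n+1) => sg n g = s+1)).filter
      (fun g => (g 0 : ℕ) ≠ 0), xq n ^ (m * wt0 n g) = hpart n m s := by
    rw [hpart]
    apply Finset.sum_nbij'
      (i := fun g => Function.update g 0 ⟨(g 0 : ℕ) - 1, lt_of_le_of_lt (Nat.sub_le _ _) (g 0).isLt⟩)
      (j := fun g' => Function.update g' 0 ⟨((g' 0 : ℕ) + 1) % (n+1), Nat.mod_lt _ (by omega)⟩)
    · intro g hg
      simp only [mem_filter, mem_univ, true_and] at hg ⊢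
      rw [sum_update_sg]
      have := sg_split g
      simp only [hg.1] at this ⊢
      omega
    · intro g' hg'
      simp only [mem_filter, mem_univ, true_and] at hg' ⊢
      have hle : (g' 0 : ℕ) ≤ s := hg' ▸ le_sg n g' 0
      have hmod : ((g' 0 : ℕ) + 1) % (n+1) = (g' 0 : ℕ) + 1 := Nat.mod_eq_of_lt (by omega)
      constructor
      · rw [sum_update_sg]
        have := sg_split g'
        simp only [hg'] at this
        simp only [hmod]
        omega
      · simp only [Function.update_self, hmod]
        omega
    · intro g hg
      simp only [mem_filter, mem_univ, true_and] at hg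
      rw [Function.update_idem, Function.update_eq_self_iff]
      apply Fin.ext
      have h0 : (g 0 : ℕ) ≠ 0 := hg.2
      have hlt := (g 0).isLt
      simp only [Function.update_self, Fin.val_mk]
      rw [show ((g 0:ℕ) - 1 + 1) = (g 0:ℕ) by omega, Nat.mod_eq_of_lt hlt]
    · intro g' hg'
      simp only [mem_filter, mem_univ, true_and] at hg'
      have hle : (g' 0 : ℕ) ≤ s := hg' ▸ le_sg n g' 0
      have hmod : ((g' 0 : ℕ) + 1) % (n+1) = (g' 0 : ℕ) + 1 := Nat.mod_eq_of_lt (by omega)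
      rw [Function.update_idem, Function.update_eq_self_iff]
      apply Fin.ext
      simp only [Function.update_self, Fin.val_mk, hmod]
      omega
    · intro g hg
      rw [wt0_update]
  have key2 : ∑ g ∈ (univ.filter (fun g : Fin (n+1) → Fin (n+1) => sg n g = s+1)).filter
      (fun g => ¬ ((g 0 : ℕ) ≠ 0)), xq n ^ (m * wt0 n g) = xq n ^ (m*(s+1)) * hpart n m (s+1) := by
    have expand : xq n ^ (m*(s+1)) * hpart n m (s+1)
        = ∑ g ∈ univ.filter (fun g : Fin (n+1) → Fin (n+1) => sg n g = s+1),
            xq n ^ (m*(s+1) + m * wt0 n g) := by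
      rw [hpart, Finset.mul_sum]
      exact Finset.sum_congr rfl (fun g _ => (pow_add (xq n) _ _).symm)
    rw [expand]
    have split2 := Finset.sum_filter_add_sum_filter_not
      (univ.filter (fun g : Fin (n+1) → Fin (n+1) => sg n g = s+1))
      (fun g => (g (Fin.last n) : ℕ) = 0) (fun g => xq n ^ (m*(s+1) + m * wt0 n g))
    rw [← split2]
    have vanish : ∑ g ∈ (univ.filter (fun g : Fin (n+1) → Fin (n+1) => sg n g = s+1)).filter
        (fun g => ¬ ((g (Fin.last n) : ℕ) = 0)), xq n ^ (m*(s+1) + m * wt0 n g) = 0 := by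
      apply Finset.sum_eq_zero
      intro g hg
      simp only [mem_filter, mem_univ, true_and] at hg
      apply xq_pow_eq_zero
      have h2 : (Fin.last n : ℕ) * (g (Fin.last n) : ℕ) ≤ wt0 n g :=
        Finset.single_le_sum (f := fun j : Fin (n+1) => (j:ℕ) * (g j : ℕ)) (fun _ _ => Nat.zero_le _)
          (mem_univ _)
      have hlast : (Fin.last n : ℕ) = n := rfl
      have h1 : n ≤ wt0 n g := by
        calc n = n * 1 := (mul_one n).symm
        _ ≤ (Fin.last n : ℕ) * (g (Fin.last n) : ℕ) := by
            rw [hlast]; exact Nat.mul_le_mul_left n (by omega)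
        _ ≤ wt0 n g := h2
      have hA : s + 1 ≤ m * (s+1) := Nat.le_mul_of_pos_left _ hm
      have hB : n ≤ m * wt0 n g := le_trans h1 (Nat.le_mul_of_pos_left _ hm |>.trans (Nat.mul_le_mul_left m le_rfl))
      omega
    rw [vanish, add_zero]
    apply Finset.sum_nbij' (i := fun g => Fin.snoc (Fin.tail g) (0 : Fin (n+1)))
      (j := fun g => Fin.cons (0 : Fin (n+1)) (Fin.init g))
    · intro g hg
      simp only [mem_filter, mem_univ, true_and, not_not] at hg ⊢
      have h0 : g 0 = 0 := Fin.ext (by simpa using hg.2)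
      constructor
      · rw [sg, Fin.sum_univ_castSucc]
        simp only [Fin.snoc_castSucc, Fin.snoc_last, Fin.val_zero, add_zero]
        rw [← hg.1, sg, Fin.sum_univ_succ, h0]
        simp [Fin.tail]
      · simp
    · intro g hg
      simp only [mem_filter, mem_univ, true_and, not_not] at hg ⊢
      have hlast : g (Fin.last n) = 0 := Fin.ext (by simpa using hg.2)
      constructor
      · rw [sg, Fin.sum_univ_succ]
        simp only [Fin.cons_zero, Fin.cons_succ, Fin.val_zero, zero_add]
        rw [← hg.1, sg, Fin.sum_univ_castSucc, hlast]
        simp [Fin.init]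
      · simp
    · intro g hg
      simp only [mem_filter, mem_univ, true_and, not_not] at hg
      have h0 : g 0 = 0 := Fin.ext (by simpa using hg.2)
      rw [Fin.init_snoc, ← h0]
      exact Fin.cons_self_tail g
    · intro g hg
      simp only [mem_filter, mem_univ, true_and, not_not] at hg
      have hlast : g (Fin.last n) = 0 := Fin.ext (by simpa using hg.2)
      rw [Fin.tail_cons, ← hlast]
      exact Fin.snoc_init_self g
    · intro g hg
      simp only [mem_filter, mem_univ, true_and, not_not] at hg
      have h0 : g 0 = 0 := Fin.ext (by simpa using hg.2)
      congr 1
      have e1 : wt0 n (Fin.snoc (Fin.tail g) (0:Fin (n+1))) = ∑ i : Fin n, (i : ℕ) * (g i.succ : ℕ) := by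
        rw [wt0, Fin.sum_univ_castSucc]
        simp [Fin.snoc_castSucc, Fin.tail, Fin.coe_castSucc]
      have e2 : wt0 n g = ∑ i : Fin n, ((i : ℕ) + 1) * (g i.succ : ℕ) := by
        rw [wt0, Fin.sum_univ_succ, h0]
        simp [Fin.val_succ]
      have e3 : sg n g = ∑ i : Fin n, (g i.succ : ℕ) := by
        rw [sg, Fin.sum_univ_succ, h0]; simp
      have hw : wt0 n g = wt0 n (Fin.snoc (Fin.tail g) (0:Fin (n+1))) + (s+1) := by
        rw [e1, e2, ← hg.1, e3, ← Finset.sum_add_distrib]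
        exact Finset.sum_congr rfl (fun i _ => by ring)
      rw [hw]; ring
  calc hpart n m (s+1) = _ + _ := split.symm
  _ = hpart n m s + xq n ^ (m*(s+1)) * hpart n m (s+1) := by rw [key1, key2]

def Ppart (n a m s : ℕ) : SQ n := ∏ j ∈ range s, (1 + xq n ^ (a + j*m))
def Apart (n a m s : ℕ) : SQ n := hpart n m s * Ppart n a m s

lemma Apart_zero (n a m : ℕ) : Apart n a m 0 = 1 := by
  rw [Apart, hpart_zero, Ppart]; simp

lemma A_rec (n a m s : ℕ) (hm : 0 < m) (hs : s + 1 ≤ n) :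
    (1 - xq n ^ (m*(s+1))) * Apart n a m (s+1) = (1 + xq n ^ (a + s*m)) * Apart n a m s := by
  have h := hpart_rec n m s hm hs
  have h2 : (1 - xq n ^ (m*(s+1))) * hpart n m (s+1) = hpart n m s := by
    linear_combination h
  rw [Apart, Apart, show Ppart n a m (s+1) = Ppart n a m s * (1 + xq n ^ (a + s*m)) from
    Finset.prod_range_succ _ s]
  calc (1 - xq n ^ (m*(s+1))) * (hpart n m (s+1) * (Ppart n a m s * (1 + xq n ^ (a + s*m))))
      = ((1 - xq n ^ (m*(s+1))) * hpart n m (s+1)) * Ppart n a m s * (1 + xq n ^ (a + s*m)) := by ring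
  _ = (1 + xq n ^ (a + s*m)) * (hpart n m s * Ppart n a m s) := by rw [h2]; try ring

def Tpart (n a b m : ℕ) : SQ n := ∑ s ∈ range (n+1), xq n ^ (b*s) * Apart n a m s

lemma T_high (n a b' m : ℕ) (hb' : n + 1 ≤ b') : Tpart n a b' m = 1 := by
  rw [Tpart, Finset.sum_eq_single 0]
  · rw [Apart_zero]; simp
  · intro s _ hs
    rw [xq_pow_eq_zero n (le_trans hb' (Nat.le_mul_of_pos_right _ (Nat.pos_of_ne_zero hs))), zero_mul]
  · simp

lemma T_funceq (n a m : ℕ) (hm : 0 < m) (b' : ℕ) (hb' : 0 < b') :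
    (1 - xq n ^ b') * Tpart n a b' m = (1 + xq n ^ (a + b')) * Tpart n a (b'+m) m := by
  rw [Tpart, Tpart, Finset.mul_sum, Finset.mul_sum]
  have lhs_eq : ∀ s, (1 - xq n ^ b') * (xq n ^ (b'*s) * Apart n a m s)
      = xq n ^ (b'*s) * ((1 - xq n ^ (m*s)) * Apart n a m s)
        + (xq n ^ (b'*s) * xq n ^ (m*s) * Apart n a m s - xq n ^ (b'*(s+1)) * Apart n a m s) := by
    intro s
    have : xq n ^ (b'*(s+1)) = xq n ^ (b'*s) * xq n ^ b' := by
      rw [← pow_add]; congr 1 <;> ring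
    rw [this]; try ring
  have rhs_eq : ∀ s, (1 + xq n ^ (a + b')) * (xq n ^ ((b'+m)*s) * Apart n a m s)
      = xq n ^ (b'*(s+1)) * ((1 + xq n ^ (a + s*m)) * Apart n a m s)
        + (xq n ^ (b'*s) * xq n ^ (m*s) * Apart n a m s - xq n ^ (b'*(s+1)) * Apart n a m s)
        + (xq n ^ (b'*(s+1)) * xq n ^ (a + m*s) * Apart n a m s
            - xq n ^ (b'*(s+1)) * xq n ^ (a + s*m) * Apart n a m s) := by
    intro s
    have e1 : xq n ^ ((b'+m)*s) = xq n ^ (b'*s) * xq n ^ (m*s) := by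
      rw [← pow_add]; congr 1 <;> ring
    have e2 : xq n ^ (a+b') * xq n ^ ((b'+m)*s) = xq n ^ (b'*(s+1)) * xq n ^ (a + m*s) := by
      rw [← pow_add, ← pow_add]; congr 1 <;> ring
    linear_combination Apart n a m s * e1 + Apart n a m s * e2
  rw [Finset.sum_congr rfl (fun s _ => lhs_eq s), Finset.sum_congr rfl (fun s _ => rhs_eq s)]
  have mst : ∀ s:ℕ, m * s = s * m := fun s => Nat.mul_comm m s
  rw [Finset.sum_add_distrib, Finset.sum_add_distrib, Finset.sum_add_distrib]
  have last_zero : ∀ s : ℕ, xq n ^ (b'*(s+1)) * xq n ^ (a + m*s) * Apart n a m s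
      - xq n ^ (b'*(s+1)) * xq n ^ (a + s*m) * Apart n a m s = 0 := by
    intro s; rw [mst s]; ring
  rw [Finset.sum_congr rfl (fun s _ => last_zero s), Finset.sum_const, smul_zero, add_zero]
  congr 1
  -- ∑ x^{b's}(1-x^{ms})A_s = ∑ x^{b'(s+1)}(1+x^{a+sm})A_s
  rw [Finset.sum_range_succ' (fun s => xq n ^ (b'*s) * ((1 - xq n ^ (m*s)) * Apart n a m s)) n,
      Finset.sum_range_succ (fun s => xq n ^ (b'*(s+1)) * ((1 + xq n ^ (a + s*m)) * Apart n a m s)) n]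
  have z0 : xq n ^ (b'*0) * ((1 - xq n ^ (m*0)) * Apart n a m 0) = 0 := by simp
  have zlast : xq n ^ (b'*(n+1)) * ((1 + xq n ^ (a + n*m)) * Apart n a m n) = 0 := by
    rw [xq_pow_eq_zero n (by nlinarith), zero_mul]
  rw [z0, zlast, add_zero, add_zero]
  exact Finset.sum_congr rfl (fun s hs => by
    rw [A_rec n a m s hm (by simpa using Nat.succ_le_of_lt (mem_range.1 hs))])

lemma T_iter (n a b m : ℕ) (hm : 0 < m) (hb : 0 < b) (r : ℕ) :
    (∏ j ∈ range r, (1 - xq n ^ (b + j*m))) * Tpart n a b m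
      = (∏ j ∈ range r, (1 + xq n ^ (a + b + j*m))) * Tpart n a (b + r*m) m := by
  induction r with
  | zero => simp
  | succ r ih =>
    rw [Finset.prod_range_succ, Finset.prod_range_succ]
    have hfe := T_funceq n a m hm (b + r*m) (by omega)
    calc (∏ j ∈ range r, (1 - xq n ^ (b + j*m))) * (1 - xq n ^ (b + r*m)) * Tpart n a b m
        = (1 - xq n ^ (b + r*m)) * ((∏ j ∈ range r, (1 - xq n ^ (b + j*m))) * Tpart n a b m) := by ring
    _ = (1 - xq n ^ (b + r*m)) * ((∏ j ∈ range r, (1 + xq n ^ (a + b + j*m))) * Tpart n a (b + r*m) m) := by rw [ih]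
    _ = (∏ j ∈ range r, (1 + xq n ^ (a + b + j*m))) * ((1 - xq n ^ (b + r*m)) * Tpart n a (b + r*m) m) := by ring
    _ = (∏ j ∈ range r, (1 + xq n ^ (a + b + j*m))) * ((1 + xq n ^ (a + (b + r*m))) * Tpart n a (b + r*m + m) m) := by rw [hfe]
    _ = _ := by
        rw [show a + (b + r*m) = a + b + r*m by ring, show b + r*m + m = b + (r+1)*m by ring]
        ring

lemma B_mul_T (n a b m : ℕ) (hm : 0 < m) (hb : 0 < b) :
    (∏ j ∈ range (n+1), (1 - xq n ^ (b + j*m))) * Tpart n a b m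
      = ∏ j ∈ range (n+1), (1 + xq n ^ (a + b + j*m)) := by
  rw [T_iter n a b m hm hb (n+1), T_high n a _ m (by nlinarith), mul_one]

lemma Pu (n a m : ℕ) (ha : 0 < a) (hm : 0 < m) (s : ℕ) (hs : s ≤ n) :
    (∏ j ∈ range (n+1), U n (a + j*m + m*s)) * (∏ j ∈ range (n+1), (1 + xq n ^ (a + j*m)))
      = Ppart n a m s := by
  have e1 : (∏ j ∈ range (n+1), U n (a + j*m + m*s)) = ∏ j ∈ Finset.Ico s (n+1+s), U n (a + j*m) := by
    rw [Finset.prod_Ico_eq_prod_range]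
    have : n + 1 + s - s = n + 1 := by omega
    rw [this]
    exact Finset.prod_congr rfl (fun j _ => by congr 1 <;> ring)
  have e2 : ∏ j ∈ Finset.Ico s (n+1+s), U n (a + j*m) = ∏ j ∈ Finset.Ico s (n+1), U n (a + j*m) := by
    rw [← Finset.prod_Ico_consecutive _ (by omega : s ≤ n+1) (by omega : n+1 ≤ n+1+s)]
    have : ∏ j ∈ Finset.Ico (n+1) (n+1+s), U n (a + j*m) = 1 := by
      apply Finset.prod_eq_one
      intro j hj
      rw [Finset.mem_Ico] at hj
      exact U_one n (by nlinarith [hj.1])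
    rw [this, mul_one]
  have e3 : (∏ j ∈ range (n+1), (1 + xq n ^ (a + j*m)))
      = Ppart n a m s * ∏ j ∈ Finset.Ico s (n+1), (1 + xq n ^ (a + j*m)) := by
    rw [Ppart, Finset.range_eq_Ico, ← Finset.prod_Ico_consecutive _ (Nat.zero_le s) (by omega : s ≤ n+1), ← Finset.range_eq_Ico]
  rw [e1, e2, e3]
  calc (∏ j ∈ Finset.Ico s (n+1), U n (a + j*m)) * (Ppart n a m s * ∏ j ∈ Finset.Ico s (n+1), (1 + xq n ^ (a + j*m)))
      = Ppart n a m s * ∏ j ∈ Finset.Ico s (n+1), ((1 + xq n ^ (a + j*m)) * U n (a + j*m)) := by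
        rw [Finset.prod_mul_distrib]; ring
  _ = Ppart n a m s := by
        rw [Finset.prod_congr rfl (fun j _ => U_mul n (by omega : 0 < a + j*m)), Finset.prod_const_one, mul_one]

/-! ### multisets from multiplicity functions -/

def gam (n a m : ℕ) (f : Fin (n+1) → Fin (n+1)) : Multiset ℕ :=
  ∑ j : Fin (n+1), Multiset.replicate (f j : ℕ) (a + (j:ℕ)*m)

lemma card_gam (n a m : ℕ) (f : Fin (n+1) → Fin (n+1)) :
    Multiset.card (gam n a m f) = sg n f := by
  rw [gam, Multiset.card_sum, sg]
  simp [Multiset.card_replicate]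

lemma sum_gam (n a m : ℕ) (f : Fin (n+1) → Fin (n+1)) :
    (gam n a m f).sum = ∑ j : Fin (n+1), (f j : ℕ) * (a + (j:ℕ)*m) := by
  rw [gam]
  rw [show (∑ j : Fin (n+1), Multiset.replicate ((f j : ℕ)) (a + (j:ℕ)*m)).sum
      = ∑ j : Fin (n+1), (Multiset.replicate ((f j : ℕ)) (a + (j:ℕ)*m)).sum from
    map_sum Multiset.sumAddMonoidHom _ _]
  simp [Multiset.sum_replicate]

lemma mem_gam (n a m : ℕ) (f : Fin (n+1) → Fin (n+1)) {x : ℕ} (hx : x ∈ gam n a m f) :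
    ∃ j : Fin (n+1), x = a + (j:ℕ)*m := by
  rw [gam, Multiset.mem_sum] at hx
  obtain ⟨j, _, hj⟩ := hx
  exact ⟨j, (Multiset.eq_of_mem_replicate hj)⟩

lemma count_gam (n a m : ℕ) (hm : 0 < m) (f : Fin (n+1) → Fin (n+1)) (j : Fin (n+1)) :
    (gam n a m f).count (a + (j:ℕ)*m) = (f j : ℕ) := by
  classical
  rw [gam, Multiset.count_sum']
  rw [Finset.sum_eq_single j]
  · simp [Multiset.count_replicate]
  · intro j' _ hj'
    rw [Multiset.count_replicate, if_neg]
    intro h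
    apply hj'
    have : (j':ℕ) * m = (j:ℕ) * m := by omega
    exact Fin.ext (Nat.eq_of_mul_eq_mul_right hm this)
  · simp

lemma gam_inj (n a m : ℕ) (hm : 0 < m) {f f' : Fin (n+1) → Fin (n+1)}
    (h : gam n a m f = gam n a m f') : f = f' := by
  funext j
  have := count_gam n a m hm f j
  rw [h, count_gam n a m hm f' j] at this
  exact Fin.ext this.symm

lemma mem_gam_cond (n a m : ℕ) (ha : 0 < a) (f : Fin (n+1) → Fin (n+1)) :
    ∀ x ∈ gam n a m f, a ≤ x ∧ x % m = a % m := by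
  intro x hx
  obtain ⟨j, rfl⟩ := mem_gam n a m f hx
  exact ⟨Nat.le_add_right _ _, Nat.add_mul_mod_self_right a (j:ℕ) m⟩

/-- reconstruct multiplicity function from a multiset -/
def finv (n a m : ℕ) (γ : Multiset ℕ) : Fin (n+1) → Fin (n+1) :=
  fun j => ⟨min (γ.count (a + (j:ℕ)*m)) n, by omega⟩

lemma card_le_sum_of_pos {γ : Multiset ℕ} (h : ∀ x ∈ γ, 1 ≤ x) : Multiset.card γ ≤ γ.sum := by
  have := Multiset.card_nsmul_le_sum h
  simpa using this

lemma gam_finv (n a m : ℕ) (ha : 0 < a) (hm : 0 < m) (γ : Multiset ℕ)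
    (hcond : ∀ x ∈ γ, a ≤ x ∧ x % m = a % m) (hsum : γ.sum ≤ n) :
    gam n a m (finv n a m γ) = γ := by
  classical
  have hcard : Multiset.card γ ≤ n :=
    le_trans (card_le_sum_of_pos (fun x hx => le_trans ha (hcond x hx).1)) hsum
  have hcount_le : ∀ y : ℕ, γ.count y ≤ n := fun y => le_trans (Multiset.count_le_card y γ) hcard
  have hfinv_val : ∀ j : Fin (n+1), ((finv n a m γ j : ℕ)) = γ.count (a + (j:ℕ)*m) := by
    intro j
    simp only [finv]
    exact min_eq_left (hcount_le _)
  ext y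
  by_cases hy : ∃ j : Fin (n+1), y = a + (j:ℕ)*m
  · obtain ⟨j, rfl⟩ := hy
    rw [count_gam n a m hm, hfinv_val]
  · rw [Multiset.count_eq_zero.2 (fun hmem => hy (mem_gam n a m _ hmem)),
       Eq.comm, Multiset.count_eq_zero]
    intro hmem
    apply hy
    obtain ⟨hle, hmod⟩ := hcond y hmem
    have hdvd : m ∣ (y - a) := (Nat.modEq_iff_dvd' hle).mp (Nat.ModEq.symm hmod)
    obtain ⟨c, hc⟩ := hdvd
    have hyn : y ≤ n := le_trans (Multiset.single_le_sum (fun x _ => Nat.zero_le x) y hmem) hsum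
    have hcn : c < n + 1 := by
      rcases Nat.eq_zero_or_pos c with h0 | hpos
      · omega
      · have : c ≤ m * c := Nat.le_mul_of_pos_left _ hm
        omega
    exact ⟨⟨c, hcn⟩, by simp; rw [Nat.mul_comm] at hc; omega⟩

/-! ### copartitions as pairs of multiplicity functions -/

abbrev DD (n : ℕ) : Type := (Fin (n+1) → Fin (n+1)) × (Fin (n+1) → Fin (n+1))

def wtp (n a b m : ℕ) (p : DD n) : ℕ :=
  (gam n a m p.1).sum + (gam n b m p.2).sum + m * sg n p.1 * sg n p.2

def Phi (n a b m : ℕ) (p : DD n) : Multiset ℕ × Multiset ℕ × Multiset ℕ :=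
  (gam n a m p.1, Multiset.replicate (sg n p.2) (m * sg n p.1), gam n b m p.2)

lemma Phi_mem (n a b m : ℕ) (ha : 0 < a) (hb : 0 < b) (p : DD n) :
    Phi n a b m p ∈ cpSet a b m (wtp n a b m p) := by
  refine ⟨⟨mem_gam_cond n a m ha p.1, mem_gam_cond n b m hb p.2, ?_⟩, ?_⟩
  · rw [Phi]; simp only; rw [card_gam, card_gam]
  · rw [Phi, wtp]; simp only
    rw [Multiset.sum_replicate, smul_eq_mul]
    ring

lemma Phi_injOn (n a b m : ℕ) (hm : 0 < m) : Function.Injective (Phi n a b m) := by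
  intro p q h
  rw [Phi, Phi, Prod.mk.injEq, Prod.mk.injEq] at h
  exact Prod.ext (gam_inj n a m hm h.1) (gam_inj n b m hm h.2.2)

lemma cp_eq_image (n a b m k : ℕ) (ha : 0 < a) (hb : 0 < b) (hm : 0 < m) (hk : k ≤ n)
    (Q : ℕ → Prop) [DecidablePred Q] :
    {t ∈ cpSet a b m k | Q (Multiset.card t.1)} =
      ↑(((Finset.univ : Finset (DD n)).filter
          (fun p => wtp n a b m p = k ∧ Q (sg n p.1))).image (Phi n a b m)) := by
  classical
  ext t
  simp only [Set.mem_setOf_eq, Finset.coe_image, Set.mem_image, Finset.mem_coe,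
    Finset.mem_filter, Finset.mem_univ, true_and]
  constructor
  · rintro ⟨⟨⟨hγ, hσ, hρ⟩, hsum⟩, hQ⟩
    obtain ⟨γ, ρ, σ⟩ := t
    simp only at hγ hσ hρ hsum hQ ⊢
    have hγs : γ.sum ≤ n := by omega
    have hσs : σ.sum ≤ n := by omega
    set f := finv n a m γ with hf
    set g := finv n b m σ with hg
    have hγf : gam n a m f = γ := gam_finv n a m ha hm γ hγ hγs
    have hσg : gam n b m g = σ := gam_finv n b m hb hm σ hσ hσs
    have hcf : sg n f = Multiset.card γ := by rw [← hγf, card_gam]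
    have hcg : sg n g = Multiset.card σ := by rw [← hσg, card_gam]
    refine ⟨(f, g), ⟨?_, ?_⟩, ?_⟩
    · rw [wtp]; simp only
      rw [hγf, hσg, hcf, hcg]
      rw [hρ] at hsum
      rw [Multiset.sum_replicate, smul_eq_mul] at hsum
      have hring : m * Multiset.card γ * Multiset.card σ
          = Multiset.card σ * (m * Multiset.card γ) := by ring
      linarith
    · rw [hcf]; exact hQ
    · rw [Phi]; simp only
      rw [hγf, hσg, hcf, hcg, ← hρ]
  · rintro ⟨p, ⟨hw, hQ⟩, rfl⟩
    have := Phi_mem n a b m ha hb p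
    rw [hw] at this
    refine ⟨this, ?_⟩
    rw [Phi]; simp only
    rw [card_gam]
    exact hQ

lemma cp_card (n a b m k : ℕ) (ha : 0 < a) (hb : 0 < b) (hm : 0 < m) (hk : k ≤ n)
    (Q : ℕ → Prop) [DecidablePred Q] :
    {t ∈ cpSet a b m k | Q (Multiset.card t.1)}.ncard =
      (((Finset.univ : Finset (DD n)).filter
          (fun p => wtp n a b m p = k ∧ Q (sg n p.1)))).card := by
  rw [cp_eq_image n a b m k ha hb hm hk Q, Set.ncard_coe_finset,
    Finset.card_image_of_injOn (Function.Injective.injOn (Phi_injOn n a b m hm))]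

lemma diff_eq_sum (n a b m k : ℕ) (ha : 0 < a) (hb : 0 < b) (hm : 0 < m) (hk : k ≤ n) :
    (cpEven a b m k : ℤ) - (cpOdd a b m k : ℤ) =
      ∑ p ∈ (Finset.univ : Finset (DD n)).filter (fun p => wtp n a b m p = k),
        (-1 : ℤ) ^ (sg n p.1) := by
  classical
  have he : cpEven a b m k = (((Finset.univ : Finset (DD n)).filter
      (fun p => wtp n a b m p = k ∧ Even (sg n p.1)))).card :=
    cp_card n a b m k ha hb hm hk Even
  have ho : cpOdd a b m k = (((Finset.univ : Finset (DD n)).filter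
      (fun p => wtp n a b m p = k ∧ Odd (sg n p.1)))).card :=
    cp_card n a b m k ha hb hm hk Odd
  have split := Finset.sum_filter_add_sum_filter_not
    ((Finset.univ : Finset (DD n)).filter (fun p => wtp n a b m p = k))
    (fun p => Even (sg n p.1)) (fun p => (-1 : ℤ) ^ (sg n p.1))
  rw [← split]
  have e1 : ∑ p ∈ ((Finset.univ : Finset (DD n)).filter (fun p => wtp n a b m p = k)).filter
      (fun p => Even (sg n p.1)), (-1:ℤ) ^ (sg n p.1) =
      (((Finset.univ : Finset (DD n)).filter (fun p => wtp n a b m p = k ∧ Even (sg n p.1)))).card := by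
    rw [Finset.filter_filter]
    rw [Finset.sum_congr rfl (fun p hp => (Finset.mem_filter.1 hp).2.2.neg_one_pow)]
    simp
  have e2 : ∑ p ∈ ((Finset.univ : Finset (DD n)).filter (fun p => wtp n a b m p = k)).filter
      (fun p => ¬ Even (sg n p.1)), (-1:ℤ) ^ (sg n p.1) =
      -(((Finset.univ : Finset (DD n)).filter (fun p => wtp n a b m p = k ∧ Odd (sg n p.1)))).card := by
    rw [Finset.filter_filter]
    have : ∀ p ∈ (Finset.univ : Finset (DD n)).filter (fun p => wtp n a b m p = k ∧ ¬ Even (sg n p.1)),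
        (-1:ℤ) ^ (sg n p.1) = -1 := by
      intro p hp
      exact (Nat.not_even_iff_odd.1 (Finset.mem_filter.1 hp).2.2).neg_one_pow
    rw [Finset.sum_congr rfl this, Finset.sum_const, nsmul_eq_mul, mul_neg_one]
    congr 2
    apply congrArg
    apply Finset.filter_congr
    intro p _
    simp [Nat.not_even_iff_odd]
  rw [e1, e2, he, ho]
  push_cast
  ring

/-! ### assembly -/

lemma fiber_sum {ι : Type*} [Fintype ι] [DecidableEq ι] (n : ℕ) (F : ι → SQ n) (w : ι → ℕ)
    (hvanish : ∀ p : ι, n + 1 ≤ w p → F p = 0) :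
    ∑ k ∈ range (n+1), ∑ p ∈ univ.filter (fun p => w p = k), F p = ∑ p, F p := by
  classical
  have h2 : ∑ k ∈ (range (n+1)) ∪ Finset.image w univ, ∑ p ∈ univ.filter (fun p => w p = k), F p
      = ∑ p, F p :=
    Finset.sum_fiberwise_of_maps_to
      (fun p _ => Finset.mem_union_right _ (Finset.mem_image_of_mem w (mem_univ p))) F
  rw [← h2]
  apply Finset.sum_subset Finset.subset_union_left
  intro k _ hk
  apply Finset.sum_eq_zero
  intro p hp
  rw [mem_filter] at hp
  apply hvanish
  rw [hp.2]
  exact le_of_not_gt (fun h => hk (Finset.mem_range.2 h))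

lemma qmk_cpDiff (n a b m : ℕ) (ha : 0 < a) (hb : 0 < b) (hm : 0 < m) :
    qmk n (cpDiffPoly a b m n)
      = ∑ p : DD n, (-1 : SQ n) ^ (sg n p.1) * xq n ^ (wtp n a b m p) := by
  classical
  rw [cpDiffPoly, map_sum]
  have step1 : ∀ k ∈ range (n+1),
      qmk n (Polynomial.C ((cpEven a b m k : ℤ) - (cpOdd a b m k : ℤ)) * Polynomial.X ^ k)
        = ∑ p ∈ (univ : Finset (DD n)).filter (fun p => wtp n a b m p = k),
            (-1 : SQ n) ^ (sg n p.1) * xq n ^ (wtp n a b m p) := by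
    intro k hk
    rw [map_mul, map_pow]
    have : qmk n (Polynomial.C ((cpEven a b m k : ℤ) - (cpOdd a b m k : ℤ)))
        = (((cpEven a b m k : ℤ) - (cpOdd a b m k : ℤ) : ℤ) : SQ n) := by
      rw [eq_intCast (Polynomial.C : ℤ →+* Polynomial ℤ), map_intCast]
    rw [this, diff_eq_sum n a b m k ha hb hm (by simpa using Nat.lt_succ_iff.1 (mem_range.1 hk))]
    push_cast
    rw [Finset.sum_mul]
    apply Finset.sum_congr rfl
    intro p hp
    rw [(Finset.mem_filter.1 hp).2]
    rfl
  rw [Finset.sum_congr rfl step1]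
  apply fiber_sum n _ (wtp n a b m)
  intro p hp
  rw [xq_pow_eq_zero n hp, mul_zero]

lemma bsum_eq (n b m : ℕ) (g : Fin (n+1) → Fin (n+1)) :
    (gam n b m g).sum = b * sg n g + m * wt0 n g := by
  rw [sum_gam, sg, wt0, Finset.mul_sum, Finset.mul_sum, ← Finset.sum_add_distrib]
  apply Finset.sum_congr rfl
  intro j _
  ring

lemma bsum_large (n b m : ℕ) (hb : 0 < b) (g : Fin (n+1) → Fin (n+1)) :
    sg n g ≤ (gam n b m g).sum := by
  rw [← card_gam n b m g]
  exact card_le_sum_of_pos (fun x hx => le_trans hb (mem_gam_cond n b m hb g x hx).1)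

lemma inner_f (n a b m : ℕ) (g : Fin (n+1) → Fin (n+1)) :
    ∑ f : Fin (n+1) → Fin (n+1), (-1 : SQ n) ^ (sg n f) * xq n ^ (wtp n a b m (f, g))
      = xq n ^ ((gam n b m g).sum) * ∏ j ∈ range (n+1), U n (a + j*m + m * sg n g) := by
  classical
  have term_eq : ∀ f : Fin (n+1) → Fin (n+1),
      (-1 : SQ n) ^ (sg n f) * xq n ^ (wtp n a b m (f, g))
        = xq n ^ ((gam n b m g).sum)
          * ∏ j : Fin (n+1), (-(xq n ^ (a + (j:ℕ)*m + m * sg n g))) ^ (f j : ℕ) := by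
    intro f
    have hw : wtp n a b m (f, g) = (gam n b m g).sum
        + ∑ j : Fin (n+1), (f j : ℕ) * (a + (j:ℕ)*m + m * sg n g) := by
      rw [wtp]
      simp only
      rw [sum_gam n a m f]
      have e : ∑ j : Fin (n+1), (f j:ℕ) * (a + (j:ℕ)*m + m * sg n g)
          = (∑ j : Fin (n+1), (f j:ℕ)*(a+(j:ℕ)*m)) + (∑ j : Fin (n+1), (f j:ℕ)) * (m * sg n g) := by
        rw [Finset.sum_mul, ← Finset.sum_add_distrib]
        exact Finset.sum_congr rfl (fun j _ => by ring)
      rw [e, sg]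
      ring
    rw [hw]
    rw [pow_add (xq n) ((gam n b m g).sum) (∑ j : Fin (n+1), (f j : ℕ) * (a + (j:ℕ)*m + m * sg n g))]
    have e2 : xq n ^ (∑ j : Fin (n+1), (f j : ℕ) * (a + (j:ℕ)*m + m * sg n g))
        = ∏ j : Fin (n+1), (xq n ^ (a + (j:ℕ)*m + m * sg n g)) ^ (f j : ℕ) := by
      rw [← Finset.prod_pow_eq_pow_sum]
      exact Finset.prod_congr rfl (fun j _ => pow_mul' (xq n) _ _)
    have e3 : (-1 : SQ n) ^ (sg n f) = ∏ j : Fin (n+1), (-1 : SQ n) ^ (f j : ℕ) := by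
      rw [sg, ← Finset.prod_pow_eq_pow_sum]
    rw [e2, e3]
    have hcomb : (∏ j : Fin (n+1), ((-1 : SQ n)) ^ (f j:ℕ))
          * (∏ j : Fin (n+1), (xq n ^ (a + (j:ℕ)*m + m * sg n g)) ^ (f j:ℕ))
        = ∏ j : Fin (n+1), (-(xq n ^ (a + (j:ℕ)*m + m * sg n g))) ^ (f j:ℕ) := by
      rw [← Finset.prod_mul_distrib]
      exact Finset.prod_congr rfl (fun j _ => by rw [← mul_pow]; rw [show (-1 : SQ n) * xq n ^ (a + (j:ℕ)*m + m * sg n g) = -(xq n ^ (a + (j:ℕ)*m + m * sg n g)) by ring])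
    linear_combination xq n ^ (gam n b m g).sum * hcomb
  rw [Finset.sum_congr rfl (fun f _ => term_eq f), ← Finset.mul_sum]
  congr 1
  have hps := Finset.prod_univ_sum (fun _ : Fin (n+1) => (univ : Finset (Fin (n+1))))
    (fun j k => (-(xq n ^ (a + (j:ℕ)*m + m * sg n g))) ^ (k : ℕ))
  rw [Fintype.piFinset_univ] at hps
  rw [← hps]
  rw [← Fin.prod_univ_eq_prod_range (fun j => U n (a + j*m + m * sg n g)) (n+1)]
  apply Finset.prod_congr rfl
  intro j _
  rw [U, ← Fin.sum_univ_eq_sum_range (fun k => (-(xq n ^ (a + (j:ℕ)*m + m * sg n g))) ^ k) (n+1)]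

lemma sum_g_eq_T (n a b m : ℕ) (hb : 0 < b) :
    ∑ g : Fin (n+1) → Fin (n+1), xq n ^ ((gam n b m g).sum) * Ppart n a m (sg n g)
      = Tpart n a b m := by
  classical
  have hvan : ∀ g : Fin (n+1) → Fin (n+1), n + 1 ≤ sg n g →
      xq n ^ ((gam n b m g).sum) * Ppart n a m (sg n g) = 0 := by
    intro g hg
    rw [xq_pow_eq_zero n (le_trans hg (bsum_large n b m hb g)), zero_mul]
  rw [Tpart, ← fiber_sum n (fun g : Fin (n+1) → Fin (n+1) =>
    xq n ^ ((gam n b m g).sum) * Ppart n a m (sg n g)) (sg n) hvan]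
  apply Finset.sum_congr rfl
  intro s _
  have e : ∀ g ∈ (univ : Finset (Fin (n+1) → Fin (n+1))).filter (fun g => sg n g = s),
      xq n ^ ((gam n b m g).sum) * Ppart n a m (sg n g)
        = (xq n ^ (b*s) * Ppart n a m s) * xq n ^ (m * wt0 n g) := by
    intro g hg
    have hs : sg n g = s := (Finset.mem_filter.1 hg).2
    rw [bsum_eq, hs]
    linear_combination Ppart n a m s * pow_add (xq n) (b*s) (m * wt0 n g)
  rw [Finset.sum_congr rfl e, ← Finset.mul_sum, ← hpart]
  rw [Apart]
  ring

lemma main_qmk (n a b m : ℕ) (ha : 0 < a) (hb : 0 < b) (hm : 0 < m) :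
    qmk n (cpDiffPoly a b m n * denomProdZ a b m n) = qmk n (numerProdZ a b m n) := by
  classical
  have hden : qmk n (denomProdZ a b m n)
      = (∏ j ∈ range (n+1), (1 + xq n ^ (a + j*m))) * (∏ j ∈ range (n+1), (1 - xq n ^ (b + j*m))) := by
    rw [denomProdZ, map_prod, ← Finset.prod_mul_distrib]
    apply Finset.prod_congr rfl
    intro j _
    rw [map_mul, map_add, map_sub, map_one, map_pow, map_pow]
    rfl
  have hnum : qmk n (numerProdZ a b m n) = ∏ j ∈ range (n+1), (1 + xq n ^ (a + b + j*m)) := by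
    rw [numerProdZ, map_prod]
    apply Finset.prod_congr rfl
    intro j _
    rw [map_add, map_one, map_pow]
    rfl
  rw [map_mul, hden, hnum, qmk_cpDiff n a b m ha hb hm]
  rw [Fintype.sum_prod_type]
  rw [Finset.sum_comm]
  rw [Finset.sum_congr rfl (fun g _ => inner_f n a b m g)]
  rw [Finset.sum_mul]
  have per_g : ∀ g : Fin (n+1) → Fin (n+1),
      (xq n ^ ((gam n b m g).sum) * ∏ j ∈ range (n+1), U n (a + j*m + m * sg n g))
          * ((∏ j ∈ range (n+1), (1 + xq n ^ (a + j*m))) * (∏ j ∈ range (n+1), (1 - xq n ^ (b + j*m))))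
        = (xq n ^ ((gam n b m g).sum) * Ppart n a m (sg n g)) * (∏ j ∈ range (n+1), (1 - xq n ^ (b + j*m))) := by
    intro g
    by_cases hs : sg n g ≤ n
    · rw [← Pu n a m ha hm (sg n g) hs]
      ring
    · have : xq n ^ ((gam n b m g).sum) = 0 :=
        xq_pow_eq_zero n (le_trans (by omega) (bsum_large n b m hb g))
      rw [this]
      ring
  rw [Finset.sum_congr rfl (fun g _ => per_g g), ← Finset.sum_mul, sum_g_eq_T n a b m hb]
  rw [mul_comm (Tpart n a b m)]
  exact B_mul_T n a b m hm hb

theorem stmt3 (a b m : ℕ) (ha : 0 < a) (hb : 0 < b) (hm : 0 < m) (n : ℕ) :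
    ∀ k ≤ n, (cpDiffPoly a b m n * denomProdZ a b m n).coeff k = (numerProdZ a b m n).coeff k := by
  intro k hk
  have hq : qmk n (cpDiffPoly a b m n * denomProdZ a b m n - numerProdZ a b m n) = 0 := by
    rw [map_sub, main_qmk n a b m ha hb hm, sub_self]
  have hdvd : (Polynomial.X : Polynomial ℤ) ^ (n+1)
      ∣ (cpDiffPoly a b m n * denomProdZ a b m n - numerProdZ a b m n) :=
    Ideal.mem_span_singleton.1 (Ideal.Quotient.eq_zero_iff_mem.1 hq)
  obtain ⟨c, hc⟩ := hdvd
  have hcoeff := congrArg (fun q => Polynomial.coeff q k) hc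
  rw [Polynomial.coeff_sub] at hcoeff
  rw [mul_comm ((Polynomial.X : Polynomial ℤ)^(n+1)) c, Polynomial.coeff_mul_X_pow'] at hcoeff
  rw [if_neg (by omega)] at hcoeff
  omega
end
end

section
/- For every nonnegative integer n, if (γ̃,σ̃) ∈ CP'_o(n), then f(γ̃,σ̃) ∈ CP'_e(n). -/
/-- `ℓ(γ)`: the largest part of `γ` (0 if `γ` is empty). -/
def lgPart (γ : Multiset ℕ) : ℕ := γ.sup

/-- `ℓ_e(γ)`: the largest even part of `γ` (0 if `γ` has no even part). -/
def lgEvenPart (γ : Multiset ℕ) : ℕ := (γ.filter (fun x => x % 2 = 0)).sup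

/-- `s(σ)`: the smallest part of `σ` (0 if `σ` is empty). -/
noncomputable def smPart (σ : Multiset ℕ) : ℕ := sInf {x | x ∈ σ}

/-- `o(γ)`: the unique part size of `γ` occurring an odd number of times
(0 if no part size occurs an odd number of times). -/
noncomputable def oddPart (γ : Multiset ℕ) : ℕ := sInf {x | x ∈ γ ∧ Odd (γ.count x)}

/-- `CP'(n)`: pairs `(γ̃, σ̃)` of partitions with `|γ̃| + |σ̃| = n` such that every part of
`σ̃` is odd, if `σ̃` is nonempty then `s(σ̃) ≥ ℓ(γ̃) + ℓ_e(γ̃)`, at most one part size of `γ̃`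
occurs an odd number of times, and any such part size equals `ℓ(γ̃)` or `ℓ_e(γ̃)`. -/
def CPgen (n : ℕ) : Set (Multiset ℕ × Multiset ℕ) :=
  {p | (∀ x ∈ p.1, 0 < x) ∧ (∀ x ∈ p.2, Odd x) ∧ p.1.sum + p.2.sum = n ∧
       (p.2 ≠ 0 → lgPart p.1 + lgEvenPart p.1 ≤ smPart p.2) ∧
       (∀ x ∈ p.1, ∀ y ∈ p.1, Odd (p.1.count x) → Odd (p.1.count y) → x = y) ∧
       (∀ x ∈ p.1, Odd (p.1.count x) → x = lgPart p.1 ∨ x = lgEvenPart p.1)}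

/-- `CP'_o(n)`: pairs in `CP'(n)` for which `ℓ(γ̃)` is odd and occurs an odd number of
times in `γ̃`. -/
def CPgenOdd (n : ℕ) : Set (Multiset ℕ × Multiset ℕ) :=
  {p ∈ CPgen n | Odd (lgPart p.1) ∧ Odd (p.1.count (lgPart p.1))}

/-- `CP'_e(n)`: pairs in `CP'(n)` for which every part size of `γ̃` occurring an odd number
of times equals `ℓ_e(γ̃)`. -/
def CPgenEven (n : ℕ) : Set (Multiset ℕ × Multiset ℕ) :=
  {p ∈ CPgen n | ∀ x ∈ p.1, Odd (p.1.count x) → x = lgEvenPart p.1}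

/-- The map `f`: remove one copy of `ℓ(γ̃)` from `γ̃` and, if `ℓ_e(γ̃) > 0`, also one copy of
`ℓ_e(γ̃)`; add one part of size `ℓ(γ̃) + ℓ_e(γ̃)` to `σ̃`. -/
def fMap (p : Multiset ℕ × Multiset ℕ) : Multiset ℕ × Multiset ℕ :=
  (if 0 < lgEvenPart p.1 then (p.1.erase (lgPart p.1)).erase (lgEvenPart p.1)
   else p.1.erase (lgPart p.1),
   (lgPart p.1 + lgEvenPart p.1) ::ₘ p.2)

/-- Add a part of size `x` to `μ`, discarding it if it has size 0. -/
def addPos (x : ℕ) (μ : Multiset ℕ) : Multiset ℕ := if 0 < x then x ::ₘ μ else μ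

/-- The map `g`: remove one copy of `s(σ̃)` from `σ̃`; add one part of size `o(γ̃)` and one
part of size `s(σ̃) − o(γ̃)` to `γ̃`, parts of size 0 being discarded. -/
noncomputable def gMap (p : Multiset ℕ × Multiset ℕ) : Multiset ℕ × Multiset ℕ :=
  (addPos (oddPart p.1) (addPos (smPart p.2 - oddPart p.1) p.1), p.2.erase (smPart p.2))

lemma sup_mem_of_ne_zero {s : Multiset ℕ} (h : s.sup ≠ 0) : s.sup ∈ s := by
  induction s using Multiset.induction_on with
  | empty => simp at h
  | cons a s ih =>
    rw [Multiset.sup_cons] at h ⊢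
    rcases le_total a s.sup with hle | hle
    · rw [sup_eq_right.mpr hle] at h ⊢
      exact Multiset.mem_cons_of_mem (ih h)
    · rw [sup_eq_left.mpr hle]
      exact Multiset.mem_cons_self _ _

theorem stmt4 (n : ℕ) (p : Multiset ℕ × Multiset ℕ) (hp : p ∈ CPgenOdd n) :
    fMap p ∈ CPgenEven n := by
  obtain ⟨⟨hpos, hodd, hsum, hsm, huniq, -⟩, hLodd, hLcnt⟩ := hp
  set L := lgPart p.1 with hLdef
  set E := lgEvenPart p.1 with hEdef
  have hLmem : L ∈ p.1 := by
    rw [← Multiset.count_pos]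
    rcases hLcnt with ⟨k, hk⟩; omega
  have hEeven : Even E := by
    by_cases hE0 : E = 0
    · simp [hE0]
    · have h1 := sup_mem_of_ne_zero (s := p.1.filter (fun x => x % 2 = 0)) hE0
      have h2 := Multiset.of_mem_filter h1
      exact Nat.even_iff.mpr h2
  have hLE : L ≠ E := fun h => (Nat.not_odd_iff_even.mpr (h ▸ hEeven)) hLodd
  have hEmem : E ≠ 0 → E ∈ p.1 := fun hE0 =>
    Multiset.mem_of_mem_filter (sup_mem_of_ne_zero (s := p.1.filter (fun x => x % 2 = 0)) hE0)
  have honly : ∀ x ∈ p.1, Odd (p.1.count x) → x = L := fun x hx hox =>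
    huniq x hx L hLmem hox hLcnt
  set γ' := (fMap p).1 with hγ'def
  have hγle : γ' ≤ p.1 := by
    rw [hγ'def, fMap]
    split_ifs
    · exact le_trans (Multiset.erase_le _ _) (Multiset.erase_le _ _)
    · exact Multiset.erase_le _ _
  have hγmem : ∀ x ∈ γ', x ∈ p.1 := fun x hx => Multiset.mem_of_le hγle hx
  have hγsup : lgPart γ' ≤ L :=
    Multiset.sup_le.mpr fun b hb => Multiset.le_sup (hγmem b hb)
  have hγesup : lgEvenPart γ' ≤ E := by
    refine Multiset.sup_le.mpr fun b hb => ?_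
    exact Multiset.le_sup (Multiset.mem_filter.mpr
      ⟨hγmem b (Multiset.mem_of_mem_filter hb), (Multiset.mem_filter.mp hb).2⟩)
  have hkey : ∀ x ∈ γ', Odd (γ'.count x) → x = lgEvenPart γ' := by
    intro x hx hox
    by_cases hE : 0 < E
    · have h1 : γ' = (p.1.erase L).erase E := by rw [hγ'def, fMap, if_pos hE]
      rw [h1] at hox
      have hxm : x ∈ p.1 := hγmem x hx
      have hxE : x = E := by
        by_contra hxE
        have hxL : x ≠ L := fun hxl => by
          rw [hxl, Multiset.count_erase_of_ne hLE, Multiset.count_erase_self] at hox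
          exact (Nat.not_odd_iff_even.mpr (Nat.Odd.sub_odd hLcnt odd_one)) hox
        rw [Multiset.count_erase_of_ne hxE, Multiset.count_erase_of_ne hxL] at hox
        exact hxL (honly x hxm hox)
      have hle : x ≤ lgEvenPart γ' :=
        Multiset.le_sup (Multiset.mem_filter.mpr
          ⟨hx, by rw [hxE]; exact Nat.even_iff.mp hEeven⟩)
      exact le_antisymm hle (hxE ▸ hγesup)
    · have h1 : γ' = p.1.erase L := by rw [hγ'def, fMap, if_neg hE]
      rw [h1] at hox
      exfalso
      by_cases hxL : x = L
      · rw [hxL, Multiset.count_erase_self] at hox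
        exact (Nat.not_odd_iff_even.mpr (Nat.Odd.sub_odd hLcnt odd_one)) hox
      · rw [Multiset.count_erase_of_ne hxL] at hox
        exact hxL (honly x (hγmem x hx) hox)
  have hsum' : γ'.sum + ((L + E) ::ₘ p.2).sum = n := by
    rw [Multiset.sum_cons]
    by_cases hE : 0 < E
    · have h1 : γ' = (p.1.erase L).erase E := by rw [hγ'def, fMap, if_pos hE]
      have hEmem' : E ∈ p.1.erase L :=
        (Multiset.mem_erase_of_ne (Ne.symm hLE)).mpr (hEmem hE.ne')
      have e1 : L ::ₘ p.1.erase L = p.1 := Multiset.cons_erase hLmem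
      have e2 : E ::ₘ (p.1.erase L).erase E = p.1.erase L := Multiset.cons_erase hEmem'
      have s1 : p.1.sum = L + (p.1.erase L).sum := by
        conv_lhs => rw [← e1]
        rw [Multiset.sum_cons]
      have s2 : (p.1.erase L).sum = E + γ'.sum := by
        rw [h1]
        conv_lhs => rw [← e2]
        rw [Multiset.sum_cons]
      omega
    · have h1 : γ' = p.1.erase L := by rw [hγ'def, fMap, if_neg hE]
      have e1 : L ::ₘ p.1.erase L = p.1 := Multiset.cons_erase hLmem
      have s1 : p.1.sum = L + γ'.sum := by
        rw [h1]
        conv_lhs => rw [← e1]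
        rw [Multiset.sum_cons]
      omega
  have hsm' : lgPart γ' + lgEvenPart γ' ≤ smPart ((L + E) ::ₘ p.2) := by
    refine le_trans (add_le_add hγsup hγesup) ?_
    refine le_csInf ⟨L + E, Multiset.mem_cons_self _ _⟩ fun y hy => ?_
    rcases Multiset.mem_cons.mp hy with rfl | hy
    · exact le_rfl
    · have hne : p.2 ≠ 0 := fun h => by simp [h] at hy
      exact le_trans (hsm hne) (Nat.sInf_le hy)
  refine ⟨⟨fun x hx => hpos x (hγmem x hx), ?_, hsum', fun _ => hsm', ?_, ?_⟩, hkey⟩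
  · intro x hx
    rcases Multiset.mem_cons.mp hx with rfl | hx
    · exact Odd.add_even hLodd hEeven
    · exact hodd x hx
  · intro x hx y hy hox hoy
    rw [hkey x hx hox, hkey y hy hoy]
  · intro x hx hox
    exact Or.inr (hkey x hx hox)
end

section
/- For every nonnegative integer n, if (γ̃,σ̃) ∈ CP'_o(n) with σ̃ nonempty and s(σ̃) < 2ℓ(γ̃), then g(γ̃,σ̃) ∈ CP'_e(n) and, writing g(γ̃,σ̃) = (γ̃_g,σ̃_g), one has ℓ(γ̃_g) > ℓ_e(γ̃_g). -/
theorem stmt5 (n : ℕ) (p : Multiset ℕ × Multiset ℕ) (hp : p ∈ CPgenOdd n)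
    (hσ : p.2 ≠ 0) (hs : smPart p.2 < 2 * lgPart p.1) :
    gMap p ∈ CPgenEven n ∧ lgEvenPart (gMap p).1 < lgPart (gMap p).1 := by
  obtain ⟨γ, σ⟩ := p
  obtain ⟨⟨hpos, hodd, hsum, hineq, huniq, heq⟩, hlodd, hlcnt⟩ := hp
  simp only at hpos hodd hsum hineq huniq heq hlodd hlcnt hσ hs ⊢
  have hσne : {x | x ∈ σ}.Nonempty := by
    obtain ⟨a, ha⟩ := Multiset.exists_mem_of_ne_zero hσ
    exact ⟨a, ha⟩
  have hsmem : smPart σ ∈ σ := Nat.sInf_mem hσne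
  have hsodd : Odd (smPart σ) := hodd _ hsmem
  have hcntpos : 0 < γ.count (lgPart γ) := by rcases hlcnt with ⟨k, hk⟩; omega
  have hℓmem : lgPart γ ∈ γ := Multiset.count_pos.mp hcntpos
  have hop : oddPart γ = lgPart γ := by
    have hne : {x | x ∈ γ ∧ Odd (γ.count x)}.Nonempty := ⟨_, hℓmem, hlcnt⟩
    have hm := Nat.sInf_mem hne
    exact huniq _ hm.1 _ hℓmem hm.2 hlcnt
  have hle : ∀ x ∈ γ, x ≤ lgPart γ := fun x hx => Multiset.le_sup hx
  have hsge : lgPart γ + lgEvenPart γ ≤ smPart σ := hineq hσ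
  have hℓpos : 0 < lgPart γ := hlodd.pos
  have hdeven : Even (smPart σ - lgPart γ) := Nat.Odd.sub_odd hsodd hlodd
  have hdlt : smPart σ - lgPart γ < lgPart γ := by omega
  have hed : lgEvenPart γ ≤ smPart σ - lgPart γ := by omega
  have hsd : lgPart γ + (smPart σ - lgPart γ) = smPart σ := by omega
  have hσsum : σ.sum = smPart σ + (σ.erase (smPart σ)).sum := by
    conv_lhs => rw [← Multiset.cons_erase hsmem]
    rw [Multiset.sum_cons]
  have hsmE : σ.erase (smPart σ) ≠ 0 → smPart σ ≤ smPart (σ.erase (smPart σ)) := by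
    intro hne
    obtain ⟨a, ha⟩ := Multiset.exists_mem_of_ne_zero hne
    have hene : {x | x ∈ σ.erase (smPart σ)}.Nonempty := ⟨a, ha⟩
    have hmem : smPart (σ.erase (smPart σ)) ∈ σ.erase (smPart σ) := Nat.sInf_mem hene
    exact Nat.sInf_le (Multiset.mem_of_mem_erase hmem)
  have hℓne2 : ¬ (lgPart γ % 2 = 0) := by
    rcases hlodd with ⟨k, hk⟩; omega
  rcases Nat.eq_zero_or_pos (smPart σ - lgPart γ) with hd0 | hdpos
  · -- d = 0 : γ_g = ℓ ::ₘ γ, lgEvenPart γ = 0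
    have he0 : lgEvenPart γ = 0 := by omega
    have hg : gMap (γ, σ) = (lgPart γ ::ₘ γ, σ.erase (smPart σ)) := by
      simp [gMap, hop, addPos, hd0, hℓpos]
    rw [hg]
    have hA : lgPart (lgPart γ ::ₘ γ) = lgPart γ := by
      rw [lgPart, Multiset.sup_cons]
      exact sup_eq_left.mpr le_rfl
    have hB : lgEvenPart (lgPart γ ::ₘ γ) = 0 := by
      rw [lgEvenPart, Multiset.filter_cons_of_neg (p := fun x => x % 2 = 0) _ hℓne2]
      exact he0
    have hC : ∀ x ∈ (lgPart γ ::ₘ γ), Odd ((lgPart γ ::ₘ γ).count x) → False := by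
      intro x hx hcx
      rcases eq_or_ne x (lgPart γ) with rfl | hxℓ
      · rw [Multiset.count_cons_self] at hcx
        rcases hlcnt with ⟨k, hk⟩; rcases hcx with ⟨m, hm⟩; omega
      · rw [Multiset.count_cons_of_ne hxℓ] at hcx
        have hxm : x ∈ γ := Multiset.count_pos.mp hcx.pos
        exact hxℓ (huniq x hxm _ hℓmem hcx hlcnt)
    refine ⟨⟨⟨?_, ?_, ?_, ?_, ?_, ?_⟩, ?_⟩, ?_⟩
    · intro x hx
      rcases Multiset.mem_cons.mp hx with rfl | hx
      · exact hℓpos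
      · exact hpos x hx
    · exact fun x hx => hodd x (Multiset.mem_of_mem_erase hx)
    · simp only [Multiset.sum_cons]
      omega
    · intro hne
      simp only [hA, hB]
      have := hsmE hne
      omega
    · intro x hx y hy hcx hcy
      exact absurd hcx (fun h => hC x hx h)
    · intro x hx hcx
      exact absurd hcx (fun h => hC x hx h)
    · intro x hx hcx
      exact absurd hcx (fun h => hC x hx h)
    · rw [hA, hB]; exact hℓpos
  · -- d > 0 : γ_g = ℓ ::ₘ d ::ₘ γ
    set d := smPart σ - lgPart γ with hddef
    have hg : gMap (γ, σ) = (lgPart γ ::ₘ d ::ₘ γ, σ.erase (smPart σ)) := by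
      simp [gMap, hop, addPos, hdpos, hℓpos, show lgPart γ < smPart σ by omega, hddef]
    rw [hg]
    have hd2 : d % 2 = 0 := by rcases hdeven with ⟨k, hk⟩; omega
    have hA : lgPart (lgPart γ ::ₘ d ::ₘ γ) = lgPart γ := by
      rw [lgPart, Multiset.sup_cons, Multiset.sup_cons]
      exact sup_eq_left.mpr (sup_le hdlt.le le_rfl)
    have hB : lgEvenPart (lgPart γ ::ₘ d ::ₘ γ) = d := by
      rw [lgEvenPart, Multiset.filter_cons_of_neg (p := fun x => x % 2 = 0) _ hℓne2,
        Multiset.filter_cons_of_pos (p := fun x => x % 2 = 0) _ hd2, Multiset.sup_cons]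
      exact sup_eq_left.mpr hed
    have hℓd : lgPart γ ≠ d := by omega
    have hC : ∀ x ∈ (lgPart γ ::ₘ d ::ₘ γ), Odd ((lgPart γ ::ₘ d ::ₘ γ).count x) → x = d := by
      intro x hx hcx
      rcases eq_or_ne x (lgPart γ) with rfl | hxℓ
      · rw [Multiset.count_cons_self, Multiset.count_cons_of_ne hℓd] at hcx
        rcases hlcnt with ⟨k, hk⟩; rcases hcx with ⟨m, hm⟩; omega
      · rcases eq_or_ne x d with rfl | hxd
        · rfl
        · rw [Multiset.count_cons_of_ne hxℓ, Multiset.count_cons_of_ne hxd] at hcx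
          have hxm : x ∈ γ := Multiset.count_pos.mp hcx.pos
          exact absurd (huniq x hxm _ hℓmem hcx hlcnt) hxℓ
    refine ⟨⟨⟨?_, ?_, ?_, ?_, ?_, ?_⟩, ?_⟩, ?_⟩
    · intro x hx
      rcases Multiset.mem_cons.mp hx with rfl | hx
      · exact hℓpos
      rcases Multiset.mem_cons.mp hx with rfl | hx
      · exact hdpos
      · exact hpos x hx
    · exact fun x hx => hodd x (Multiset.mem_of_mem_erase hx)
    · simp only [Multiset.sum_cons]
      omega
    · intro hne
      simp only [hA, hB]
      have := hsmE hne
      omega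
    · intro x hx y hy hcx hcy
      rw [hC x hx hcx, hC y hy hcy]
    · intro x hx hcx
      right; rw [hB]; exact hC x hx hcx
    · intro x hx hcx
      rw [hB]; exact hC x hx hcx
    · rw [hA, hB]; exact hdlt
end

section
/- For every nonnegative integer n and every (γ̃,σ̃) ∈ CP'(n) with ℓ(γ̃) > ℓ_e(γ̃), one has g(f(γ̃,σ̃)) = (γ̃,σ̃). -/
lemma sInf_eq_of {S : Set ℕ} {a : ℕ} (h1 : a ∈ S) (h2 : ∀ x ∈ S, a ≤ x) :
    sInf S = a :=
  le_antisymm (Nat.sInf_le h1) (le_csInf ⟨a, h1⟩ h2)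

theorem stmt8 (n : ℕ) (p : Multiset ℕ × Multiset ℕ) (hp : p ∈ CPgen n)
    (hl : lgEvenPart p.1 < lgPart p.1) :
    gMap (fMap p) = p := by
  obtain ⟨γ, σ⟩ := p
  obtain ⟨hpos, hodds, hsum, hsm, huniq, hle⟩ := hp
  simp only at hpos hodds hsum hsm huniq hle hl ⊢
  set L := lgPart γ with hLdef
  set E := lgEvenPart γ with hEdef
  have hL0 : 0 < L := lt_of_le_of_lt (Nat.zero_le E) hl
  have hLmem : L ∈ γ := sup_mem_of_ne_zero (by exact hL0.ne')
  have hEL : E ≠ L := hl.ne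
  -- the second component of fMap (γ,σ)
  have key2 : smPart ((L + E) ::ₘ σ) = L + E := by
    apply sInf_eq_of
    · exact Multiset.mem_cons_self _ _
    · intro x hx
      rcases Multiset.mem_cons.mp hx with h | h
      · omega
      · have hne : σ ≠ 0 := by
          intro h0; rw [h0] at h; exact absurd h (Multiset.notMem_zero x)
        have h1 := hsm hne
        have h2 : sInf {y | y ∈ σ} ≤ x := Nat.sInf_le h
        exact le_trans h1 h2
  by_cases hE0 : 0 < E
  · -- E > 0 case
    have hEmem : E ∈ γ := by
      have := sup_mem_of_ne_zero (s := γ.filter (fun x => x % 2 = 0)) hE0.ne'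
      exact (Multiset.mem_filter.mp this).1
    set γ' := (γ.erase L).erase E with hγ'
    have hfm : fMap (γ, σ) = (γ', (L + E) ::ₘ σ) := by
      simp only [fMap, ← hEdef, ← hLdef, hγ', if_pos hE0]
    have hcL' : γ'.count L = γ.count L - 1 := by
      rw [hγ', Multiset.count_erase_of_ne hEL.symm, Multiset.count_erase_self]
    have hcE' : γ'.count E = γ.count E - 1 := by
      rw [hγ', Multiset.count_erase_self, Multiset.count_erase_of_ne hEL]
    have hcother : ∀ x, x ≠ L → x ≠ E → γ'.count x = γ.count x := by
      intro x h1 h2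
      rw [hγ', Multiset.count_erase_of_ne h2, Multiset.count_erase_of_ne h1]
    have hLc1 : 1 ≤ γ.count L := Multiset.one_le_count_iff_mem.mpr hLmem
    have hEc1 : 1 ≤ γ.count E := Multiset.one_le_count_iff_mem.mpr hEmem
    have hnotboth : ¬ (Odd (γ.count L) ∧ Odd (γ.count E)) := by
      rintro ⟨h1, h2⟩
      exact hEL (huniq E hEmem L hLmem h2 h1)
    have hγ'sub : ∀ x, x ∈ γ' → x ∈ γ := by
      intro x hx
      exact Multiset.mem_of_mem_erase (Multiset.mem_of_mem_erase hx)
    by_cases hcE : Odd (γ.count E)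
    · -- count E odd, count L even in γ; so in γ', L odd, E even
      have hcLe : ¬ Odd (γ.count L) := fun h => hnotboth ⟨h, hcE⟩
      rw [Nat.not_odd_iff_even] at hcLe
      have hLodd' : Odd (γ'.count L) := by
        rw [hcL']; rcases hcLe with ⟨k, hk⟩; rw [Nat.odd_iff]; omega
      have hLmem' : L ∈ γ' := by
        rw [← Multiset.one_le_count_iff_mem, hcL']
        rcases hcLe with ⟨k, hk⟩; omega
      have ho : oddPart γ' = L := by
        apply sInf_eq_of
        · exact ⟨hLmem', hLodd'⟩
        rintro x ⟨hx1, hx2⟩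
        by_cases hxL : x = L
        · omega
        by_cases hxE : x = E
        · exfalso
          rw [hxE, hcE'] at hx2
          rw [Nat.odd_iff] at hx2 hcE; omega
        · exfalso
          rw [hcother x hxL hxE] at hx2
          rcases hle x (hγ'sub x hx1) hx2 with h | h
          · exact hxL h
          · exact hxE h
      rw [hfm]
      simp only [gMap, key2, ho, Multiset.erase_cons_head]
      have hsub : L + E - L = E := by omega
      rw [hsub]
      have hEmem2 : E ∈ γ.erase L := by
        rw [← Multiset.one_le_count_iff_mem, Multiset.count_erase_of_ne hEL]
        exact hEc1
      simp only [addPos, if_pos hE0, if_pos hL0]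
      rw [hγ', Multiset.cons_erase hEmem2, Multiset.cons_erase hLmem]
    · -- count E even in γ; so in γ', E odd
      rw [Nat.not_odd_iff_even] at hcE
      have hEodd' : Odd (γ'.count E) := by
        rw [hcE']; rcases hcE with ⟨k, hk⟩; rw [Nat.odd_iff]; omega
      have hEmem' : E ∈ γ' := by
        rw [← Multiset.one_le_count_iff_mem, hcE']
        rcases hcE with ⟨k, hk⟩; omega
      have ho : oddPart γ' = E := by
        apply sInf_eq_of
        · exact ⟨hEmem', hEodd'⟩
        rintro x ⟨hx1, hx2⟩
        by_cases hxL : x = L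
        · omega
        by_cases hxE : x = E
        · omega
        · exfalso
          rw [hcother x hxL hxE] at hx2
          rcases hle x (hγ'sub x hx1) hx2 with h | h
          · exact hxL h
          · exact hxE h
      rw [hfm]
      simp only [gMap, key2, ho, Multiset.erase_cons_head]
      have hsub : L + E - E = L := by omega
      rw [hsub]
      have hLmem2 : L ∈ γ.erase E := by
        rw [← Multiset.one_le_count_iff_mem, Multiset.count_erase_of_ne hEL.symm]
        exact hLc1
      simp only [addPos, if_pos hE0, if_pos hL0]
      rw [hγ', Multiset.erase_comm, Multiset.cons_erase hLmem2, Multiset.cons_erase hEmem]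
  · -- E = 0 case
    have hE0' : E = 0 := by omega
    set γ' := γ.erase L with hγ'
    have hfm : fMap (γ, σ) = (γ', (L + E) ::ₘ σ) := by
      simp only [fMap, ← hEdef, ← hLdef, hγ', if_neg hE0]
    have hcL' : γ'.count L = γ.count L - 1 := by
      rw [hγ', Multiset.count_erase_self]
    have hcother : ∀ x, x ≠ L → γ'.count x = γ.count x := by
      intro x h1
      rw [hγ', Multiset.count_erase_of_ne h1]
    have hLc1 : 1 ≤ γ.count L := Multiset.one_le_count_iff_mem.mpr hLmem
    have hγ'sub : ∀ x, x ∈ γ' → x ∈ γ := fun x hx => Multiset.mem_of_mem_erase hx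
    have honly : ∀ x, x ∈ γ' → Odd (γ'.count x) → x = L := by
      intro x hx1 hx2
      by_cases hxL : x = L
      · exact hxL
      · exfalso
        rw [hcother x hxL] at hx2
        rcases hle x (hγ'sub x hx1) hx2 with h | h
        · exact hxL h
        · exact absurd (h ▸ hE0') (hpos x (hγ'sub x hx1)).ne'
    by_cases hcL : Odd (γ.count L)
    · -- after erasing, no odd counts
      have hempty : {x | x ∈ γ' ∧ Odd (γ'.count x)} = ∅ := by
        ext x
        simp only [Set.mem_setOf_eq, Set.mem_empty_iff_false, iff_false]
        rintro ⟨hx1, hx2⟩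
        have := honly x hx1 hx2
        subst this
        rw [hcL'] at hx2
        rw [Nat.odd_iff] at hx2 hcL; omega
      have ho : oddPart γ' = 0 := by
        rw [oddPart, hempty, Nat.sInf_empty]
      rw [hfm]
      simp only [gMap, key2, ho, Multiset.erase_cons_head]
      have hsub : L + E - 0 = L := by omega
      rw [hsub]
      simp only [addPos, if_pos hL0, if_neg (lt_irrefl 0)]
      rw [hγ', Multiset.cons_erase hLmem]
    · rw [Nat.not_odd_iff_even] at hcL
      have hLodd' : Odd (γ'.count L) := by
        rw [hcL']; rcases hcL with ⟨k, hk⟩; rw [Nat.odd_iff]; omega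
      have hLmem' : L ∈ γ' := by
        rw [← Multiset.one_le_count_iff_mem, hcL']
        rcases hcL with ⟨k, hk⟩; omega
      have ho : oddPart γ' = L := by
        apply sInf_eq_of
        · exact ⟨hLmem', hLodd'⟩
        rintro x ⟨hx1, hx2⟩
        rw [honly x hx1 hx2]
      rw [hfm]
      simp only [gMap, key2, ho, Multiset.erase_cons_head]
      have hsub : L + E - L = 0 := by omega
      rw [hsub]
      simp only [addPos, if_pos hL0, if_neg (lt_irrefl 0)]
      rw [hγ', Multiset.cons_erase hLmem]
end

section
/- For every positive integer n, the number of partitions of n into even parts in which the largest part occurs an odd number of times and every other part size occurs an even number of times equals the number of partitions of n into odd parts in which every part size occurs an even number of times. -/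
namespace Stmt12

/-- tail count: number of elements of `s` greater than `j`. -/
def tc (s : Multiset ℕ) (j : ℕ) : ℕ := (s.filter (fun x => j < x)).card

/-- conjugate partition -/
def conj (s : Multiset ℕ) : Multiset ℕ := (Multiset.range s.sup).map (tc s)




lemma tc_cons (a : ℕ) (s : Multiset ℕ) (j : ℕ) :
    tc (a ::ₘ s) j = (if j < a then 1 else 0) + tc s j := by
  simp [tc, Multiset.filter_cons, apply_ite Multiset.card]

lemma tc_antitone (s : Multiset ℕ) {i j : ℕ} (h : i ≤ j) : tc s j ≤ tc s i := by
  induction s using Multiset.induction_on with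
  | empty => simp [tc]
  | cons a s ih =>
    rw [tc_cons, tc_cons]
    have : (if j < a then 1 else 0) ≤ (if i < a then 1 else 0) := by
      split_ifs <;> omega
    omega

lemma tc_pred (s : Multiset ℕ) (v : ℕ) (hv : 1 ≤ v) :
    tc s (v - 1) = tc s v + s.count v := by
  induction s using Multiset.induction_on with
  | empty => simp [tc]
  | cons a s ih =>
    rw [tc_cons, tc_cons, Multiset.count_cons, ih]
    split_ifs <;> omega

lemma tc_zero_of (s : Multiset ℕ) (j : ℕ) (h : ∀ x ∈ s, x ≤ j) : tc s j = 0 := by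
  rw [tc, Multiset.card_eq_zero, Multiset.filter_eq_nil]
  intro x hx
  exact not_lt.2 (h x hx)

lemma tc_sup (s : Multiset ℕ) : tc s s.sup = 0 :=
  tc_zero_of s s.sup fun x hx => Multiset.le_sup hx

lemma tc_pos (s : Multiset ℕ) {i : ℕ} (h : i < s.sup) : 0 < tc s i := by
  rw [tc, Multiset.card_pos_iff_exists_mem]
  by_contra hc
  push_neg at hc
  simp only [Multiset.mem_filter, not_and, not_lt] at hc
  exact absurd (Multiset.sup_le.2 fun x hx => hc x hx) (not_le.2 h)

lemma mem_conj_iff {s : Multiset ℕ} {x : ℕ} :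
    x ∈ conj s ↔ ∃ i, i < s.sup ∧ tc s i = x := by
  simp [conj, Multiset.mem_map, Multiset.mem_range]

lemma pos_of_mem_conj {s : Multiset ℕ} {x : ℕ} (h : x ∈ conj s) : 0 < x := by
  obtain ⟨i, hi, rfl⟩ := mem_conj_iff.1 h
  exact tc_pos s hi




lemma sum_ite_lt (a : ℕ) : ∀ N, a ≤ N →
    (∑ j ∈ Finset.range N, if j < a then 1 else 0) = a := by
  intro N
  induction N with
  | zero => intro h; simp; omega
  | succ N ih =>
    intro h
    rw [Finset.sum_range_succ]
    rcases Nat.lt_or_ge N a with h1 | h1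
    · have ha : a = N + 1 := by omega
      rw [if_pos h1]
      have : (∑ j ∈ Finset.range N, if j < a then 1 else 0)
          = ∑ j ∈ Finset.range N, 1 := by
        apply Finset.sum_congr rfl
        intro j hj
        rw [if_pos]
        have := Finset.mem_range.1 hj
        omega
      rw [this, Finset.sum_const, smul_eq_mul, mul_one, Finset.card_range]
      omega
    · rw [if_neg (by omega), ih (by omega)]
      omega

lemma sum_tc (s : Multiset ℕ) : ∀ N, (∀ x ∈ s, x ≤ N) →
    (∑ j ∈ Finset.range N, tc s j) = s.sum := by
  induction s using Multiset.induction_on with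
  | empty => simp [tc]
  | cons a s ih =>
    intro N hN
    simp only [tc_cons]
    rw [Finset.sum_add_distrib, Multiset.sum_cons,
      ih N (fun x hx => hN x (Multiset.mem_cons_of_mem hx)),
      sum_ite_lt a N (hN a (Multiset.mem_cons_self a s))]

lemma sum_conj (s : Multiset ℕ) : (conj s).sum = s.sum := by
  have : (conj s).sum = ∑ j ∈ Finset.range s.sup, tc s j := by
    rw [conj]
    rfl
  rw [this, sum_tc s s.sup (fun x hx => Multiset.le_sup hx)]

lemma tc_conj_card (s : Multiset ℕ) (j : ℕ) :
    tc (conj s) j = ((Finset.range s.sup).filter (fun i => j < tc s i)).card := by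
  rw [tc, conj, Multiset.filter_map]
  simp only [Multiset.card_map]
  rfl

/-- the key Galois property of conjugation -/
lemma lemG (s : Multiset ℕ) (i j : ℕ) : j < tc s i ↔ i < tc (conj s) j := by
  rw [tc_conj_card]
  constructor
  · intro h
    have hiL : i < s.sup := by
      by_contra hc
      have := tc_antitone s (not_lt.1 hc)
      have : tc s i = 0 := by
        have h0 : tc s s.sup = 0 := by
          rw [tc, Multiset.card_eq_zero, Multiset.filter_eq_nil]
          intro x hx
          exact not_lt.2 (Multiset.le_sup hx)
        omega
      omega
    have hsub : Finset.range (i + 1) ⊆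
        (Finset.range s.sup).filter (fun i' => j < tc s i') := by
      intro i' hi'
      have hii : i' ≤ i := by
        have := Finset.mem_range.1 hi'; omega
      rw [Finset.mem_filter, Finset.mem_range]
      exact ⟨by omega, lt_of_lt_of_le h (tc_antitone s hii)⟩
    have := Finset.card_le_card hsub
    rw [Finset.card_range] at this
    omega
  · intro h
    by_contra hc
    have hle : tc s i ≤ j := not_lt.1 hc
    have hsub : (Finset.range s.sup).filter (fun i' => j < tc s i') ⊆
        Finset.range i := by
      intro i' hi'
      rw [Finset.mem_filter] at hi'
      rw [Finset.mem_range]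
      by_contra hci
      have : tc s i' ≤ tc s i := tc_antitone s (not_lt.1 hci)
      omega
    have := Finset.card_le_card hsub
    rw [Finset.card_range] at this
    omega




lemma count_eq_tc_sub {s : Multiset ℕ} {v : ℕ} (hv : 1 ≤ v) :
    s.count v = tc s (v - 1) - tc s v := by
  have := tc_pred s v hv
  omega

lemma eq_of_tc {s t : Multiset ℕ} (hs : ∀ x ∈ s, 0 < x) (ht : ∀ x ∈ t, 0 < x)
    (h : ∀ j, tc s j = tc t j) : s = t := by
  ext v
  rcases Nat.eq_zero_or_pos v with rfl | hv
  · rw [Multiset.count_eq_zero.2 (fun hc => lt_irrefl 0 (hs 0 hc)),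
      Multiset.count_eq_zero.2 (fun hc => lt_irrefl 0 (ht 0 hc))]
  · rw [count_eq_tc_sub hv, count_eq_tc_sub hv, h, h]

lemma tc_conj_conj (s : Multiset ℕ) (j : ℕ) : tc (conj (conj s)) j = tc s j := by
  have key : ∀ i, i < tc (conj (conj s)) j ↔ i < tc s j := fun i =>
    ((lemG (conj s) i j).symm).trans (lemG s j i).symm
  rcases lt_trichotomy (tc (conj (conj s)) j) (tc s j) with h | h | h
  · exact absurd ((key _).2 h) (lt_irrefl _)
  · exact h
  · exact absurd ((key _).1 h) (lt_irrefl _)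

lemma conj_conj {s : Multiset ℕ} (hs : ∀ x ∈ s, 0 < x) : conj (conj s) = s :=
  eq_of_tc (fun _ hx => pos_of_mem_conj hx) hs (tc_conj_conj s)

/-- every nonzero value of `tc (conj s)` is a member of `s` -/
lemma tc_conj_mem {s : Multiset ℕ} (j : ℕ) :
    tc (conj s) j = 0 ∨ tc (conj s) j ∈ s := by
  set c := tc (conj s) j with hc
  rcases Nat.eq_zero_or_pos c with h0 | h0
  · exact Or.inl h0
  · right
    have h1 : j < tc s (c - 1) := (lemG s (c - 1) j).2 (by omega)
    have h2 : ¬ (j < tc s c) := fun hcon => lt_irrefl c ((lemG s c j).1 hcon)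
    have h3 := tc_pred s c h0
    rw [← Multiset.count_pos]
    omega

lemma sup_mem {s : Multiset ℕ} (h : s ≠ 0) : s.sup ∈ s := by
  induction s using Multiset.induction_on with
  | empty => exact absurd rfl h
  | cons a s ih =>
    by_cases hs : s = 0
    · subst hs; simp
    · rw [Multiset.sup_cons]
      rcases le_total a s.sup with hle | hle
      · rw [sup_eq_right.2 hle]
        exact Multiset.mem_cons_of_mem (ih (by rintro rfl; simp at *))
      · rw [sup_eq_left.2 hle]
        exact Multiset.mem_cons_self a s




/-- forward: even partition with odd mult at top maps to odd partition with even mults -/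
lemma forward {s : Multiset ℕ}
    (hev : ∀ x ∈ s, 0 < x ∧ Even x)
    (hsupodd : Odd (s.count s.sup))
    (hoth : ∀ x ∈ s, x ≠ s.sup → Even (s.count x)) :
    (∀ x ∈ conj s, Odd x) ∧ (∀ x ∈ conj s, Even ((conj s).count x)) := by
  set L := s.sup with hL
  have hsups : L ∈ s := by
    rw [← Multiset.count_pos]
    rcases hsupodd with ⟨k, hk⟩
    omega
  have hL1 : 1 ≤ L := (hev L hsups).1
  -- every count except at L is even
  have hcnt : ∀ v, v ≠ L → Even (s.count v) := by
    intro v hv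
    by_cases hvs : v ∈ s
    · exact hoth v hvs hv
    · rw [Multiset.count_eq_zero.2 hvs]; exact Even.zero
  -- all parts of s are even
  have hparts : ∀ x ∈ s, Even x := fun x hx => (hev x hx).2
  -- tc s i is odd for all i < L, by downward induction
  have hodd : ∀ k, k ≤ L - 1 → Odd (tc s (L - 1 - k)) := by
    intro k
    induction k with
    | zero =>
      intro _
      have h1 := tc_pred s L hL1
      have h2 := tc_sup s
      rw [← hL] at h2
      simp only [Nat.sub_zero]
      rcases hsupodd with ⟨m, hm⟩
      exact ⟨m, by omega⟩
    | succ k ih =>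
      intro hk
      have hv1 : 1 ≤ L - 1 - k := by omega
      have h1 := tc_pred s (L - 1 - k) hv1
      have heq : L - 1 - (k + 1) = (L - 1 - k) - 1 := by omega
      rw [heq]
      have hcv : Even (s.count (L - 1 - k)) := hcnt _ (by omega)
      have hih := ih (by omega)
      rcases hih with ⟨m, hm⟩
      rcases hcv with ⟨r, hr⟩
      exact ⟨m + r, by omega⟩
  have hoddlt : ∀ i < L, Odd (tc s i) := by
    intro i hi
    have heq : i = L - 1 - (L - 1 - i) := by omega
    rw [heq]
    exact hodd (L - 1 - i) (by omega)
  constructor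
  · intro x hx
    obtain ⟨i, hi, rfl⟩ := mem_conj_iff.1 hx
    exact hoddlt i hi
  · intro x hx
    have hx1 : 1 ≤ x := pos_of_mem_conj hx
    have h1 := tc_pred (conj s) x hx1
    -- both tc (conj s) (x-1) and tc (conj s) x are even (0 or a member of s)
    have heven : ∀ j, Even (tc (conj s) j) := by
      intro j
      rcases tc_conj_mem (s := s) j with h | h
      · rw [h]; exact Even.zero
      · exact hparts _ h
    have ha := heven (x - 1)
    have hb := heven x
    rcases ha with ⟨p, hp⟩
    rcases hb with ⟨q, hq⟩
    exact ⟨p - q, by omega⟩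

/-- backward: odd partition with even mults maps to even partition, odd mult at top -/
lemma backward {s : Multiset ℕ} (hne : s ≠ 0)
    (hodd : ∀ x ∈ s, Odd x)
    (hcnt : ∀ x ∈ s, Even (s.count x)) :
    (∀ x ∈ conj s, 0 < x ∧ Even x) ∧ Odd ((conj s).count (conj s).sup) ∧
      (∀ x ∈ conj s, x ≠ (conj s).sup → Even ((conj s).count x)) := by
  set L := s.sup with hL
  have hpos : ∀ x ∈ s, 0 < x := by
    intro x hx
    rcases hodd x hx with ⟨k, hk⟩
    omega
  have hL1 : 1 ≤ L := by
    have := hpos _ (sup_mem hne)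
    omega
  have hcnt' : ∀ v, Even (s.count v) := by
    intro v
    by_cases hvs : v ∈ s
    · exact hcnt v hvs
    · rw [Multiset.count_eq_zero.2 hvs]; exact Even.zero
  -- all tc s i even
  have hevtc : ∀ i, Even (tc s i) := by
    have key : ∀ k, Even (tc s (L - k)) := by
      intro k
      induction k with
      | zero => simp only [Nat.sub_zero]; rw [hL, tc_sup]; exact Even.zero
      | succ k ih =>
        by_cases hk : L - k = 0
        · have : L - (k+1) = L - k := by omega
          rw [this]; exact ih
        · have hv1 : 1 ≤ L - k := by omega
          have h1 := tc_pred s (L - k) hv1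
          have heq : L - (k + 1) = (L - k) - 1 := by omega
          rw [heq]
          rcases ih with ⟨p, hp⟩
          rcases hcnt' (L - k) with ⟨q, hq⟩
          exact ⟨p + q, by omega⟩
    intro i
    rcases le_or_gt L i with h | h
    · rw [tc_zero_of s i (fun x hx => le_trans (Multiset.le_sup hx) h)]
      exact Even.zero
    · have : i = L - (L - i) := by omega
      rw [this]; exact key (L - i)
  -- M := tc s 0 = card s
  set M := tc s 0 with hM
  have hM1 : 1 ≤ M := by
    rw [hM]
    exact tc_pos s (by omega)
  have hsupconj : (conj s).sup = M := by
    apply le_antisymm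
    · apply Multiset.sup_le.2
      intro b hb
      obtain ⟨i, _, rfl⟩ := mem_conj_iff.1 hb
      exact tc_antitone s (Nat.zero_le i)
    · exact Multiset.le_sup (mem_conj_iff.2 ⟨0, by omega, rfl⟩)
  refine ⟨?_, ?_, ?_⟩
  · intro x hx
    obtain ⟨i, hi, rfl⟩ := mem_conj_iff.1 hx
    exact ⟨tc_pos s hi, hevtc i⟩
  · -- count of sup in conj s is odd
    rw [hsupconj]
    have h1 := tc_pred (conj s) M hM1
    have h2 : tc (conj s) M = 0 := by
      apply tc_zero_of
      intro x hx
      obtain ⟨i, _, rfl⟩ := mem_conj_iff.1 hx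
      exact tc_antitone s (Nat.zero_le i)
    have h3 : 0 < tc (conj s) (M - 1) := by
      rw [← lemG s 0 (M - 1)]
      omega
    rcases tc_conj_mem (s := s) (M - 1) with h | h
    · omega
    · have := hodd _ h
      rcases this with ⟨k, hk⟩
      exact ⟨k, by omega⟩
  · intro x hx hxne
    rw [hsupconj] at hxne
    obtain ⟨i, hi, hix⟩ := mem_conj_iff.1 hx
    have hx1 : 1 ≤ x := by
      have := tc_pos s hi
      omega
    have hxM : x < M := by
      have hle : x ≤ M := by rw [← hix, hM]; exact tc_antitone s (Nat.zero_le i)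
      omega
    have h1 := tc_pred (conj s) x hx1
    have h2 : 0 < tc (conj s) x := by
      rw [← lemG s 0 x]
      omega
    have h3 : 0 < tc (conj s) (x - 1) := lt_of_lt_of_le h2 (tc_antitone (conj s) (by omega))
    have ha : tc (conj s) (x - 1) ∈ s := by
      rcases tc_conj_mem (s := s) (x - 1) with h | h
      · omega
      · exact h
    have hb : tc (conj s) x ∈ s := by
      rcases tc_conj_mem (s := s) x with h | h
      · omega
      · exact h
    rcases hodd _ ha with ⟨p, hp⟩
    rcases hodd _ hb with ⟨q, hq⟩
    exact ⟨p - q, by omega⟩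

end Stmt12

open Stmt12 in
theorem stmt12 (n : ℕ) (hn : 0 < n) :
    ({lam : Multiset ℕ | (∀ x ∈ lam, 0 < x ∧ Even x) ∧ lam.sum = n ∧
        Odd (lam.count lam.sup) ∧
        (∀ x ∈ lam, x ≠ lam.sup → Even (lam.count x))}).ncard =
    ({lam : Multiset ℕ | (∀ x ∈ lam, Odd x) ∧ lam.sum = n ∧
        (∀ x ∈ lam, Even (lam.count x))}).ncard := by
  set A := {lam : Multiset ℕ | (∀ x ∈ lam, 0 < x ∧ Even x) ∧ lam.sum = n ∧
        Odd (lam.count lam.sup) ∧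
        (∀ x ∈ lam, x ≠ lam.sup → Even (lam.count x))} with hA
  set B := {lam : Multiset ℕ | (∀ x ∈ lam, Odd x) ∧ lam.sum = n ∧
        (∀ x ∈ lam, Even (lam.count x))} with hB
  have himg : conj '' A = B := by
    ext t
    constructor
    · rintro ⟨s, hs, rfl⟩
      obtain ⟨h1, h2, h3, h4⟩ := hs
      obtain ⟨f1, f2⟩ := forward h1 h3 h4
      exact ⟨f1, by rw [sum_conj]; exact h2, f2⟩
    · intro ht
      obtain ⟨h1, h2, h3⟩ := ht
      have hne : t ≠ 0 := by
        rintro rfl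
        simp at h2
        omega
      have hpos : ∀ x ∈ t, 0 < x := by
        intro x hx
        rcases h1 x hx with ⟨k, hk⟩
        omega
      obtain ⟨b1, b2, b3⟩ := backward hne h1 h3
      refine ⟨conj t, ⟨b1, by rw [sum_conj]; exact h2, b2, b3⟩, conj_conj hpos⟩
  have hinj : Set.InjOn conj A := by
    intro s hs t ht h
    have hps : ∀ x ∈ s, 0 < x := fun x hx => (hs.1 x hx).1
    have hpt : ∀ x ∈ t, 0 < x := fun x hx => (ht.1 x hx).1
    rw [← conj_conj hps, ← conj_conj hpt, h]
  rw [← himg, Set.ncard_image_of_injOn hinj]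
end

section
/- Let a and b be positive integers and set m = a + b. Working in the field ℚ(X) of rational functions over ℚ, for nonnegative integers N, M define g(N,M) = (Π_{j=1}^{N+M−1} (1 + X^{mj})) / ((Π_{j=0}^{N−1} (1 + X^{a+mj})) · (Π_{j=0}^{M−1} (1 − X^{b+mj}))), where empty products equal 1. Then for all integers N ≥ 1 and M ≥ 1, g(N,M) = g(N,M−1) + X^{mM−a} · g(N−1,M). -/
/-- The finite product
`g_{a,b,m}(N,M) = (Π_{j=1}^{N+M−1} (1 + X^{mj})) /
  ((Π_{j=0}^{N−1} (1 + X^{a+mj})) · (Π_{j=0}^{M−1} (1 − X^{b+mj})))`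
as an element of the field `ℚ(X)` of rational functions, empty products being 1. -/
noncomputable def gFin (a b m N M : ℕ) : RatFunc ℚ :=
  (∏ j ∈ Finset.Icc 1 (N + M - 1), (1 + RatFunc.X ^ (m * j))) /
    ((∏ j ∈ Finset.range N, (1 + RatFunc.X ^ (a + m * j))) *
     (∏ j ∈ Finset.range M, (1 - RatFunc.X ^ (b + m * j))))

lemma one_add_X_pow_ne (k : ℕ) : (1 + RatFunc.X ^ k : RatFunc ℚ) ≠ 0 := by
  have h : (1 + RatFunc.X ^ k : RatFunc ℚ)
      = algebraMap (Polynomial ℚ) (RatFunc ℚ) (1 + Polynomial.X ^ k) := by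
    simp [map_add, map_pow, RatFunc.algebraMap_X]
  rw [h]
  refine RatFunc.algebraMap_ne_zero ?_
  intro hp
  have h1 : (1 + Polynomial.X ^ k : Polynomial ℚ) ≠ 0 := by
    intro hz
    have := congrArg (Polynomial.eval 1) hz
    simp at this
  exact h1 hp

lemma one_sub_X_pow_ne (k : ℕ) (hk : 1 ≤ k) : (1 - RatFunc.X ^ k : RatFunc ℚ) ≠ 0 := by
  have h : (1 - RatFunc.X ^ k : RatFunc ℚ)
      = algebraMap (Polynomial ℚ) (RatFunc ℚ) (1 - Polynomial.X ^ k) := by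
    simp [map_sub, map_pow, RatFunc.algebraMap_X]
  rw [h]
  refine RatFunc.algebraMap_ne_zero ?_
  intro hz
  have := congrArg (fun p => Polynomial.coeff p 0) hz
  simp only [Polynomial.coeff_sub, Polynomial.coeff_one, Polynomial.coeff_X_pow,
    Polynomial.coeff_zero, if_pos rfl, if_neg (by omega : ¬ (0 = k))] at this
  norm_num at this

theorem stmt19 (a b : ℕ) (ha : 0 < a) (hb : 0 < b) (N M : ℕ) (hN : 1 ≤ N) (hM : 1 ≤ M) :
    gFin a b (a + b) N M =
      gFin a b (a + b) N (M - 1) +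
        RatFunc.X ^ ((a + b) * M - a) * gFin a b (a + b) (N - 1) M := by
  obtain ⟨n, rfl⟩ : ∃ n, N = n + 1 := ⟨N - 1, by omega⟩
  obtain ⟨m, rfl⟩ : ∃ m, M = m + 1 := ⟨M - 1, by omega⟩
  unfold gFin
  have e1 : n + 1 + (m + 1) - 1 = (n + m) + 1 := by omega
  have e2 : n + 1 + (m + 1 - 1) - 1 = n + m := by omega
  have e3 : n + 1 - 1 + (m + 1) - 1 = n + m := by omega
  have e4 : (a + b) * (m + 1) - a = b + (a + b) * m := by ring_nf; omega
  rw [e1, e2, e3, e4, Finset.prod_Icc_succ_top (by omega : 1 ≤ n + m + 1),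
    Finset.prod_range_succ, Finset.prod_range_succ]
  rw [show n + 1 - 1 = n by omega, show m + 1 - 1 = m by omega]
  set P := ∏ j ∈ Finset.Icc 1 (n + m), ((1 : RatFunc ℚ) + RatFunc.X ^ ((a+b) * j)) with hP
  set A := ∏ j ∈ Finset.range n, ((1 : RatFunc ℚ) + RatFunc.X ^ (a + (a+b) * j)) with hA
  set B := ∏ j ∈ Finset.range m, ((1 : RatFunc ℚ) - RatFunc.X ^ (b + (a+b) * j)) with hB
  have hAne : A ≠ 0 := by
    rw [hA]
    apply Finset.prod_ne_zero_iff.mpr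
    intro j _
    exact one_add_X_pow_ne _
  have hBne : B ≠ 0 := by
    rw [hB]
    apply Finset.prod_ne_zero_iff.mpr
    intro j _
    exact one_sub_X_pow_ne _ (by omega)
  have h1 : (1 + RatFunc.X ^ (a + (a+b) * n) : RatFunc ℚ) ≠ 0 := one_add_X_pow_ne _
  have h2 : (1 - RatFunc.X ^ (b + (a+b) * m) : RatFunc ℚ) ≠ 0 := one_sub_X_pow_ne _ (by omega)
  have key : ((a+b) * (n + m + 1)) = (b + (a+b)*m) + (a + (a+b)*n) := by ring
  field_simp
  rw [key, pow_add]
  ring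
end
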